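/- arXiv:1011.4698 — 6 statements merged into one kernel-verified Lean document; each statement's English description precedes it below -/
import Mathlib

section
/- I^{n+1} ⊆ J but I^n ⊄ J. (Thus, in the notation of the paper, the integer m with I^m ⊄ J and I^{m+1} ⊆ J equals n for the local model of a cuspidal structure of type C_{2,n}.) -/
open MvPowerSeries Finsupp Pointwise

/-- For the local model `J = (y² + xⁿ, xy, z₁, …, z_r)` of a cuspidal multiple
structure of type `C_{2,n}` (with `n ≥ 3`) on the smooth germ cut out by
`I = (x, y, z₁, …, z_r)` in `R = k[[x, y, z₁, …, z_r]]`, one has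
`I^(n+1) ⊆ J` but `I^n ⊄ J`. -/
theorem stmt_0 (k : Type) [Field k] (n r : ℕ) (hn : 3 ≤ n)
    (x y : MvPowerSeries (Fin (r + 2)) k) (z : Fin r → MvPowerSeries (Fin (r + 2)) k)
    (hx : x = MvPowerSeries.X 0) (hy : y = MvPowerSeries.X 1)
    (hz : ∀ i : Fin r, z i = MvPowerSeries.X i.succ.succ)
    (I J : Ideal (MvPowerSeries (Fin (r + 2)) k))
    (hI : I = Ideal.span ({x, y} ∪ Set.range z))
    (hJ : J = Ideal.span ({y ^ 2 + x ^ n, x * y} ∪ Set.range z)) :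
    I ^ (n + 1) ≤ J ∧ ¬ I ^ n ≤ J := by
  classical
  subst hI hJ
  constructor
  · -- positive part
    have key : ∀ m : ℕ, Ideal.span ({x, y} ∪ Set.range z) ^ (m + 1)
        ≤ Ideal.span ({x ^ (m + 1), y ^ (m + 1), x * y} ∪ Set.range z) := by
      intro m
      induction m with
      | zero =>
        rw [pow_one, Ideal.span_le]
        rintro p hp
        simp only [Set.mem_union, Set.mem_insert_iff, Set.mem_singleton_iff,
          Set.mem_range] at hp
        rcases hp with (rfl | rfl) | ⟨i, rfl⟩
        · exact Ideal.subset_span (by simp)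
        · exact Ideal.subset_span (by simp)
        · exact Ideal.subset_span (Or.inr ⟨i, rfl⟩)
      | succ m ih =>
        calc Ideal.span ({x, y} ∪ Set.range z) ^ (m + 2)
            = Ideal.span ({x, y} ∪ Set.range z) ^ (m + 1)
              * Ideal.span ({x, y} ∪ Set.range z) := pow_succ _ _
          _ ≤ Ideal.span ({x ^ (m + 1), y ^ (m + 1), x * y} ∪ Set.range z)
              * Ideal.span ({x, y} ∪ Set.range z) := Ideal.mul_mono_left ih
          _ = Ideal.span (({x ^ (m + 1), y ^ (m + 1), x * y} ∪ Set.range z)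
              * ({x, y} ∪ Set.range z)) := Ideal.span_mul_span' _ _
          _ ≤ Ideal.span ({x ^ (m + 2), y ^ (m + 2), x * y} ∪ Set.range z) := by
            rw [Ideal.span_le]
            have hid1 : ∀ u : MvPowerSeries (Fin (r + 2)) k,
                u ^ (m + 1) * u = u ^ (m + 2) := fun u => by ring
            have hid2 : ∀ u v : MvPowerSeries (Fin (r + 2)) k,
                u ^ (m + 1) * v = u ^ m * (u * v) := fun u v => by ring
            have hid3 : ∀ u v : MvPowerSeries (Fin (r + 2)) k,
                u ^ (m + 1) * v = u ^ m * (v * u) := fun u v => by ring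
            rintro p hp
            rw [Set.mem_mul] at hp
            obtain ⟨a, ha, b, hb, rfl⟩ := hp
            simp only [Set.mem_union, Set.mem_insert_iff, Set.mem_singleton_iff,
              Set.mem_range] at ha hb
            rcases hb with (rfl | rfl) | ⟨i, rfl⟩
            · rcases ha with (rfl | rfl | rfl) | ⟨i, rfl⟩
              · rw [hid1]; exact Ideal.subset_span (by simp)
              · rw [hid3]
                exact Ideal.mul_mem_left _ _ (Ideal.subset_span (by simp))
              · exact Ideal.mul_mem_right _ _ (Ideal.subset_span (by simp))
              · exact Ideal.mul_mem_right _ _ (Ideal.subset_span (Or.inr ⟨i, rfl⟩))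
            · rcases ha with (rfl | rfl | rfl) | ⟨i, rfl⟩
              · rw [hid2]
                exact Ideal.mul_mem_left _ _ (Ideal.subset_span (by simp))
              · rw [hid1]; exact Ideal.subset_span (by simp)
              · exact Ideal.mul_mem_right _ _ (Ideal.subset_span (by simp))
              · exact Ideal.mul_mem_right _ _ (Ideal.subset_span (Or.inr ⟨i, rfl⟩))
            · exact Ideal.mul_mem_left _ _ (Ideal.subset_span (Or.inr ⟨i, rfl⟩))
    refine (key n).trans ?_
    rw [Ideal.span_le]
    rintro p hp
    simp only [Set.mem_union, Set.mem_insert_iff, Set.mem_singleton_iff,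
      Set.mem_range] at hp
    rcases hp with (rfl | rfl | rfl) | ⟨i, rfl⟩
    · -- x^(n+1) = x*(y^2+x^n) - y*(x*y)
      have hid : x ^ (n + 1) = x * (y ^ 2 + x ^ n) - y * (x * y) := by ring
      rw [hid]
      exact sub_mem (Ideal.mul_mem_left _ _ (Ideal.subset_span (by simp)))
        (Ideal.mul_mem_left _ _ (Ideal.subset_span (by simp)))
    · -- y^(n+1)
      obtain ⟨m, rfl⟩ : ∃ m, n = m + 3 := ⟨n - 3, by omega⟩
      have hid : y ^ (m + 3 + 1)
          = y ^ (m + 1) * (y * (y ^ 2 + x ^ (m + 3)) - x ^ (m + 2) * (x * y)) := by ring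
      rw [hid]
      exact Ideal.mul_mem_left _ _ (sub_mem
        (Ideal.mul_mem_left _ _ (Ideal.subset_span (by simp)))
        (Ideal.mul_mem_left _ _ (Ideal.subset_span (by simp))))
    · exact Ideal.subset_span (by simp)
    · exact Ideal.subset_span (Or.inr ⟨i, rfl⟩)
  · -- negative part
    intro h
    have hxI : x ∈ Ideal.span ({x, y} ∪ Set.range z) := Ideal.subset_span (by simp)
    have hxn : x ^ n ∈ Ideal.span ({y ^ 2 + x ^ n, x * y} ∪ Set.range z) :=
      h (Ideal.pow_mem_pow hxI n)
    rw [show ({y ^ 2 + x ^ n, x * y} ∪ Set.range z : Set _)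
        = insert (y ^ 2 + x ^ n) (insert (x * y) (Set.range z)) by
      simp [Set.insert_union, Set.singleton_union]] at hxn
    rw [Ideal.mem_span_insert] at hxn
    obtain ⟨f, w1, hw1, heq⟩ := hxn
    rw [Ideal.mem_span_insert] at hw1
    obtain ⟨g, w, hw, rfl⟩ := hw1
    rw [Ideal.mem_span_range_iff_exists_fun] at hw
    obtain ⟨c, rfl⟩ := hw
    -- rewrite everything as monomials
    have hxn' : x ^ n = monomial (single (0 : Fin (r + 2)) n) 1 := by
      rw [hx, X_pow_eq]
    have hy2 : y ^ 2 = monomial (single (1 : Fin (r + 2)) 2) 1 := by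
      rw [hy, X_pow_eq]
    have hxy : x * y = monomial (single (0 : Fin (r + 2)) 1 + single 1 1) 1 := by
      rw [hx, hy, X_def, X_def, monomial_mul_monomial, one_mul]
    have hzi : ∀ i : Fin r, z i = monomial (single (i.succ.succ : Fin (r + 2)) 1) 1 := by
      intro i; rw [hz i, X_def]
    -- a helper for vanishing coefficients
    have hvan : ∀ (d e : Fin (r + 2) →₀ ℕ) (p : MvPowerSeries (Fin (r + 2)) k),
        ¬ e ≤ d → (coeff d) (p * monomial e (1 : k)) = 0 := by
      intro d e p hne
      rw [coeff_mul_monomial, if_neg hne]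
    have hfull : ∀ (d e : Fin (r + 2) →₀ ℕ) (p : MvPowerSeries (Fin (r + 2)) k),
        e ≤ d → (coeff d) (p * monomial e (1 : k)) = coeff (d - e) p := by
      intro d e p he
      rw [coeff_mul_monomial, if_pos he, mul_one]
    have hsucc0 : ∀ i : Fin r, (i.succ.succ : Fin (r + 2)) ≠ 0 := by
      intro i; exact Fin.succ_ne_zero _
    have hsucc1 : ∀ i : Fin r, (i.succ.succ : Fin (r + 2)) ≠ 1 := by
      intro i hcon
      rw [← Fin.succ_zero_eq_one] at hcon
      exact Fin.succ_ne_zero i (Fin.succ_injective _ hcon)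
    have h01 : (0 : Fin (r + 2)) ≠ 1 := by simp [Fin.ext_iff]
    -- first coefficient: at d₁ = single 0 n, get coeff 0 f = 1
    have c1L : coeff (single (0 : Fin (r + 2)) n) (x ^ n) = 1 := by
      rw [hxn']; exact coeff_monomial_same _ _
    have c1f : coeff (single (0 : Fin (r + 2)) n) (f * (y ^ 2 + x ^ n))
        = coeff 0 f := by
      rw [hy2, hxn', mul_add, map_add,
        hvan _ _ f (by
          rw [single_le_iff, single_apply, if_neg h01]; omega),
        hfull _ _ f le_rfl, tsub_self, zero_add]
    have c1g : coeff (single (0 : Fin (r + 2)) n) (g * (x * y)) = 0 := by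
      rw [hxy]
      refine hvan _ _ g ?_
      rw [le_def]; push_neg
      refine ⟨1, ?_⟩
      rw [Finsupp.add_apply, single_apply, single_apply, single_apply, if_neg h01,
        if_neg h01, if_pos rfl]
      omega
    have c1z : coeff (single (0 : Fin (r + 2)) n) (∑ i : Fin r, c i * z i) = 0 := by
      rw [map_sum]
      refine Finset.sum_eq_zero fun i _ => ?_
      rw [hzi i]
      refine hvan _ _ _ ?_
      rw [single_le_iff, single_apply, if_neg (Ne.symm (hsucc0 i))]
      omega
    have e1 := congrArg (coeff (single (0 : Fin (r + 2)) n)) heq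
    rw [map_add, map_add, c1L, c1f, c1g, c1z, add_zero, add_zero] at e1
    -- second coefficient: at d₂ = single 1 2, get coeff 0 f = 0
    have c2L : coeff (single (1 : Fin (r + 2)) 2) (x ^ n) = 0 := by
      rw [hxn']
      refine coeff_monomial_ne ?_ _
      intro hc
      have := DFunLike.congr_fun hc (0 : Fin (r + 2))
      rw [single_apply, single_apply, if_neg (Ne.symm h01), if_pos rfl] at this
      omega
    have c2f : coeff (single (1 : Fin (r + 2)) 2) (f * (y ^ 2 + x ^ n))
        = coeff 0 f := by
      rw [hy2, hxn', mul_add, map_add,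
        hfull _ _ f le_rfl, tsub_self,
        hvan _ _ f (by
          rw [single_le_iff, single_apply, if_neg (Ne.symm h01)]; omega),
        add_zero]
    have c2g : coeff (single (1 : Fin (r + 2)) 2) (g * (x * y)) = 0 := by
      rw [hxy]
      refine hvan _ _ g ?_
      rw [le_def]; push_neg
      refine ⟨0, ?_⟩
      rw [Finsupp.add_apply, single_apply, single_apply, single_apply, if_pos rfl,
        if_neg (Ne.symm h01), if_neg (Ne.symm h01)]
      omega
    have c2z : coeff (single (1 : Fin (r + 2)) 2) (∑ i : Fin r, c i * z i) = 0 := by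
      rw [map_sum]
      refine Finset.sum_eq_zero fun i _ => ?_
      rw [hzi i]
      refine hvan _ _ _ ?_
      rw [single_le_iff, single_apply, if_neg (Ne.symm (hsucc1 i))]
      omega
    have e2 := congrArg (coeff (single (1 : Fin (r + 2)) 2)) heq
    rw [map_add, map_add, c2L, c2f, c2g, c2z, add_zero, add_zero] at e2
    rw [← e2] at e1
    exact one_ne_zero e1
end

section
/- J : I = (xⁿ, xy, y², z₁, …, z_r); for every ℓ with 2 ≤ ℓ ≤ n one has J : I^ℓ = (x^{n+1−ℓ}, y, z₁, …, z_r); and J : I^{n+1} = R. -/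
open MvPowerSeries Finsupp

namespace CuspAux

noncomputable section

variable {k : Type} [Field k] {r : ℕ}

/-- exponents supported on the first two variables -/
def Low (e : Fin (r+2) →₀ ℕ) : Prop := ∀ j : Fin (r+2), 2 ≤ (j : ℕ) → e j = 0

def Zs (k : Type) [Field k] (r : ℕ) : Set (MvPowerSeries (Fin (r+2)) k) :=
  Set.range fun i : Fin r => X i.succ.succ

lemma ne01 : (0 : Fin (r+2)) ≠ 1 := by
  intro h; have := congrArg Fin.val h; simp [Fin.val_one] at this

lemma succsucc_val (i : Fin r) : ((i.succ.succ : Fin (r+2)) : ℕ) = (i : ℕ) + 2 := by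
  simp [Fin.val_succ]

lemma succsucc_ne0 (i : Fin r) : (i.succ.succ : Fin (r+2)) ≠ 0 := by
  intro h; have := congrArg Fin.val h; rw [succsucc_val] at this; simp at this

lemma succsucc_ne1 (i : Fin r) : (i.succ.succ : Fin (r+2)) ≠ 1 := by
  intro h; have := congrArg Fin.val h; rw [succsucc_val, Fin.val_one] at this; omega

lemma fne {e1 e2 : Fin (r+2) →₀ ℕ} (c : Fin (r+2)) (h : e1 c ≠ e2 c) : e1 ≠ e2 :=
  fun hc => h (by rw [hc])

lemma single_of_add_eq_single {s : Fin (r+2)} {m : ℕ} {e1 e2 : Fin (r+2) →₀ ℕ}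
    (h : e1 + e2 = single s m) :
    e1 = single s (e1 s) ∧ e2 = single s (e2 s) ∧ e1 s + e2 s = m := by
  have key : ∀ a : Fin (r+2), a ≠ s → e1 a = 0 ∧ e2 a = 0 := by
    intro a ha
    have := DFunLike.congr_fun h a
    rw [Finsupp.add_apply, single_eq_of_ne' (Ne.symm ha)] at this
    omega
  refine ⟨?_, ?_, ?_⟩
  · ext a
    rcases eq_or_ne a s with rfl | ha
    · rw [single_eq_same]
    · rw [single_eq_of_ne' (Ne.symm ha), (key a ha).1]
  · ext a
    rcases eq_or_ne a s with rfl | ha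
    · rw [single_eq_same]
    · rw [single_eq_of_ne' (Ne.symm ha), (key a ha).2]
  · have := DFunLike.congr_fun h s
    rw [Finsupp.add_apply, single_eq_same] at this
    exact this


lemma coeff_X_mul' (s : Fin (r+2)) (f : MvPowerSeries (Fin (r+2)) k) (e : Fin (r+2) →₀ ℕ) :
    coeff e (X s * f) = if single s 1 ≤ e then coeff (e - single s 1) f else 0 := by
  rw [X, coeff_monomial_mul]; simp

lemma coeff_X_pow_mul (s : Fin (r+2)) (m : ℕ) (f : MvPowerSeries (Fin (r+2)) k)
    (e : Fin (r+2) →₀ ℕ) :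
    coeff e (X s ^ m * f) = if single s m ≤ e then coeff (e - single s m) f else 0 := by
  rw [X_pow_eq, coeff_monomial_mul]; simp

lemma coeff_X0X1_mul (f : MvPowerSeries (Fin (r+2)) k) (e : Fin (r+2) →₀ ℕ) :
    coeff e ((X 0 * X 1) * f)
      = if single (0 : Fin (r+2)) 1 + single 1 1 ≤ e
        then coeff (e - (single 0 1 + single 1 1)) f else 0 := by
  rw [show (X 0 * X 1 : MvPowerSeries (Fin (r+2)) k)
      = monomial (single 0 1 + single 1 1) 1 by
    rw [X, X, monomial_mul_monomial, one_mul]]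
  rw [coeff_monomial_mul]; simp

lemma eq_single0 {e : Fin (r+2) →₀ ℕ} (h1 : e 1 = 0) (hl : Low e) :
    e = single (0 : Fin (r+2)) (e 0) := by
  ext a
  rcases eq_or_ne a 0 with rfl | ha
  · rw [single_eq_same]
  · rw [single_eq_of_ne' (Ne.symm ha)]
    have hv : (a : ℕ) ≠ 0 := fun hc => ha (Fin.ext (by simp [hc]))
    rcases Nat.lt_or_ge (a : ℕ) 2 with h2 | h2
    · have : a = 1 := Fin.ext (by simp [Fin.val_one]; omega)
      rw [this, h1]
    · exact hl a h2

lemma eq_single1 {e : Fin (r+2) →₀ ℕ} (h0 : e 0 = 0) (hl : Low e) :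
    e = single (1 : Fin (r+2)) (e 1) := by
  ext a
  rcases eq_or_ne a 1 with rfl | ha
  · rw [single_eq_same]
  · rw [single_eq_of_ne' (Ne.symm ha)]
    have hv : (a : ℕ) ≠ 1 := fun hc => ha (Fin.ext (by simp [Fin.val_one, hc]))
    rcases Nat.lt_or_ge (a : ℕ) 2 with h2 | h2
    · have : a = 0 := Fin.ext (by rw [Fin.val_zero]; omega)
      rw [this, h0]
    · exact hl a h2

lemma s01s11_le {e : Fin (r+2) →₀ ℕ} :
    single (0 : Fin (r+2)) 1 + single 1 1 ≤ e ↔ 1 ≤ e 0 ∧ 1 ≤ e 1 := by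
  rw [Finsupp.le_def]
  constructor
  · intro h
    constructor
    · have := h 0; rwa [Finsupp.add_apply, single_eq_same, single_eq_of_ne' (Ne.symm ne01), add_zero] at this
    · have := h 1; rwa [Finsupp.add_apply, single_eq_same, single_eq_of_ne' ne01, zero_add] at this
  · rintro ⟨h0, h1⟩ a
    rw [Finsupp.add_apply]
    rcases eq_or_ne a 0 with rfl | ha0
    · rwa [single_eq_same, single_eq_of_ne' (Ne.symm ne01), add_zero]
    · rcases eq_or_ne a 1 with rfl | ha1
      · rwa [single_eq_same, single_eq_of_ne' ne01, zero_add]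
      · rw [single_eq_of_ne' (Ne.symm ha0), single_eq_of_ne' (Ne.symm ha1)]
        omega


lemma mem_zspan {f : MvPowerSeries (Fin (r+2)) k}
    (h : ∀ e, Low e → coeff e f = 0) :
    f ∈ Ideal.span (Zs k r) := by
  classical
  set g : Fin r → MvPowerSeries (Fin (r+2)) k := fun i e =>
    if ∀ j : Fin (r+2), 2 ≤ (j:ℕ) → (j:ℕ) < (i:ℕ) + 2 → e j = 0
    then coeff (e + single i.succ.succ 1) f else 0 with hg
  have hf : f = ∑ i : Fin r, X i.succ.succ * g i := by
    ext e
    rw [map_sum]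
    by_cases hl : Low e
    · rw [h e hl, Finset.sum_eq_zero]
      intro i _
      rw [coeff_X_mul', if_neg]
      rw [single_le_iff, hl i.succ.succ (by rw [succsucc_val]; omega)]
      omega
    · simp only [Low, not_forall] at hl
      obtain ⟨j1, hj1, hej1⟩ := hl
      set S : Finset (Fin (r+2)) :=
        Finset.univ.filter (fun j : Fin (r+2) => 2 ≤ (j:ℕ) ∧ e j ≠ 0) with hS
      have hne : S.Nonempty := ⟨j1, by simp [hS, hj1, hej1]⟩
      set j0 : Fin (r+2) := S.min' hne with hj0
      have hj0mem : j0 ∈ S := S.min'_mem hne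
      have hj0p : 2 ≤ (j0:ℕ) ∧ e j0 ≠ 0 := by
        have := hj0mem; simp [hS] at this; exact this
      have hj0min : ∀ j : Fin (r+2), 2 ≤ (j:ℕ) → e j ≠ 0 → (j0:ℕ) ≤ (j:ℕ) := by
        intro j h2 hej
        exact S.min'_le j (by simp [hS, h2, hej])
      set i0 : Fin r := ⟨(j0:ℕ) - 2, by have := j0.isLt; omega⟩ with hi0
      have hi0v : (i0:ℕ) = (j0:ℕ) - 2 := rfl
      have hgco : ∀ (i : Fin r) (d : Fin (r+2) →₀ ℕ), coeff d (g i)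
          = if ∀ j : Fin (r+2), 2 ≤ (j:ℕ) → (j:ℕ) < (i:ℕ) + 2 → d j = 0
            then coeff (d + single i.succ.succ 1) f else 0 := fun i d => rfl
      have hi0s : (i0.succ.succ : Fin (r+2)) = j0 := by
        apply Fin.ext; rw [succsucc_val]; omega
      rw [Finset.sum_eq_single i0]
      · rw [coeff_X_mul', hi0s, if_pos (by rw [single_le_iff]; omega)]
        rw [hgco, hi0s]
        rw [if_pos, tsub_add_cancel_of_le (by rw [single_le_iff]; omega)]
        intro j h2 hlt
        have hjne : j ≠ j0 := by
          intro hjj; rw [hjj] at hlt; omega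
        rw [tsub_apply, single_eq_of_ne' (Ne.symm hjne)]
        have : e j = 0 := by
          by_contra hc
          have := hj0min j h2 hc
          omega
        omega
      · intro b _ hb
        rw [coeff_X_mul']
        by_cases hbe : single (b.succ.succ : Fin (r+2)) 1 ≤ e
        · rw [if_pos hbe]
          rw [hgco, if_neg]
          push_neg
          have hsv := succsucc_val b
          refine ⟨j0, hj0p.1, ?_, ?_⟩
          · have h1 : (j0:ℕ) ≤ (b.succ.succ : Fin (r+2)) := by
              apply hj0min _ (by rw [succsucc_val]; omega)
              rw [single_le_iff] at hbe; omega
            have h2 : (j0:ℕ) ≠ ((b.succ.succ : Fin (r+2)):ℕ) := by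
              intro hc
              apply hb
              apply Fin.ext
              have := succsucc_val b
              omega
            omega
          · have hjne : j0 ≠ (b.succ.succ : Fin (r+2)) := by
              intro hc
              apply hb; apply Fin.ext
              have h2 := succsucc_val b
              have := congrArg Fin.val hc
              omega
            rw [tsub_apply, single_eq_of_ne' (Ne.symm hjne)]
            omega
        · rw [if_neg hbe]
      · intro hmem; exact absurd (Finset.mem_univ i0) hmem
  rw [hf]
  exact Ideal.sum_mem _ fun i _ => Ideal.mul_mem_right _ _ (Ideal.subset_span ⟨i, rfl⟩)

/-- membership in `(x^m, y) + Z` from vanishing of the coefficients of `1, x, …, x^(m-1)` -/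
lemma mem_Kspan {m : ℕ} {f : MvPowerSeries (Fin (r+2)) k}
    (h : ∀ j < m, coeff (single (0 : Fin (r+2)) j) f = 0) :
    f ∈ Ideal.span ({X 0 ^ m, X 1} ∪ Zs k r) := by
  classical
  set h1 : MvPowerSeries (Fin (r+2)) k := fun e =>
    if e 1 = 0 ∧ Low e then coeff (e + single 0 m) f else 0 with hh1
  set h2 : MvPowerSeries (Fin (r+2)) k := fun e => coeff (e + single 1 1) f with hh2
  have hco1 : ∀ d, coeff d h1
      = if d 1 = 0 ∧ Low d then coeff (d + single 0 m) f else 0 := fun d => rfl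
  have hco2 : ∀ d, coeff d h2 = coeff (d + single 1 1) f := fun d => rfl
  have hz : f - X 0 ^ m * h1 - X 1 * h2 ∈ Ideal.span (Zs k r) := by
    apply mem_zspan
    intro e hl
    rw [map_sub, map_sub, coeff_X_pow_mul, coeff_X_mul']
    rcases Nat.eq_zero_or_pos (e 1) with he1 | he1
    · have tB : (if single (1 : Fin (r+2)) 1 ≤ e
          then coeff (e - single 1 1) h2 else 0) = 0 := by
        rw [if_neg]; rw [single_le_iff]; omega
      by_cases hem : single (0 : Fin (r+2)) m ≤ e
      · have tA : (if single (0 : Fin (r+2)) m ≤ e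
            then coeff (e - single 0 m) h1 else 0) = coeff e f := by
          rw [if_pos hem, hco1, if_pos, tsub_add_cancel_of_le hem]
          constructor
          · rw [tsub_apply, single_eq_of_ne' ne01]; omega
          · intro j hj; rw [tsub_apply, hl j hj]; simp
        rw [tA, tB]; ring
      · have tA : (if single (0 : Fin (r+2)) m ≤ e
            then coeff (e - single 0 m) h1 else 0) = 0 := by rw [if_neg hem]
        rw [tA, tB, sub_zero, sub_zero]
        rw [single_le_iff] at hem
        rw [eq_single0 he1 hl]
        exact h _ (by omega)
    · have tB : (if single (1 : Fin (r+2)) 1 ≤ e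
          then coeff (e - single 1 1) h2 else 0) = coeff e f := by
        rw [if_pos (single_le_iff.mpr (by omega)), hco2,
          tsub_add_cancel_of_le (single_le_iff.mpr (by omega))]
      have tA : (if single (0 : Fin (r+2)) m ≤ e
          then coeff (e - single 0 m) h1 else 0) = 0 := by
        by_cases hem : single (0 : Fin (r+2)) m ≤ e
        · rw [if_pos hem, hco1, if_neg]
          intro hc
          rw [tsub_apply, single_eq_of_ne' ne01, tsub_zero] at hc
          omega
        · rw [if_neg hem]
      rw [tA, tB]; ring
  have : f = X 0 ^ m * h1 + X 1 * h2 + (f - X 0 ^ m * h1 - X 1 * h2) := by ring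
  rw [this]
  refine Ideal.add_mem _ (Ideal.add_mem _ ?_ ?_) ?_
  · exact Ideal.mul_mem_right _ _ (Ideal.subset_span (by simp))
  · exact Ideal.mul_mem_right _ _ (Ideal.subset_span (by simp))
  · exact Ideal.span_mono Set.subset_union_right hz

/-- membership in `(x^n, xy, y^2) + Z` from coefficient vanishing -/
lemma mem_Mspan {n : ℕ} {f : MvPowerSeries (Fin (r+2)) k}
    (h : ∀ j < n, coeff (single (0 : Fin (r+2)) j) f = 0)
    (h11 : coeff (single (1 : Fin (r+2)) 1) f = 0) :
    f ∈ Ideal.span ({X 0 ^ n, X 0 * X 1, X 1 ^ 2} ∪ Zs k r) := by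
  classical
  set h1 : MvPowerSeries (Fin (r+2)) k := fun e =>
    if e 1 = 0 ∧ Low e then coeff (e + single 0 n) f else 0 with hh1
  set h2 : MvPowerSeries (Fin (r+2)) k := fun e =>
    if e 1 = 0 then coeff (e + (single 0 1 + single 1 1)) f else 0 with hh2
  set h3 : MvPowerSeries (Fin (r+2)) k := fun e => coeff (e + single 1 2) f with hh3
  have hco1 : ∀ d, coeff d h1
      = if d 1 = 0 ∧ Low d then coeff (d + single 0 n) f else 0 := fun d => rfl
  have hco2 : ∀ d, coeff d h2
      = if d 1 = 0 then coeff (d + (single 0 1 + single 1 1)) f else 0 := fun d => rfl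
  have hco3 : ∀ d, coeff d h3 = coeff (d + single 1 2) f := fun d => rfl
  have hz : f - X 0 ^ n * h1 - (X 0 * X 1) * h2 - X 1 ^ 2 * h3 ∈ Ideal.span (Zs k r) := by
    apply mem_zspan
    intro e hl
    rw [map_sub, map_sub, map_sub, coeff_X_pow_mul, coeff_X0X1_mul, coeff_X_pow_mul]
    rcases Nat.lt_or_ge (e 1) 1 with he1 | he1
    · -- e 1 = 0
      have tC : (if single (1 : Fin (r+2)) 2 ≤ e
          then coeff (e - single 1 2) h3 else 0) = 0 := by
        rw [if_neg]; rw [single_le_iff]; omega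
      have tB : (if single (0 : Fin (r+2)) 1 + single 1 1 ≤ e
          then coeff (e - (single 0 1 + single 1 1)) h2 else 0) = 0 := by
        rw [if_neg]; rw [s01s11_le]; omega
      by_cases hem : single (0 : Fin (r+2)) n ≤ e
      · have tA : (if single (0 : Fin (r+2)) n ≤ e
            then coeff (e - single 0 n) h1 else 0) = coeff e f := by
          rw [if_pos hem, hco1, if_pos, tsub_add_cancel_of_le hem]
          constructor
          · rw [tsub_apply, single_eq_of_ne' ne01]; omega
          · intro j hj; rw [tsub_apply, hl j hj]; simp
        rw [tA, tB, tC]; ring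
      · have tA : (if single (0 : Fin (r+2)) n ≤ e
            then coeff (e - single 0 n) h1 else 0) = 0 := by rw [if_neg hem]
        rw [tA, tB, tC, sub_zero, sub_zero, sub_zero]
        rw [single_le_iff] at hem
        rw [eq_single0 (by omega) hl]
        exact h _ (by omega)
    rcases Nat.lt_or_ge (e 1) 2 with he2 | he2
    · -- e 1 = 1
      have tC : (if single (1 : Fin (r+2)) 2 ≤ e
          then coeff (e - single 1 2) h3 else 0) = 0 := by
        rw [if_neg]; rw [single_le_iff]; omega
      have tA : (if single (0 : Fin (r+2)) n ≤ e
          then coeff (e - single 0 n) h1 else 0) = 0 := by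
        by_cases hem : single (0 : Fin (r+2)) n ≤ e
        · rw [if_pos hem, hco1, if_neg]
          intro hc
          rw [tsub_apply, single_eq_of_ne' ne01, tsub_zero] at hc
          omega
        · rw [if_neg hem]
      rcases Nat.lt_or_ge (e 0) 1 with he0 | he0
      · have tB : (if single (0 : Fin (r+2)) 1 + single 1 1 ≤ e
            then coeff (e - (single 0 1 + single 1 1)) h2 else 0) = 0 := by
          rw [if_neg]; rw [s01s11_le]; omega
        rw [tA, tB, tC, sub_zero, sub_zero, sub_zero]
        have : e = single (1 : Fin (r+2)) (e 1) := eq_single1 (by omega) hl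
        rw [this, show e 1 = 1 by omega]
        exact h11
      · have hle : single (0 : Fin (r+2)) 1 + single 1 1 ≤ e := s01s11_le.mpr ⟨he0, he1⟩
        have tB : (if single (0 : Fin (r+2)) 1 + single 1 1 ≤ e
            then coeff (e - (single 0 1 + single 1 1)) h2 else 0) = coeff e f := by
          rw [if_pos hle, hco2, if_pos, tsub_add_cancel_of_le hle]
          rw [tsub_apply, Finsupp.add_apply, single_eq_same, single_eq_of_ne' ne01]
          omega
        rw [tA, tB, tC]; ring
    · -- e 1 ≥ 2
      have tC : (if single (1 : Fin (r+2)) 2 ≤ e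
          then coeff (e - single 1 2) h3 else 0) = coeff e f := by
        rw [if_pos (single_le_iff.mpr (by omega)), hco3,
          tsub_add_cancel_of_le (single_le_iff.mpr (by omega))]
      have tA : (if single (0 : Fin (r+2)) n ≤ e
          then coeff (e - single 0 n) h1 else 0) = 0 := by
        by_cases hem : single (0 : Fin (r+2)) n ≤ e
        · rw [if_pos hem, hco1, if_neg]
          intro hc
          rw [tsub_apply, single_eq_of_ne' ne01, tsub_zero] at hc
          omega
        · rw [if_neg hem]
      have tB : (if single (0 : Fin (r+2)) 1 + single 1 1 ≤ e
          then coeff (e - (single 0 1 + single 1 1)) h2 else 0) = 0 := by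
        by_cases hem : single (0 : Fin (r+2)) 1 + single 1 1 ≤ e
        · rw [if_pos hem, hco2, if_neg]
          intro hc
          rw [tsub_apply, Finsupp.add_apply, single_eq_same, single_eq_of_ne' ne01] at hc
          omega
        · rw [if_neg hem]
      rw [tA, tB, tC]; ring
  have : f = X 0 ^ n * h1 + (X 0 * X 1) * h2 + X 1 ^ 2 * h3
      + (f - X 0 ^ n * h1 - (X 0 * X 1) * h2 - X 1 ^ 2 * h3) := by ring
  rw [this]
  refine Ideal.add_mem _ (Ideal.add_mem _ (Ideal.add_mem _ ?_ ?_) ?_) ?_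
  · exact Ideal.mul_mem_right _ _ (Ideal.subset_span (by simp))
  · exact Ideal.mul_mem_right _ _ (Ideal.subset_span (by simp))
  · exact Ideal.mul_mem_right _ _ (Ideal.subset_span (by simp))
  · exact Ideal.span_mono Set.subset_union_right hz

section crit
variable {m n : ℕ} {f : MvPowerSeries (Fin (r+2)) k}

/-- coefficients of `1, x, ..., x^(m-1)` vanish on `(x^m, y) + Z` -/
lemma Kcrit (hf : f ∈ Ideal.span ({X 0 ^ m, X 1} ∪ Zs k r)) :
    ∀ j < m, coeff (single (0 : Fin (r+2)) j) f = 0 := by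
  classical
  refine Submodule.span_induction (p := fun f _ =>
    ∀ j < m, coeff (single (0 : Fin (r+2)) j) f = 0) ?_ ?_ ?_ ?_ hf
  · intro g hg j hj
    simp only [Set.mem_union, Set.mem_insert_iff, Set.mem_singleton_iff, Zs,
      Set.mem_range] at hg
    rcases hg with (rfl | rfl) | ⟨i, rfl⟩
    · rw [X_pow_eq, coeff_monomial, if_neg]
      apply fne 0
      rw [single_eq_same, single_eq_same]; omega
    · rw [X, coeff_monomial, if_neg]
      apply fne 1
      rw [single_eq_of_ne' ne01, single_eq_same]; omega
    · rw [X, coeff_monomial, if_neg]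
      apply fne i.succ.succ
      rw [single_eq_of_ne' (Ne.symm (succsucc_ne0 i)), single_eq_same]; omega
  · intro j hj; simp
  · intro a b _ _ ha hb j hj
    rw [map_add, ha j hj, hb j hj, add_zero]
  · intro c g _ hg j hj
    rw [smul_eq_mul, coeff_mul]
    apply Finset.sum_eq_zero
    intro p hp
    rw [Finset.HasAntidiagonal.mem_antidiagonal] at hp
    obtain ⟨-, h2, h3⟩ := single_of_add_eq_single hp
    rw [h2, hg _ (by omega), mul_zero]

/-- criterion on `(x^n, xy, y²) + Z` -/
lemma Mcrit (hn : 1 ≤ n)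
    (hf : f ∈ Ideal.span ({X 0 ^ n, X 0 * X 1, X 1 ^ 2} ∪ Zs k r)) :
    (∀ j < n, coeff (single (0 : Fin (r+2)) j) f = 0) ∧
      coeff (single (1 : Fin (r+2)) 1) f = 0 := by
  classical
  refine Submodule.span_induction (p := fun f _ =>
    (∀ j < n, coeff (single (0 : Fin (r+2)) j) f = 0) ∧
      coeff (single (1 : Fin (r+2)) 1) f = 0) ?_ ?_ ?_ ?_ hf
  · intro g hg
    simp only [Set.mem_union, Set.mem_insert_iff, Set.mem_singleton_iff, Zs,
      Set.mem_range] at hg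
    rcases hg with (rfl | rfl | rfl) | ⟨i, rfl⟩
    · constructor
      · intro j hj
        rw [X_pow_eq, coeff_monomial, if_neg (fne 0 (by rw [single_eq_same, single_eq_same]; omega))]
      · rw [X_pow_eq, coeff_monomial, if_neg (fne 1 (by rw [single_eq_same, single_eq_of_ne' ne01]; omega))]
    · rw [show (X 0 * X 1 : MvPowerSeries (Fin (r+2)) k)
          = monomial (single 0 1 + single 1 1) 1 by rw [X, X, monomial_mul_monomial, one_mul]]
      constructor
      · intro j hj
        rw [coeff_monomial, if_neg (fne 1 (by
          rw [single_eq_of_ne' ne01, Finsupp.add_apply, single_eq_of_ne' ne01, single_eq_same]; omega))]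
      · rw [coeff_monomial, if_neg (fne 0 (by
          rw [single_eq_of_ne' (Ne.symm ne01), Finsupp.add_apply, single_eq_same,
            single_eq_of_ne' (Ne.symm ne01)]; omega))]
    · constructor
      · intro j hj
        rw [X_pow_eq, coeff_monomial, if_neg (fne 1 (by
          rw [single_eq_of_ne' ne01, single_eq_same]; omega))]
      · rw [X_pow_eq, coeff_monomial, if_neg (fne 1 (by
          rw [single_eq_same, single_eq_same]; omega))]
    · constructor
      · intro j hj
        rw [X, coeff_monomial, if_neg (fne i.succ.succ (by
          rw [single_eq_of_ne' (Ne.symm (succsucc_ne0 i)), single_eq_same]; omega))]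
      · rw [X, coeff_monomial, if_neg (fne i.succ.succ (by
          rw [single_eq_of_ne' (Ne.symm (succsucc_ne1 i)), single_eq_same]; omega))]
  · constructor
    · intro j hj; simp
    · simp
  · rintro a b _ _ ⟨ha1, ha2⟩ ⟨hb1, hb2⟩
    constructor
    · intro j hj; rw [map_add, ha1 j hj, hb1 j hj, add_zero]
    · rw [map_add, ha2, hb2, add_zero]
  · rintro c g _ ⟨hg1, hg2⟩
    have hg0 : coeff (0 : Fin (r+2) →₀ ℕ) g = 0 := by
      have := hg1 0 (by omega); rwa [single_zero] at this
    constructor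
    · intro j hj
      rw [smul_eq_mul, coeff_mul]
      apply Finset.sum_eq_zero
      intro p hp
      rw [Finset.HasAntidiagonal.mem_antidiagonal] at hp
      obtain ⟨-, h2, h3⟩ := single_of_add_eq_single hp
      rw [h2, hg1 _ (by omega), mul_zero]
    · rw [smul_eq_mul, coeff_mul]
      apply Finset.sum_eq_zero
      intro p hp
      rw [Finset.HasAntidiagonal.mem_antidiagonal] at hp
      obtain ⟨-, h2, h3⟩ := single_of_add_eq_single hp
      rcases Nat.lt_or_ge (p.2 1) 1 with hb | hb
      · rw [h2, show p.2 1 = 0 by omega, single_zero, hg0, mul_zero]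
      · rw [h2, show p.2 1 = 1 by omega, hg2, mul_zero]

/-- criterion on `J = (y² + xⁿ, xy) + Z` -/
lemma Jcrit (hn : 1 ≤ n)
    (hf : f ∈ Ideal.span ({X 1 ^ 2 + X 0 ^ n, X 0 * X 1} ∪ Zs k r)) :
    (∀ j < n, coeff (single (0 : Fin (r+2)) j) f = 0) ∧
      coeff (single (1 : Fin (r+2)) 1) f = 0 ∧
      coeff (single (1 : Fin (r+2)) 2) f = coeff (single (0 : Fin (r+2)) n) f := by
  classical
  refine Submodule.span_induction (p := fun f _ =>
    (∀ j < n, coeff (single (0 : Fin (r+2)) j) f = 0) ∧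
      coeff (single (1 : Fin (r+2)) 1) f = 0 ∧
      coeff (single (1 : Fin (r+2)) 2) f = coeff (single (0 : Fin (r+2)) n) f) ?_ ?_ ?_ ?_ hf
  · intro g hg
    simp only [Set.mem_union, Set.mem_insert_iff, Set.mem_singleton_iff, Zs,
      Set.mem_range] at hg
    rcases hg with (rfl | rfl) | ⟨i, rfl⟩
    · refine ⟨?_, ?_, ?_⟩
      · intro j hj
        rw [map_add, X_pow_eq, X_pow_eq, coeff_monomial, coeff_monomial,
          if_neg (fne 1 (by rw [single_eq_of_ne' ne01, single_eq_same]; omega)),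
          if_neg (fne 0 (by rw [single_eq_same, single_eq_same]; omega)), add_zero]
      · rw [map_add, X_pow_eq, X_pow_eq, coeff_monomial, coeff_monomial,
          if_neg (fne 1 (by rw [single_eq_same, single_eq_same]; omega)),
          if_neg (fne 1 (by rw [single_eq_same, single_eq_of_ne' ne01]; omega)), add_zero]
      · rw [map_add, map_add, X_pow_eq, X_pow_eq, coeff_monomial, coeff_monomial,
          coeff_monomial, coeff_monomial,
          if_pos rfl,
          if_neg (fne 1 (by rw [single_eq_same, single_eq_of_ne' ne01]; omega)),
          if_neg (fne 1 (by rw [single_eq_of_ne' ne01, single_eq_same]; omega)),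
          if_pos rfl]
        ring
    · rw [show (X 0 * X 1 : MvPowerSeries (Fin (r+2)) k)
          = monomial (single 0 1 + single 1 1) 1 by rw [X, X, monomial_mul_monomial, one_mul]]
      refine ⟨?_, ?_, ?_⟩
      · intro j hj
        rw [coeff_monomial, if_neg (fne 1 (by
          rw [single_eq_of_ne' ne01, Finsupp.add_apply, single_eq_of_ne' ne01, single_eq_same]; omega))]
      · rw [coeff_monomial, if_neg (fne 0 (by
          rw [single_eq_of_ne' (Ne.symm ne01), Finsupp.add_apply, single_eq_same,
            single_eq_of_ne' (Ne.symm ne01)]; omega))]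
      · rw [coeff_monomial, coeff_monomial,
          if_neg (fne 0 (by
            rw [single_eq_of_ne' (Ne.symm ne01), Finsupp.add_apply, single_eq_same,
              single_eq_of_ne' (Ne.symm ne01)]; omega)),
          if_neg (fne 1 (by
            rw [single_eq_of_ne' ne01, Finsupp.add_apply, single_eq_of_ne' ne01, single_eq_same]; omega))]
    · refine ⟨?_, ?_, ?_⟩
      · intro j hj
        rw [X, coeff_monomial, if_neg (fne i.succ.succ (by
          rw [single_eq_of_ne' (Ne.symm (succsucc_ne0 i)), single_eq_same]; omega))]
      · rw [X, coeff_monomial, if_neg (fne i.succ.succ (by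
          rw [single_eq_of_ne' (Ne.symm (succsucc_ne1 i)), single_eq_same]; omega))]
      · rw [X, coeff_monomial, coeff_monomial,
          if_neg (fne i.succ.succ (by
            rw [single_eq_of_ne' (Ne.symm (succsucc_ne1 i)), single_eq_same]; omega)),
          if_neg (fne i.succ.succ (by
            rw [single_eq_of_ne' (Ne.symm (succsucc_ne0 i)), single_eq_same]; omega))]
  · refine ⟨fun j hj => by simp, by simp, by simp⟩
  · rintro a b _ _ ⟨ha1, ha2, ha3⟩ ⟨hb1, hb2, hb3⟩
    refine ⟨?_, ?_, ?_⟩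
    · intro j hj; rw [map_add, ha1 j hj, hb1 j hj, add_zero]
    · rw [map_add, ha2, hb2, add_zero]
    · rw [map_add, map_add, ha3, hb3]
  · rintro c g _ ⟨hg1, hg2, hg3⟩
    have hg0 : coeff (0 : Fin (r+2) →₀ ℕ) g = 0 := by
      have := hg1 0 (by omega); rwa [single_zero] at this
    refine ⟨?_, ?_, ?_⟩
    · intro j hj
      rw [smul_eq_mul, coeff_mul]
      apply Finset.sum_eq_zero
      intro p hp
      rw [Finset.HasAntidiagonal.mem_antidiagonal] at hp
      obtain ⟨-, h2, h3⟩ := single_of_add_eq_single hp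
      rw [h2, hg1 _ (by omega), mul_zero]
    · rw [smul_eq_mul, coeff_mul]
      apply Finset.sum_eq_zero
      intro p hp
      rw [Finset.HasAntidiagonal.mem_antidiagonal] at hp
      obtain ⟨-, h2, h3⟩ := single_of_add_eq_single hp
      rcases Nat.lt_or_ge (p.2 1) 1 with hb | hb
      · rw [h2, show p.2 1 = 0 by omega, single_zero, hg0, mul_zero]
      · rw [h2, show p.2 1 = 1 by omega, hg2, mul_zero]
    · rw [smul_eq_mul, coeff_mul, coeff_mul]
      rw [Finset.sum_eq_single ((0 : Fin (r+2) →₀ ℕ), single (1 : Fin (r+2)) 2),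
        Finset.sum_eq_single ((0 : Fin (r+2) →₀ ℕ), single (0 : Fin (r+2)) n)]
      · rw [hg3]
      · intro p hp hpne
        rw [Finset.HasAntidiagonal.mem_antidiagonal] at hp
        obtain ⟨h1, h2, h3⟩ := single_of_add_eq_single hp
        have hb : p.2 0 < n := by
          rcases Nat.lt_or_ge (p.2 0) n with h | h
          · exact h
          · exfalso; apply hpne
            have hp1 : p.1 = 0 := by rw [h1, show p.1 0 = 0 by omega, single_zero]
            have hp2 : p.2 = single (0 : Fin (r+2)) n := by rw [h2]; congr 1; omega
            exact Prod.ext hp1 hp2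
        rw [h2, hg1 _ hb, mul_zero]
      · intro hmem
        exfalso; apply hmem
        rw [Finset.HasAntidiagonal.mem_antidiagonal, zero_add]
      · intro p hp hpne
        rw [Finset.HasAntidiagonal.mem_antidiagonal] at hp
        obtain ⟨h1, h2, h3⟩ := single_of_add_eq_single hp
        have hb : p.2 1 ≤ 2 := by omega
        rcases Nat.lt_or_ge (p.2 1) 1 with hb0 | hb0
        · rw [h2, show p.2 1 = 0 by omega, single_zero, hg0, mul_zero]
        rcases Nat.lt_or_ge (p.2 1) 2 with hb1 | hb1
        · rw [h2, show p.2 1 = 1 by omega, hg2, mul_zero]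
        · exfalso; apply hpne
          have hp1 : p.1 = 0 := by rw [h1, show p.1 1 = 0 by omega, single_zero]
          have hp2 : p.2 = single (1 : Fin (r+2)) 2 := by rw [h2]; congr 1; omega
          exact Prod.ext hp1 hp2
      · intro hmem
        exfalso; apply hmem
        rw [Finset.HasAntidiagonal.mem_antidiagonal, zero_add]
end crit

-- new material
lemma coeff_mul_X (s : Fin (r+2)) (f : MvPowerSeries (Fin (r+2)) k) (e : Fin (r+2) →₀ ℕ) :
    coeff e (f * X s) = if single s 1 ≤ e then coeff (e - single s 1) f else 0 := by
  rw [mul_comm, coeff_X_mul']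

lemma single_tsub {s : Fin (r+2)} {a b : ℕ} :
    (single s a - single s b : Fin (r+2) →₀ ℕ) = single s (a - b) := by
  ext c
  rcases eq_or_ne c s with rfl | hc
  · rw [tsub_apply, single_eq_same, single_eq_same, single_eq_same]
  · rw [tsub_apply, single_eq_of_ne' (Ne.symm hc), single_eq_of_ne' (Ne.symm hc),
      single_eq_of_ne' (Ne.symm hc)]
    simp

lemma colon_colon (J A B : Ideal (MvPowerSeries (Fin (r+2)) k)) :
    Submodule.colon J (A * B) = Submodule.colon (Submodule.colon J A) B := by
  ext f
  constructor
  · intro hf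
    rw [Submodule.mem_colon]
    intro b hb
    rw [smul_eq_mul, Submodule.mem_colon]
    intro a ha
    rw [smul_eq_mul, show f * b * a = f * (a * b) by ring]
    have := Submodule.mem_colon.1 hf (a * b) (Ideal.mul_mem_mul ha hb)
    rwa [smul_eq_mul] at this
  · intro hf
    rw [Submodule.mem_colon]
    intro p hp
    have hle : A * B ≤ Submodule.colon J (Ideal.span {f}) := by
      rw [Ideal.mul_le]
      intro a ha b hb
      rw [Ideal.mem_colon_span_singleton, show a * b * f = f * b * a by ring]
      have h1 := Submodule.mem_colon.1 hf b hb
      rw [smul_eq_mul] at h1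
      have h2 := Submodule.mem_colon.1 h1 a ha
      rwa [smul_eq_mul] at h2
    have := hle hp
    rw [Ideal.mem_colon_span_singleton] at this
    rwa [smul_eq_mul, mul_comm]

lemma mem_colon_of_forall {J : Ideal (MvPowerSeries (Fin (r+2)) k)}
    {s : Set (MvPowerSeries (Fin (r+2)) k)} {g : MvPowerSeries (Fin (r+2)) k}
    (h : ∀ a ∈ s, g * a ∈ J) : g ∈ Submodule.colon J (Ideal.span s) := by
  rw [Submodule.mem_colon]
  intro p hp
  induction hp using Submodule.span_induction with
  | mem x hx => rw [smul_eq_mul]; exact h x hx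
  | zero => rw [smul_zero]; exact J.zero_mem
  | add x y _ _ hx hy => rw [smul_add]; exact J.add_mem hx hy
  | smul a x _ hx => rw [smul_comm]; exact Submodule.smul_mem _ _ hx

section L
variable {n : ℕ}

lemma zmem_J : ∀ i : Fin r, (X i.succ.succ : MvPowerSeries (Fin (r+2)) k)
    ∈ Ideal.span ({X 1 ^ 2 + X 0 ^ n, X 0 * X 1} ∪ Zs k r) :=
  fun i => Ideal.subset_span (Set.mem_union_right _ ⟨i, rfl⟩)

lemma L1 (hn : 3 ≤ n) :
    Submodule.colon (Ideal.span ({X 1 ^ 2 + X 0 ^ n, X 0 * X 1} ∪ Zs k r))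
        (Ideal.span ({X 0, X 1} ∪ Zs k r))
      = Ideal.span ({X 0 ^ n, X 0 * X 1, X 1 ^ 2} ∪ Zs k r) := by
  apply le_antisymm
  · intro f hf
    have hx := Submodule.mem_colon.1 hf (X 0)
      (Ideal.subset_span (Set.mem_union_left _ (by simp)))
    have hy := Submodule.mem_colon.1 hf (X 1)
      (Ideal.subset_span (Set.mem_union_left _ (by simp)))
    rw [smul_eq_mul] at hx hy
    obtain ⟨A1, -, A3⟩ := Jcrit (by omega) hx
    obtain ⟨-, -, B3⟩ := Jcrit (by omega) hy
    have hA3l : coeff (single (1 : Fin (r+2)) 2) (f * X 0) = 0 := by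
      rw [coeff_mul_X, if_neg]
      rw [single_le_iff, single_eq_of_ne' (Ne.symm ne01)]
      omega
    have hA3r : coeff (single (0 : Fin (r+2)) n) (f * X 0)
        = coeff (single (0 : Fin (r+2)) (n-1)) f := by
      rw [coeff_mul_X, if_pos (single_le_iff.mpr (by rw [single_eq_same]; omega)), single_tsub]
    have hB3l : coeff (single (1 : Fin (r+2)) 2) (f * X 1)
        = coeff (single (1 : Fin (r+2)) 1) f := by
      rw [coeff_mul_X, if_pos (single_le_iff.mpr (by rw [single_eq_same]; omega)), single_tsub]
    have hB3r : coeff (single (0 : Fin (r+2)) n) (f * X 1) = 0 := by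
      rw [coeff_mul_X, if_neg]
      rw [single_le_iff, single_eq_of_ne' ne01]
      omega
    apply mem_Mspan
    · intro j hj
      rcases Nat.lt_or_ge (j+1) n with hj1 | hj1
      · have := A1 (j+1) hj1
        rw [coeff_mul_X, if_pos (single_le_iff.mpr (by rw [single_eq_same]; omega)),
          single_tsub] at this
        simpa using this
      · have hjn : j = n - 1 := by omega
        rw [hjn, ← hA3r, ← A3, hA3l]
    · rw [← hB3l, B3, hB3r]
  · rw [Ideal.span_le]
    intro g hg
    simp only [Set.mem_union, Set.mem_insert_iff, Set.mem_singleton_iff, Zs,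
      Set.mem_range] at hg
    obtain ⟨m, hm⟩ : ∃ m, n = m + 1 := ⟨n - 1, by omega⟩
    have hq : (X 0 * X 1 : MvPowerSeries (Fin (r+2)) k)
        ∈ Ideal.span ({X 1 ^ 2 + X 0 ^ n, X 0 * X 1} ∪ Zs k r) :=
      Ideal.subset_span (Set.mem_union_left _ (by simp))
    have hp : (X 1 ^ 2 + X 0 ^ n : MvPowerSeries (Fin (r+2)) k)
        ∈ Ideal.span ({X 1 ^ 2 + X 0 ^ n, X 0 * X 1} ∪ Zs k r) :=
      Ideal.subset_span (Set.mem_union_left _ (by simp))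
    rcases hg with (rfl | rfl | rfl) | ⟨i, rfl⟩
    · apply mem_colon_of_forall
      intro a ha
      simp only [Set.mem_union, Set.mem_insert_iff, Set.mem_singleton_iff, Zs,
        Set.mem_range] at ha
      rcases ha with (rfl | rfl) | ⟨i, rfl⟩
      · rw [show (X 0 ^ n * X 0 : MvPowerSeries (Fin (r+2)) k)
            = X 0 * (X 1 ^ 2 + X 0 ^ n) - X 1 * (X 0 * X 1) by ring]
        exact Ideal.sub_mem _ (Ideal.mul_mem_left _ _ hp) (Ideal.mul_mem_left _ _ hq)
      · rw [hm, show (X 0 ^ (m+1) * X 1 : MvPowerSeries (Fin (r+2)) k)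
            = X 0 ^ m * (X 0 * X 1) by ring]
        exact Ideal.mul_mem_left _ _ (hm ▸ hq)
      · exact Ideal.mul_mem_left _ _ (zmem_J i)
    · apply mem_colon_of_forall
      intro a ha
      simp only [Set.mem_union, Set.mem_insert_iff, Set.mem_singleton_iff, Zs,
        Set.mem_range] at ha
      rcases ha with (rfl | rfl) | ⟨i, rfl⟩
      · rw [show (X 0 * X 1 * X 0 : MvPowerSeries (Fin (r+2)) k)
            = X 0 * (X 0 * X 1) by ring]
        exact Ideal.mul_mem_left _ _ hq
      · rw [show (X 0 * X 1 * X 1 : MvPowerSeries (Fin (r+2)) k)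
            = X 1 * (X 0 * X 1) by ring]
        exact Ideal.mul_mem_left _ _ hq
      · exact Ideal.mul_mem_left _ _ (zmem_J i)
    · apply mem_colon_of_forall
      intro a ha
      simp only [Set.mem_union, Set.mem_insert_iff, Set.mem_singleton_iff, Zs,
        Set.mem_range] at ha
      rcases ha with (rfl | rfl) | ⟨i, rfl⟩
      · rw [show (X 1 ^ 2 * X 0 : MvPowerSeries (Fin (r+2)) k)
            = X 1 * (X 0 * X 1) by ring]
        exact Ideal.mul_mem_left _ _ hq
      · rw [hm, show (X 1 ^ 2 * X 1 : MvPowerSeries (Fin (r+2)) k)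
            = X 1 * (X 1 ^ 2 + X 0 ^ (m+1)) - X 0 ^ m * (X 0 * X 1) by ring]
        exact Ideal.sub_mem _ (Ideal.mul_mem_left _ _ (hm ▸ hp)) (Ideal.mul_mem_left _ _ (hm ▸ hq))
      · exact Ideal.mul_mem_left _ _ (zmem_J i)
    · apply mem_colon_of_forall
      intro a _
      exact Ideal.mul_mem_right _ _ (zmem_J i)

lemma L2 (hn : 3 ≤ n) :
    Submodule.colon (Ideal.span ({X 0 ^ n, X 0 * X 1, X 1 ^ 2} ∪ Zs k r))
        (Ideal.span ({X 0, X 1} ∪ Zs k r))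
      = Ideal.span ({X 0 ^ (n-1), X 1} ∪ Zs k r) := by
  apply le_antisymm
  · intro f hf
    have hx := Submodule.mem_colon.1 hf (X 0)
      (Ideal.subset_span (Set.mem_union_left _ (by simp)))
    rw [smul_eq_mul] at hx
    have A1 := (Mcrit (by omega) hx).1
    apply mem_Kspan
    intro j hj
    have := A1 (j+1) (by omega)
    rw [coeff_mul_X, if_pos (single_le_iff.mpr (by rw [single_eq_same]; omega)),
      single_tsub] at this
    simpa using this
  · rw [Ideal.span_le]
    intro g hg
    simp only [Set.mem_union, Set.mem_insert_iff, Set.mem_singleton_iff, Zs,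
      Set.mem_range] at hg
    have hzM : ∀ i : Fin r, (X i.succ.succ : MvPowerSeries (Fin (r+2)) k)
        ∈ Ideal.span ({X 0 ^ n, X 0 * X 1, X 1 ^ 2} ∪ Zs k r) :=
      fun i => Ideal.subset_span (Set.mem_union_right _ ⟨i, rfl⟩)
    have hq : (X 0 * X 1 : MvPowerSeries (Fin (r+2)) k)
        ∈ Ideal.span ({X 0 ^ n, X 0 * X 1, X 1 ^ 2} ∪ Zs k r) :=
      Ideal.subset_span (Set.mem_union_left _ (by simp))
    rcases hg with (rfl | rfl) | ⟨i, rfl⟩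
    · apply mem_colon_of_forall
      intro a ha
      simp only [Set.mem_union, Set.mem_insert_iff, Set.mem_singleton_iff, Zs,
        Set.mem_range] at ha
      rcases ha with (rfl | rfl) | ⟨i, rfl⟩
      · rw [show (X 0 ^ (n-1) * X 0 : MvPowerSeries (Fin (r+2)) k) = X 0 ^ (n-1+1) by ring,
          show n - 1 + 1 = n by omega]
        exact Ideal.subset_span (Set.mem_union_left _ (by simp))
      · obtain ⟨m, hm⟩ : ∃ m, n - 1 = m + 1 := ⟨n - 2, by omega⟩
        rw [hm, show (X 0 ^ (m+1) * X 1 : MvPowerSeries (Fin (r+2)) k)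
            = X 0 ^ m * (X 0 * X 1) by ring]
        exact Ideal.mul_mem_left _ _ hq
      · exact Ideal.mul_mem_left _ _ (hzM i)
    · apply mem_colon_of_forall
      intro a ha
      simp only [Set.mem_union, Set.mem_insert_iff, Set.mem_singleton_iff, Zs,
        Set.mem_range] at ha
      rcases ha with (rfl | rfl) | ⟨i, rfl⟩
      · rw [show (X 1 * X 0 : MvPowerSeries (Fin (r+2)) k) = X 0 * X 1 by ring]
        exact hq
      · rw [show (X 1 * X 1 : MvPowerSeries (Fin (r+2)) k) = X 1 ^ 2 by ring]
        exact Ideal.subset_span (Set.mem_union_left _ (by simp))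
      · exact Ideal.mul_mem_left _ _ (hzM i)
    · apply mem_colon_of_forall
      intro a _
      exact Ideal.mul_mem_right _ _ (hzM i)

lemma L3 {m : ℕ} (hm : 1 ≤ m) :
    Submodule.colon (Ideal.span ({X 0 ^ m, X 1} ∪ Zs k r))
        (Ideal.span ({X 0, X 1} ∪ Zs k r))
      = Ideal.span ({X 0 ^ (m-1), X 1} ∪ Zs k r) := by
  apply le_antisymm
  · intro f hf
    have hx := Submodule.mem_colon.1 hf (X 0)
      (Ideal.subset_span (Set.mem_union_left _ (by simp)))
    rw [smul_eq_mul] at hx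
    have A1 := Kcrit hx
    apply mem_Kspan
    intro j hj
    have := A1 (j+1) (by omega)
    rw [coeff_mul_X, if_pos (single_le_iff.mpr (by rw [single_eq_same]; omega)),
      single_tsub] at this
    simpa using this
  · rw [Ideal.span_le]
    intro g hg
    simp only [Set.mem_union, Set.mem_insert_iff, Set.mem_singleton_iff, Zs,
      Set.mem_range] at hg
    have hzK : ∀ i : Fin r, (X i.succ.succ : MvPowerSeries (Fin (r+2)) k)
        ∈ Ideal.span ({X 0 ^ m, X 1} ∪ Zs k r) :=
      fun i => Ideal.subset_span (Set.mem_union_right _ ⟨i, rfl⟩)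
    have hy : (X 1 : MvPowerSeries (Fin (r+2)) k)
        ∈ Ideal.span ({X 0 ^ m, X 1} ∪ Zs k r) :=
      Ideal.subset_span (Set.mem_union_left _ (by simp))
    rcases hg with (rfl | rfl) | ⟨i, rfl⟩
    · apply mem_colon_of_forall
      intro a ha
      simp only [Set.mem_union, Set.mem_insert_iff, Set.mem_singleton_iff, Zs,
        Set.mem_range] at ha
      rcases ha with (rfl | rfl) | ⟨i, rfl⟩
      · rw [show (X 0 ^ (m-1) * X 0 : MvPowerSeries (Fin (r+2)) k) = X 0 ^ (m-1+1) by ring,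
          show m - 1 + 1 = m by omega]
        exact Ideal.subset_span (Set.mem_union_left _ (by simp))
      · exact Ideal.mul_mem_left _ _ hy
      · exact Ideal.mul_mem_left _ _ (hzK i)
    · apply mem_colon_of_forall
      intro a _
      exact Ideal.mul_mem_right _ _ hy
    · apply mem_colon_of_forall
      intro a _
      exact Ideal.mul_mem_right _ _ (hzK i)


end L

end

end CuspAux

/-- Colon filtration of the local model of a `C_{2,n}` cuspidal structure:
`J : I = (xⁿ, xy, y², z)`, `J : I^ℓ = (x^{n+1−ℓ}, y, z)` for `2 ≤ ℓ ≤ n`, and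
`J : I^{n+1} = R`. -/
theorem stmt_1 (k : Type) [Field k] (n r : ℕ) (hn : 3 ≤ n)
    (x y : MvPowerSeries (Fin (r + 2)) k) (z : Fin r → MvPowerSeries (Fin (r + 2)) k)
    (hx : x = MvPowerSeries.X 0) (hy : y = MvPowerSeries.X 1)
    (hz : ∀ i : Fin r, z i = MvPowerSeries.X i.succ.succ)
    (I J : Ideal (MvPowerSeries (Fin (r + 2)) k))
    (hI : I = Ideal.span ({x, y} ∪ Set.range z))
    (hJ : J = Ideal.span ({y ^ 2 + x ^ n, x * y} ∪ Set.range z)) :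
    Submodule.colon J (↑(I ^ 1) : Set (MvPowerSeries (Fin (r + 2)) k)) = Ideal.span ({x ^ n, x * y, y ^ 2} ∪ Set.range z) ∧
    (∀ ℓ : ℕ, 2 ≤ ℓ → ℓ ≤ n →
      Submodule.colon J (↑(I ^ ℓ) : Set (MvPowerSeries (Fin (r + 2)) k)) = Ideal.span ({x ^ (n + 1 - ℓ), y} ∪ Set.range z)) ∧
    Submodule.colon J (↑(I ^ (n + 1)) : Set (MvPowerSeries (Fin (r + 2)) k)) = ⊤ := by
  subst hx hy
  have hzf : z = fun i : Fin r => MvPowerSeries.X i.succ.succ := funext hz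
  subst hzf
  have hr : (Set.range fun i : Fin r =>
      (MvPowerSeries.X i.succ.succ : MvPowerSeries (Fin (r + 2)) k)) = CuspAux.Zs k r := rfl
  rw [hI, hJ, hr]
  have key : ∀ ℓ : ℕ, 2 ≤ ℓ → ℓ ≤ n →
      Submodule.colon
          (Ideal.span ({MvPowerSeries.X 1 ^ 2 + MvPowerSeries.X 0 ^ n,
            MvPowerSeries.X 0 * MvPowerSeries.X 1} ∪ CuspAux.Zs k r))
          (↑(Ideal.span ({MvPowerSeries.X 0, MvPowerSeries.X 1} ∪ CuspAux.Zs k r) ^ ℓ) : Set (MvPowerSeries (Fin (r + 2)) k))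
        = Ideal.span ({MvPowerSeries.X 0 ^ (n + 1 - ℓ), MvPowerSeries.X 1}
            ∪ CuspAux.Zs k r) := by
    intro ℓ h2
    induction ℓ, h2 using Nat.le_induction with
    | base =>
      intro _
      rw [pow_two (Ideal.span ({MvPowerSeries.X 0, MvPowerSeries.X 1} ∪ CuspAux.Zs k r)), CuspAux.colon_colon, CuspAux.L1 hn, CuspAux.L2 hn,
        show n + 1 - 2 = n - 1 by omega]
    | succ m hm ih =>
      intro hln
      rw [pow_succ (Ideal.span ({MvPowerSeries.X 0, MvPowerSeries.X 1} ∪ CuspAux.Zs k r)) m, CuspAux.colon_colon, ih (by omega), CuspAux.L3 (by omega),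
        show n + 1 - (m + 1) = n + 1 - m - 1 by omega]
  refine ⟨?_, key, ?_⟩
  · rw [pow_one]
    exact CuspAux.L1 hn
  · rw [pow_succ (Ideal.span ({MvPowerSeries.X 0, MvPowerSeries.X 1} ∪ CuspAux.Zs k r)) n, CuspAux.colon_colon, key n (by omega) le_rfl,
      CuspAux.L3 (show 1 ≤ n + 1 - n by omega),
      show n + 1 - n - 1 = 0 by omega, pow_zero]
    rw [Ideal.eq_top_iff_one]
    exact Ideal.subset_span (Set.mem_union_left _ (by simp))
end

section
/- J : (J : I) = I; for every ℓ with 2 ≤ ℓ ≤ n one has J : (J : I^ℓ) = (x^ℓ, xy, y², z₁, …, z_r); and J : (J : I^{n+1}) = J. -/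
open MvPowerSeries Finsupp

section Aux
variable {k : Type} [Field k] {r : ℕ}

local notation "R" => MvPowerSeries (Fin (r+2)) k

/-- exponent of `x^i y^j` -/
noncomputable def sE (r : ℕ) (i j : ℕ) : Fin (r+2) →₀ ℕ := Finsupp.single 0 i + Finsupp.single 1 j

lemma fin01 : (0 : Fin (r+2)) ≠ 1 := by
  intro h
  have := congrArg Fin.val h
  simp at this

lemma fin_cases3 (v : Fin (r+2)) : v = 0 ∨ v = 1 ∨ ∃ i : Fin r, v = i.succ.succ := by
  induction v using Fin.cases with
  | zero => exact Or.inl rfl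
  | succ w =>
    induction w using Fin.cases with
    | zero => exact Or.inr (Or.inl (Fin.succ_zero_eq_one))
    | succ u => exact Or.inr (Or.inr ⟨u, rfl⟩)

lemma zne0 (i : Fin r) : (i.succ.succ : Fin (r+2)) ≠ 0 := Fin.succ_ne_zero _
lemma zne1 (i : Fin r) : (i.succ.succ : Fin (r+2)) ≠ 1 := by
  rw [← Fin.succ_zero_eq_one]
  intro h
  exact Fin.succ_ne_zero _ (Fin.succ_injective _ h)

@[simp] lemma sE_apply0 {i j : ℕ} : sE r i j 0 = i := by
  simp [sE, Finsupp.single_apply, fin01.symm]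

@[simp] lemma sE_apply1 {i j : ℕ} : sE r i j 1 = j := by
  simp [sE, Finsupp.single_apply, fin01]

@[simp] lemma sE_applyz {i j : ℕ} (v : Fin r) : sE r i j v.succ.succ = 0 := by
  simp [sE, Finsupp.single_apply, (zne0 v).symm, (zne1 v).symm]

lemma sE_le {a b i j : ℕ} : sE r a b ≤ sE r i j ↔ a ≤ i ∧ b ≤ j := by
  constructor
  · intro h
    exact ⟨by simpa using h 0, by simpa using h 1⟩
  · intro ⟨h1, h2⟩ v
    rcases fin_cases3 v with rfl | rfl | ⟨i, rfl⟩ <;> simp [h1, h2]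

lemma sE_le_of {a b : ℕ} {e : Fin (r+2) →₀ ℕ} (h0 : a ≤ e 0) (h1 : b ≤ e 1) :
    sE r a b ≤ e := by
  intro v
  rcases fin_cases3 v with rfl | rfl | ⟨i, rfl⟩ <;> simp [h0, h1]

lemma sE_sub {a b i j : ℕ} : sE r i j - sE r a b = sE r (i-a) (j-b) := by
  ext v
  rcases fin_cases3 v with rfl | rfl | ⟨i, rfl⟩ <;> simp [Finsupp.tsub_apply]

lemma sE_inj {a b i j : ℕ} : sE r i j = sE r a b ↔ i = a ∧ j = b := by
  constructor
  · intro h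
    constructor
    · have := congrArg (fun f => f 0) h; simpa using this
    · have := congrArg (fun f => f 1) h; simpa using this
  · rintro ⟨rfl, rfl⟩; rfl

lemma eq_sE {e : Fin (r+2) →₀ ℕ} (hz : ∀ i : Fin r, e i.succ.succ = 0) :
    e = sE r (e 0) (e 1) := by
  ext v
  rcases fin_cases3 v with rfl | rfl | ⟨i, rfl⟩ <;> simp [hz]

lemma xypow (a b : ℕ) : (X 0 : R)^a * X 1^b = monomial (sE r a b) 1 := by
  rw [X_pow_eq, X_pow_eq, monomial_mul_monomial, one_mul, sE]


lemma coeff_mul_xy (f : R) (a b i j : ℕ) :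
    coeff (sE r i j) (f * ((X 0 : R)^a * X 1^b)) =
      if a ≤ i ∧ b ≤ j then coeff (sE r (i-a) (j-b)) f else 0 := by
  rw [xypow, coeff_mul_monomial]
  by_cases h : sE r a b ≤ sE r i j
  · rw [if_pos h, if_pos (sE_le.1 h), sE_sub, mul_one]
  · rw [if_neg h, if_neg (fun h' => h (sE_le.2 h'))]

lemma coeff_mul_z (f : R) (v : Fin r) (i j : ℕ) :
    coeff (sE r i j) (f * X v.succ.succ) = 0 := by
  rw [X_def, coeff_mul_monomial, if_neg]
  intro h
  have := h v.succ.succ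
  simp [Finsupp.single_apply] at this

lemma vanish_of_mem_span (φ : R →ₗ[k] k) {T : Set R} (hT : ∀ t ∈ T, ∀ g : R, φ (g * t) = 0)
    {f : R} (hf : f ∈ Ideal.span T) : φ f = 0 := by
  have key : ∀ g : R, φ (g * f) = 0 := by
    refine Submodule.span_induction (p := fun f _ => ∀ g : R, φ (g * f) = 0) hT ?_ ?_ ?_ hf
    · intro g; simp
    · intro u v _ _ hu hv g; rw [mul_add, map_add, hu, hv, add_zero]
    · intro a u _ hu g
      have : g * (a • u) = (g * a) * u := by rw [smul_eq_mul]; ring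
      rw [this]
      exact hu _
  simpa using key 1

lemma mem_colon_of {Jid M : Ideal R} {T : Set R} (hMT : M ≤ Ideal.span T) {t : R}
    (h : ∀ p ∈ T, t * p ∈ Jid) : t ∈ Submodule.colon Jid M := by
  rw [Submodule.mem_colon]
  intro p hp
  have hp' : p ∈ Ideal.span T := hMT hp
  refine Submodule.span_induction (p := fun p _ => t • p ∈ Jid) ?_ ?_ ?_ ?_ hp'
  · intro u hu; rw [smul_eq_mul]; exact h u hu
  · simp
  · intro u v _ _ hu hv; rw [smul_add]; exact Jid.add_mem hu hv
  · intro a u _ hu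
    rw [smul_comm]
    exact Jid.smul_mem a hu

lemma mem_of_coeff_vanish (W : Ideal R) (L : List (Fin (r+2) →₀ ℕ))
    (hW : ∀ d ∈ L, (monomial d 1 : R) ∈ W) :
    ∀ f : R, (∀ e, (∀ d ∈ L, ¬ d ≤ e) → coeff e f = 0) → f ∈ W := by
  induction L with
  | nil =>
    intro f hf
    have : f = 0 := MvPowerSeries.ext fun e => by simpa using hf e (by simp)
    simp [this]
  | cons d L ih =>
    intro f hf
    set q : R := fun e => coeff (e + d) f with hq
    set p : R := fun e => if d ≤ e then 0 else coeff e f with hp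
    have hsplit : f = p + q * monomial d 1 := by
      apply MvPowerSeries.ext
      intro e
      rw [map_add, coeff_mul_monomial]
      by_cases h : d ≤ e
      · have h1 : coeff e p = 0 := by rw [coeff_apply]; simp [hp, h]
        have h2 : coeff (e - d) q = coeff e f := by
          rw [coeff_apply]
          show coeff (e - d + d) f = coeff e f
          rw [tsub_add_cancel_of_le h]
        rw [h1, if_pos h, zero_add, h2, mul_one]
      · have h1 : coeff e p = coeff e f := by rw [coeff_apply]; simp [hp, h]
        rw [h1, if_neg h, add_zero]
    rw [hsplit]
    refine W.add_mem ?_ (W.mul_mem_left q (hW d (List.mem_cons_self)))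
    refine ih (fun d' hd' => hW d' (List.mem_cons_of_mem _ hd')) p ?_
    intro e he
    by_cases h : d ≤ e
    · rw [coeff_apply, hp]; simp [h]
    · rw [coeff_apply, hp]
      simp only [h, if_false]
      exact hf e (by
        intro d' hd'
        rcases List.mem_cons.1 hd' with rfl | hd'
        · exact h
        · exact he d' hd')


variable (k r) in
def zs : Set R := Set.range (fun i : Fin r => (X i.succ.succ : R))

variable (k r) in
def JS (n : ℕ) : Set R := {(X 1:R)^2 + (X 0:R)^n, (X 0:R) * X 1} ∪ zs k r

variable {n : ℕ}

lemma mem_JS_elim {t : R} (ht : t ∈ JS k r n) :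
    t = (X 1:R)^2 + (X 0:R)^n ∨ t = (X 0:R) * X 1 ∨ ∃ i : Fin r, t = X i.succ.succ := by
  simp only [JS, zs, Set.mem_union, Set.mem_insert_iff, Set.mem_singleton_iff,
    Set.mem_range] at ht
  tauto

lemma gen1_mem : ((X 1:R)^2 + (X 0:R)^n) ∈ Ideal.span (JS k r n) :=
  Ideal.subset_span (Or.inl (Set.mem_insert _ _))

lemma xy_mem : ((X 0:R) * X 1) ∈ Ideal.span (JS k r n) :=
  Ideal.subset_span (Or.inl (Set.mem_insert_iff.2 (Or.inr rfl)))

lemma z_mem (i : Fin r) : (X i.succ.succ : R) ∈ Ideal.span (JS k r n) :=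
  Ideal.subset_span (Or.inr ⟨i, rfl⟩)

lemma xn1_mem : ((X 0:R)^(n+1)) ∈ Ideal.span (JS k r n) := by
  have h : (X 0:R)^(n+1) = X 0 * ((X 1:R)^2 + (X 0:R)^n) - X 1 * ((X 0:R) * X 1) := by ring
  rw [h]
  exact sub_mem (Ideal.mul_mem_left _ _ gen1_mem) (Ideal.mul_mem_left _ _ xy_mem)

lemma y3_mem (hn : 1 ≤ n) : ((X 1:R)^3) ∈ Ideal.span (JS k r n) := by
  obtain ⟨m, rfl⟩ : ∃ m, n = m + 1 := ⟨n-1, (Nat.succ_pred_eq_of_pos hn).symm⟩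
  have h : (X 1:R)^3 = X 1 * ((X 1:R)^2 + (X 0:R)^(m+1)) - (X 0:R)^m * ((X 0:R) * X 1) := by
    ring
  rw [h]
  exact sub_mem (Ideal.mul_mem_left _ _ gen1_mem) (Ideal.mul_mem_left _ _ xy_mem)

lemma mon_mem_J (hn : 1 ≤ n) (a b : ℕ)
    (h : (1 ≤ a ∧ 1 ≤ b) ∨ (n + 1 ≤ a) ∨ 3 ≤ b) :
    (X 0:R)^a * (X 1:R)^b ∈ Ideal.span (JS k r n) := by
  rcases h with ⟨ha, hb⟩ | h | h
  · obtain ⟨a', rfl⟩ : ∃ a', a = a' + 1 := ⟨a-1, (Nat.succ_pred_eq_of_pos ha).symm⟩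
    obtain ⟨b', rfl⟩ : ∃ b', b = b' + 1 := ⟨b-1, (Nat.succ_pred_eq_of_pos hb).symm⟩
    have he : (X 0:R)^(a'+1) * (X 1:R)^(b'+1)
        = ((X 0:R)^a' * (X 1:R)^b') * ((X 0:R) * X 1) := by ring
    rw [he]
    exact Ideal.mul_mem_left _ _ xy_mem
  · obtain ⟨c, rfl⟩ : ∃ c, a = (n+1) + c := ⟨a - (n+1), by omega⟩
    have he : (X 0:R)^((n+1)+c) * (X 1:R)^b
        = ((X 0:R)^c * (X 1:R)^b) * (X 0:R)^(n+1) := by ring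
    rw [he]
    exact Ideal.mul_mem_left _ _ xn1_mem
  · obtain ⟨c, rfl⟩ : ∃ c, b = 3 + c := ⟨b - 3, by omega⟩
    have he : (X 0:R)^a * (X 1:R)^(3+c)
        = ((X 0:R)^a * (X 1:R)^c) * (X 1:R)^3 := by ring
    rw [he]
    exact Ideal.mul_mem_left _ _ (y3_mem hn)


lemma coeff_xy_of_mem_J (hn : 1 ≤ n) {f : R} (hf : f ∈ Ideal.span (JS k r n))
    (i j : ℕ) (hij : (j = 0 ∧ i < n) ∨ (i = 0 ∧ j = 1)) :
    coeff (sE r i j) f = 0 := by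
  refine vanish_of_mem_span (coeff (sE r i j)) ?_ hf
  intro t ht g
  rcases mem_JS_elim ht with rfl | rfl | ⟨v, rfl⟩
  · have he : g * ((X 1:R)^2 + (X 0:R)^n)
        = g * ((X 0:R)^0 * (X 1:R)^2) + g * ((X 0:R)^n * (X 1:R)^0) := by ring
    rw [he, map_add, coeff_mul_xy, coeff_mul_xy, if_neg (by omega), if_neg (by omega), add_zero]
  · have he : g * ((X 0:R) * X 1) = g * ((X 0:R)^1 * (X 1:R)^1) := by ring
    rw [he, coeff_mul_xy, if_neg (by omega)]
  · exact coeff_mul_z g v i j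

lemma coeff_n0_eq_02_of_mem_J (hn : 1 ≤ n) {f : R} (hf : f ∈ Ideal.span (JS k r n)) :
    coeff (sE r n 0) f = coeff (sE r 0 2) f := by
  have h := vanish_of_mem_span (coeff (sE r n 0) - coeff (sE r 0 2)) ?_ hf
  · rw [LinearMap.sub_apply] at h
    exact sub_eq_zero.mp h
  intro t ht g
  rw [LinearMap.sub_apply]
  rcases mem_JS_elim ht with rfl | rfl | ⟨v, rfl⟩
  · have he : g * ((X 1:R)^2 + (X 0:R)^n)
        = g * ((X 0:R)^0 * (X 1:R)^2) + g * ((X 0:R)^n * (X 1:R)^0) := by ring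
    rw [he, map_add, map_add, coeff_mul_xy, coeff_mul_xy, coeff_mul_xy, coeff_mul_xy]
    rw [if_neg (by omega), if_pos (by omega), if_pos (by omega), if_neg (by omega)]
    simp
  · have he : g * ((X 0:R) * X 1) = g * ((X 0:R)^1 * (X 1:R)^1) := by ring
    rw [he, coeff_mul_xy, coeff_mul_xy, if_neg (by omega), if_neg (by omega), sub_zero]
  · rw [coeff_mul_z, coeff_mul_z, sub_zero]

lemma mem_J_of_coeff (hn : 1 ≤ n) {f : R}
    (h1 : ∀ i, i < n → coeff (sE r i 0) f = 0)
    (h2 : coeff (sE r 0 1) f = 0)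
    (h3 : coeff (sE r n 0) f = coeff (sE r 0 2) f) :
    f ∈ Ideal.span (JS k r n) := by
  set a02 : k := coeff (sE r 0 2) f with ha02
  set f' : R := f - a02 • ((X 1:R)^2 + (X 0:R)^n) with hf'
  have hgen : ∀ i j : ℕ, coeff (sE r i j) ((X 1:R)^2 + (X 0:R)^n)
      = (if sE r i j = sE r 0 2 then 1 else 0) + (if sE r i j = sE r n 0 then 1 else 0) := by
    intro i j
    have he : (X 1:R)^2 + (X 0:R)^n
        = monomial (sE r 0 2) 1 + monomial (sE r n 0) 1 := by
      rw [← xypow, ← xypow]; ring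
    rw [he, map_add, coeff_monomial, coeff_monomial]
  have key : f' ∈ Ideal.span (JS k r n) := by
    refine mem_of_coeff_vanish _
      ([sE r (n+1) 0, sE r 1 1, sE r 0 3] ++ (List.ofFn fun i : Fin r => Finsupp.single i.succ.succ 1)) ?_ f' ?_
    · intro d hd
      rcases List.mem_append.1 hd with hd | hd
      · simp only [List.mem_cons, List.mem_singleton] at hd
        rcases hd with rfl | rfl | (rfl | h)
        · rw [← xypow]; exact mon_mem_J hn _ _ (by omega)
        · rw [← xypow]
          have he : (X 0:R)^1 * (X 1:R)^1 = (X 0:R) * X 1 := by ring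
          rw [he]; exact xy_mem
        · rw [← xypow]
          have he : (X 0:R)^0 * (X 1:R)^3 = (X 1:R)^3 := by ring
          rw [he]; exact y3_mem hn
        · exact absurd h (List.not_mem_nil)
      · rcases List.mem_ofFn.1 hd with ⟨v, rfl⟩
        rw [← X_def]; exact z_mem v
    · intro e he
      have hz : ∀ v : Fin r, e v.succ.succ = 0 := by
        intro v
        have := he (Finsupp.single v.succ.succ 1)
          (List.mem_append.2 (Or.inr (List.mem_ofFn.2 ⟨v, rfl⟩)))
        by_contra hc
        exact this (Finsupp.single_le_iff.2 (by omega))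
      have h0 : e 0 ≤ n := by
        have := he (sE r (n+1) 0) (by simp)
        by_contra hc
        exact this (sE_le_of (by omega) (by omega))
      have hxy : e 0 = 0 ∨ e 1 = 0 := by
        have := he (sE r 1 1) (by simp)
        by_contra hc
        push_neg at hc
        exact this (sE_le_of (by omega) (by omega))
      have h1' : e 1 ≤ 2 := by
        have := he (sE r 0 3) (by simp)
        by_contra hc
        exact this (sE_le_of (by omega) (by omega))
      have heq : e = sE r (e 0) (e 1) := eq_sE hz
      rw [heq, hf', map_sub, LinearMap.map_smul, hgen, smul_eq_mul]
      rcases hxy with h | h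
      · rw [h]
        interval_cases hj : e 1
        · rw [h1 0 (by omega), if_neg (by rw [sE_inj]; omega), if_neg (by rw [sE_inj]; omega)]
          ring
        · rw [h2, if_neg (by rw [sE_inj]; omega), if_neg (by rw [sE_inj]; omega)]; ring
        · rw [if_pos rfl, if_neg (by rw [sE_inj]; omega)]
          ring
      · rw [h]
        rcases Nat.lt_or_ge (e 0) n with hlt | hge
        · rw [h1 _ hlt, if_neg (by rw [sE_inj]; omega), if_neg (by rw [sE_inj]; omega)]; ring
        · have : e 0 = n := by omega
          rw [this, if_neg (by rw [sE_inj]; omega), if_pos rfl, h3]; ring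
  have : f = f' + a02 • ((X 1:R)^2 + (X 0:R)^n) := by rw [hf']; ring
  rw [this]
  exact Ideal.add_mem _ key (Submodule.smul_of_tower_mem _ _ gen1_mem)


lemma mem_I_of_coeff {f : R} (h : coeff (sE r 0 0) f = 0) :
    f ∈ Ideal.span ({(X 0:R), X 1} ∪ zs k r) := by
  refine mem_of_coeff_vanish _
    ([sE r 1 0, sE r 0 1] ++ (List.ofFn fun i : Fin r => Finsupp.single i.succ.succ 1)) ?_ f ?_
  · intro d hd
    rcases List.mem_append.1 hd with hd | hd
    · simp only [List.mem_cons, List.mem_singleton] at hd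
      rcases hd with rfl | (rfl | h)
      · rw [← xypow]
        have he : (X 0:R)^1 * (X 1:R)^0 = X 0 := by ring
        rw [he]; exact Ideal.subset_span (Or.inl (Set.mem_insert _ _))
      · rw [← xypow]
        have he : (X 0:R)^0 * (X 1:R)^1 = X 1 := by ring
        rw [he]; exact Ideal.subset_span (Or.inl (Set.mem_insert_iff.2 (Or.inr rfl)))
      · exact absurd h (List.not_mem_nil)
    · rcases List.mem_ofFn.1 hd with ⟨v, rfl⟩
      rw [← X_def]; exact Ideal.subset_span (Or.inr ⟨v, rfl⟩)
  · intro e he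
    have hz : ∀ v : Fin r, e v.succ.succ = 0 := by
      intro v
      have := he (Finsupp.single v.succ.succ 1)
        (List.mem_append.2 (Or.inr (List.mem_ofFn.2 ⟨v, rfl⟩)))
      by_contra hc
      exact this (Finsupp.single_le_iff.2 (by omega))
    have h0 : e 0 = 0 := by
      have := he (sE r 1 0) (by simp)
      by_contra hc
      exact this (sE_le_of (by omega) (by omega))
    have h1' : e 1 = 0 := by
      have := he (sE r 0 1) (by simp)
      by_contra hc
      exact this (sE_le_of (by omega) (by omega))
    have heq : e = sE r (e 0) (e 1) := eq_sE hz
    rw [heq, h0, h1']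
    exact h

lemma mem_Q_of_coeff (m : ℕ) {f : R} (h : ∀ i, i < m → coeff (sE r i 0) f = 0) :
    f ∈ Ideal.span ({(X 0:R)^m, X 1} ∪ zs k r) := by
  refine mem_of_coeff_vanish _
    ([sE r m 0, sE r 0 1] ++ (List.ofFn fun i : Fin r => Finsupp.single i.succ.succ 1)) ?_ f ?_
  · intro d hd
    rcases List.mem_append.1 hd with hd | hd
    · simp only [List.mem_cons, List.mem_singleton] at hd
      rcases hd with rfl | (rfl | h)
      · rw [← xypow]
        have he : (X 0:R)^m * (X 1:R)^0 = (X 0:R)^m := by ring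
        rw [he]; exact Ideal.subset_span (Or.inl (Set.mem_insert _ _))
      · rw [← xypow]
        have he : (X 0:R)^0 * (X 1:R)^1 = X 1 := by ring
        rw [he]; exact Ideal.subset_span (Or.inl (Set.mem_insert_iff.2 (Or.inr rfl)))
      · exact absurd h (List.not_mem_nil)
    · rcases List.mem_ofFn.1 hd with ⟨v, rfl⟩
      rw [← X_def]; exact Ideal.subset_span (Or.inr ⟨v, rfl⟩)
  · intro e he
    have hz : ∀ v : Fin r, e v.succ.succ = 0 := by
      intro v
      have := he (Finsupp.single v.succ.succ 1)
        (List.mem_append.2 (Or.inr (List.mem_ofFn.2 ⟨v, rfl⟩)))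
      by_contra hc
      exact this (Finsupp.single_le_iff.2 (by omega))
    have h0 : e 0 < m := by
      have := he (sE r m 0) (by simp)
      by_contra hc
      exact this (sE_le_of (by omega) (by omega))
    have h1' : e 1 = 0 := by
      have := he (sE r 0 1) (by simp)
      by_contra hc
      exact this (sE_le_of (by omega) (by omega))
    have heq : e = sE r (e 0) (e 1) := eq_sE hz
    rw [heq, h1']
    exact h _ h0

lemma mem_P_of_coeff (ℓ : ℕ) {f : R} (h1 : ∀ i, i < ℓ → coeff (sE r i 0) f = 0)
    (h2 : coeff (sE r 0 1) f = 0) :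
    f ∈ Ideal.span ({(X 0:R)^ℓ, (X 0:R) * X 1, (X 1:R)^2} ∪ zs k r) := by
  refine mem_of_coeff_vanish _
    ([sE r ℓ 0, sE r 1 1, sE r 0 2] ++ (List.ofFn fun i : Fin r => Finsupp.single i.succ.succ 1)) ?_ f ?_
  · intro d hd
    rcases List.mem_append.1 hd with hd | hd
    · simp only [List.mem_cons, List.mem_singleton] at hd
      rcases hd with rfl | rfl | (rfl | h)
      · rw [← xypow]
        have he : (X 0:R)^ℓ * (X 1:R)^0 = (X 0:R)^ℓ := by ring
        rw [he]; exact Ideal.subset_span (Or.inl (Set.mem_insert _ _))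
      · rw [← xypow]
        have he : (X 0:R)^1 * (X 1:R)^1 = (X 0:R) * X 1 := by ring
        rw [he]
        exact Ideal.subset_span (Or.inl (Set.mem_insert_iff.2 (Or.inr (Set.mem_insert _ _))))
      · rw [← xypow]
        have he : (X 0:R)^0 * (X 1:R)^2 = (X 1:R)^2 := by ring
        rw [he]
        exact Ideal.subset_span
          (Or.inl (Set.mem_insert_iff.2 (Or.inr (Set.mem_insert_iff.2 (Or.inr rfl)))))
      · exact absurd h (List.not_mem_nil)
    · rcases List.mem_ofFn.1 hd with ⟨v, rfl⟩
      rw [← X_def]; exact Ideal.subset_span (Or.inr ⟨v, rfl⟩)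
  · intro e he
    have hz : ∀ v : Fin r, e v.succ.succ = 0 := by
      intro v
      have := he (Finsupp.single v.succ.succ 1)
        (List.mem_append.2 (Or.inr (List.mem_ofFn.2 ⟨v, rfl⟩)))
      by_contra hc
      exact this (Finsupp.single_le_iff.2 (by omega))
    have h0 : e 0 < ℓ := by
      have := he (sE r ℓ 0) (by simp)
      by_contra hc
      exact this (sE_le_of (by omega) (by omega))
    have hxy : e 0 = 0 ∨ e 1 = 0 := by
      have := he (sE r 1 1) (by simp)
      by_contra hc
      push_neg at hc
      exact this (sE_le_of (by omega) (by omega))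
    have h1' : e 1 < 2 := by
      have := he (sE r 0 2) (by simp)
      by_contra hc
      exact this (sE_le_of (by omega) (by omega))
    have heq : e = sE r (e 0) (e 1) := eq_sE hz
    rw [heq]
    rcases hxy with h | h
    · rw [h]
      interval_cases hj : e 1
      · exact h1 0 (by omega)
      · exact h2
    · rw [h]
      exact h1 _ h0

variable (k r) in
def TS (ℓ : ℕ) : Set R :=
  {p | ∃ a b : ℕ, a + b = ℓ ∧ p = (X 0:R)^a * (X 1:R)^b} ∪ zs k r

lemma I_le_TS1 : (Ideal.span ({(X 0:R), X 1} ∪ zs k r)) ≤ Ideal.span (TS k r 1) := by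
  apply Ideal.span_mono
  rintro t (ht | ht)
  · rcases Set.mem_insert_iff.1 ht with rfl | ht
    · exact Or.inl ⟨1, 0, rfl, by ring⟩
    · rw [Set.mem_singleton_iff.1 ht]
      exact Or.inl ⟨0, 1, rfl, by ring⟩
  · exact Or.inr ht

lemma I_pow_le (ℓ : ℕ) (hl : 1 ≤ ℓ) :
    (Ideal.span ({(X 0:R), X 1} ∪ zs k r))^ℓ ≤ Ideal.span (TS k r ℓ) := by
  induction ℓ, hl using Nat.le_induction with
  | base =>
    rw [pow_one]
    exact I_le_TS1
  | succ ℓ hl ih =>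
    rw [pow_succ]
    refine le_trans (Ideal.mul_mono ih I_le_TS1) ?_
    rw [Ideal.span_mul_span']
    rw [Ideal.span_le]
    rintro p ⟨u, hu, v, hv, rfl⟩
    rcases hu with ⟨a, b, hab, rfl⟩ | ⟨i, rfl⟩
    · rcases hv with ⟨a', b', hab', rfl⟩ | ⟨i, rfl⟩
      · refine Ideal.subset_span (Or.inl ⟨a + a', b + b', by omega, by ring⟩)
      · exact Ideal.mul_mem_left _ _ (Ideal.subset_span (Or.inr ⟨i, rfl⟩))
    · exact Ideal.mul_mem_right _ _ (Ideal.subset_span (Or.inr ⟨i, rfl⟩))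


lemma colon_Ipow (hn : 1 ≤ n) (ℓ : ℕ) (h2 : 2 ≤ ℓ) (hℓn : ℓ ≤ n) :
    Submodule.colon (Ideal.span (JS k r n)) ((Ideal.span ({(X 0:R), X 1} ∪ zs k r))^ℓ : Ideal R)
      = Ideal.span ({(X 0:R)^(n-ℓ+1), X 1} ∪ zs k r) := by
  apply le_antisymm
  · -- hard direction: colon ⊆ span
    intro f hf
    have hx0 : (X 0:R) ∈ Ideal.span ({(X 0:R), X 1} ∪ zs k r) :=
      Ideal.subset_span (Or.inl (Set.mem_insert _ _))
    have hxl : (X 0:R)^ℓ ∈ (Ideal.span ({(X 0:R), X 1} ∪ zs k r))^ℓ :=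
      Ideal.pow_mem_pow hx0 ℓ
    have hfx : f * ((X 0:R)^ℓ * (X 1:R)^0) ∈ Ideal.span (JS k r n) := by
      have h := Submodule.mem_colon.1 hf _ hxl
      have he : f • (X 0:R)^ℓ = f * ((X 0:R)^ℓ * (X 1:R)^0) := by
        rw [smul_eq_mul]; ring
      rwa [he] at h
    apply mem_Q_of_coeff
    intro i hi
    rcases Nat.lt_or_ge (i + ℓ) n with hlt | hge
    · have hc := coeff_xy_of_mem_J hn hfx (i+ℓ) 0 (Or.inl ⟨rfl, hlt⟩)
      rw [coeff_mul_xy, if_pos ⟨by omega, by omega⟩] at hc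
      have harith : i + ℓ - ℓ = i := by omega
      rw [harith] at hc
      exact hc
    · have hieq : i = n - ℓ := by omega
      have hc := coeff_n0_eq_02_of_mem_J hn hfx
      rw [coeff_mul_xy, coeff_mul_xy, if_pos ⟨by omega, by omega⟩, if_neg (by omega)] at hc
      have harith : n - ℓ = i := by omega
      rw [harith] at hc
      simpa using hc
  · -- easy direction via generator checks
    rw [Ideal.span_le]
    rintro t (ht | ⟨i, rfl⟩)
    · rcases Set.mem_insert_iff.1 ht with rfl | ht
      · -- t = x^(n-ℓ+1)
        refine mem_colon_of (I_pow_le ℓ (by omega)) ?_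
        rintro p (⟨a, b, hab, rfl⟩ | ⟨i, rfl⟩)
        · have he : (X 0:R)^(n-ℓ+1) * ((X 0:R)^a * (X 1:R)^b)
              = (X 0:R)^(n-ℓ+1+a) * (X 1:R)^b := by ring
          rw [he]
          exact mon_mem_J hn _ _ (by omega)
        · exact Ideal.mul_mem_left _ _ (z_mem i)
      · -- t = y
        rw [Set.mem_singleton_iff.1 ht]
        refine mem_colon_of (I_pow_le ℓ (by omega)) ?_
        rintro p (⟨a, b, hab, rfl⟩ | ⟨i, rfl⟩)
        · have he : (X 1:R) * ((X 0:R)^a * (X 1:R)^b)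
              = (X 0:R)^a * (X 1:R)^(b+1) := by ring
          rw [he]
          exact mon_mem_J hn _ _ (by omega)
        · exact Ideal.mul_mem_left _ _ (z_mem i)
    · -- t = z i
      refine mem_colon_of (I_pow_le ℓ (by omega)) ?_
      intro p _
      exact Ideal.mul_mem_right _ _ (z_mem i)

lemma colon_Q (hn : 1 ≤ n) (ℓ : ℕ) (h2 : 2 ≤ ℓ) (hℓn : ℓ ≤ n) :
    Submodule.colon (Ideal.span (JS k r n)) (Ideal.span ({(X 0:R)^(n-ℓ+1), X 1} ∪ zs k r))
      = Ideal.span ({(X 0:R)^ℓ, (X 0:R) * X 1, (X 1:R)^2} ∪ zs k r) := by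
  apply le_antisymm
  · intro f hf
    have hy : (X 1:R) ∈ Ideal.span ({(X 0:R)^(n-ℓ+1), X 1} ∪ zs k r) :=
      Ideal.subset_span (Or.inl (Set.mem_insert_iff.2 (Or.inr rfl)))
    have hxm : (X 0:R)^(n-ℓ+1) ∈ Ideal.span ({(X 0:R)^(n-ℓ+1), X 1} ∪ zs k r) :=
      Ideal.subset_span (Or.inl (Set.mem_insert _ _))
    have hfy : f * ((X 0:R)^0 * (X 1:R)^1) ∈ Ideal.span (JS k r n) := by
      have h := Submodule.mem_colon.1 hf _ hy
      have he : f • (X 1:R) = f * ((X 0:R)^0 * (X 1:R)^1) := by rw [smul_eq_mul]; ring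
      rwa [he] at h
    have hfx : f * ((X 0:R)^(n-ℓ+1) * (X 1:R)^0) ∈ Ideal.span (JS k r n) := by
      have h := Submodule.mem_colon.1 hf _ hxm
      have he : f • (X 0:R)^(n-ℓ+1) = f * ((X 0:R)^(n-ℓ+1) * (X 1:R)^0) := by
        rw [smul_eq_mul]; ring
      rwa [he] at h
    have hc01 : coeff (sE r 0 1) f = 0 := by
      have hc := coeff_n0_eq_02_of_mem_J hn hfy
      rw [coeff_mul_xy, coeff_mul_xy, if_neg (by omega), if_pos ⟨by omega, by omega⟩] at hc
      simpa using hc.symm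
    apply mem_P_of_coeff ℓ _ hc01
    intro i hi
    rcases Nat.lt_or_ge i (ℓ - 1) with hlt | hge
    · have hc := coeff_xy_of_mem_J hn hfx (i + (n-ℓ+1)) 0 (Or.inl ⟨rfl, by omega⟩)
      rw [coeff_mul_xy, if_pos ⟨by omega, by omega⟩] at hc
      have harith : i + (n-ℓ+1) - (n-ℓ+1) = i := by omega
      rw [harith] at hc
      exact hc
    · have hieq : i = ℓ - 1 := by omega
      have hc := coeff_n0_eq_02_of_mem_J hn hfx
      rw [coeff_mul_xy, coeff_mul_xy, if_pos ⟨by omega, by omega⟩, if_neg (by omega)] at hc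
      have harith : n - (n-ℓ+1) = i := by omega
      rw [harith] at hc
      simpa using hc
  · rw [Ideal.span_le]
    have hQ : ∀ t : R, (∀ p ∈ ({(X 0:R)^(n-ℓ+1), X 1} ∪ zs k r : Set R),
        t * p ∈ Ideal.span (JS k r n)) →
        t ∈ Submodule.colon (Ideal.span (JS k r n))
          (Ideal.span ({(X 0:R)^(n-ℓ+1), X 1} ∪ zs k r)) := by
      intro t h
      exact mem_colon_of le_rfl h
    rintro t (ht | ⟨i, rfl⟩)
    · rcases Set.mem_insert_iff.1 ht with rfl | ht
      · refine hQ _ ?_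
        rintro p (hp | ⟨i, rfl⟩)
        · rcases Set.mem_insert_iff.1 hp with rfl | hp
          · have he : (X 0:R)^ℓ * (X 0:R)^(n-ℓ+1) = (X 0:R)^(ℓ+(n-ℓ+1)) * (X 1:R)^0 := by ring
            rw [he]; exact mon_mem_J hn _ _ (by omega)
          · rw [Set.mem_singleton_iff.1 hp]
            have he : (X 0:R)^ℓ * (X 1:R) = (X 0:R)^ℓ * (X 1:R)^1 := by ring
            rw [he]; exact mon_mem_J hn _ _ (by omega)
        · exact Ideal.mul_mem_left _ _ (z_mem i)
      · rcases Set.mem_insert_iff.1 ht with rfl | ht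
        · refine hQ _ ?_
          rintro p (hp | ⟨i, rfl⟩)
          · rcases Set.mem_insert_iff.1 hp with rfl | hp
            · have he : ((X 0:R) * X 1) * (X 0:R)^(n-ℓ+1)
                  = (X 0:R)^(n-ℓ+2) * (X 1:R)^1 := by ring
              rw [he]; exact mon_mem_J hn _ _ (by omega)
            · rw [Set.mem_singleton_iff.1 hp]
              have he : ((X 0:R) * X 1) * (X 1:R) = (X 0:R)^1 * (X 1:R)^2 := by ring
              rw [he]; exact mon_mem_J hn _ _ (by omega)
          · exact Ideal.mul_mem_left _ _ (z_mem i)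
        · rw [Set.mem_singleton_iff.1 ht]
          refine hQ _ ?_
          rintro p (hp | ⟨i, rfl⟩)
          · rcases Set.mem_insert_iff.1 hp with rfl | hp
            · have he : (X 1:R)^2 * (X 0:R)^(n-ℓ+1)
                  = (X 0:R)^(n-ℓ+1) * (X 1:R)^2 := by ring
              rw [he]; exact mon_mem_J hn _ _ (by omega)
            · rw [Set.mem_singleton_iff.1 hp]
              have he : (X 1:R)^2 * (X 1:R) = (X 0:R)^0 * (X 1:R)^3 := by ring
              rw [he]; exact mon_mem_J hn _ _ (by omega)
          · exact Ideal.mul_mem_left _ _ (z_mem i)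
    · refine hQ _ ?_
      intro p _
      exact Ideal.mul_mem_right _ _ (z_mem i)

end Aux

/-- Double-colon filtration of the local model of a `C_{2,n}` cuspidal structure:
`J : (J : I) = I`, `J : (J : I^ℓ) = (x^ℓ, xy, y², z)` for `2 ≤ ℓ ≤ n`, and
`J : (J : I^{n+1}) = J`. -/
theorem stmt_2 (k : Type) [Field k] (n r : ℕ) (hn : 3 ≤ n)
    (x y : MvPowerSeries (Fin (r + 2)) k) (z : Fin r → MvPowerSeries (Fin (r + 2)) k)
    (hx : x = MvPowerSeries.X 0) (hy : y = MvPowerSeries.X 1)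
    (hz : ∀ i : Fin r, z i = MvPowerSeries.X i.succ.succ)
    (I J : Ideal (MvPowerSeries (Fin (r + 2)) k))
    (hI : I = Ideal.span ({x, y} ∪ Set.range z))
    (hJ : J = Ideal.span ({y ^ 2 + x ^ n, x * y} ∪ Set.range z)) :
    Submodule.colon J (Submodule.colon J ((I ^ 1 : Ideal (MvPowerSeries (Fin (r + 2)) k)) : Set (MvPowerSeries (Fin (r + 2)) k))) = I ∧
    (∀ ℓ : ℕ, 2 ≤ ℓ → ℓ ≤ n →
      Submodule.colon J (Submodule.colon J ((I ^ ℓ : Ideal (MvPowerSeries (Fin (r + 2)) k)) : Set (MvPowerSeries (Fin (r + 2)) k))) =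
        Ideal.span ({x ^ ℓ, x * y, y ^ 2} ∪ Set.range z)) ∧
    Submodule.colon J (Submodule.colon J ((I ^ (n + 1) : Ideal (MvPowerSeries (Fin (r + 2)) k)) : Set (MvPowerSeries (Fin (r + 2)) k))) = J := by
  subst hx hy
  have hz' : z = fun i : Fin r => MvPowerSeries.X i.succ.succ := funext hz
  subst hz'
  subst hI hJ
  have hn1 : 1 ≤ n := by omega
  refine ⟨?_, ?_, ?_⟩
  · -- Part 1
    rw [pow_one]
    apply le_antisymm
    · intro f hf
      have hxn : (X 0 : MvPowerSeries (Fin (r+2)) k)^n ∈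
          Submodule.colon (Ideal.span (JS k r n))
            (Ideal.span ({(X 0 : MvPowerSeries (Fin (r+2)) k), X 1} ∪ zs k r)) := by
        refine mem_colon_of le_rfl ?_
        rintro p (hp | ⟨i, rfl⟩)
        · rcases Set.mem_insert_iff.1 hp with rfl | hp
          · have he : (X 0 : MvPowerSeries (Fin (r+2)) k)^n * X 0
                = (X 0 : MvPowerSeries (Fin (r+2)) k)^(n+1) * (X 1)^0 := by ring
            rw [he]
            exact mon_mem_J hn1 _ _ (by omega)
          · rw [Set.mem_singleton_iff.1 hp]
            have he : (X 0 : MvPowerSeries (Fin (r+2)) k)^n * X 1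
                = (X 0 : MvPowerSeries (Fin (r+2)) k)^n * (X 1)^1 := by ring
            rw [he]
            exact mon_mem_J hn1 _ _ (by omega)
        · exact Ideal.mul_mem_left _ _ (z_mem i)
      have hfx : f * ((X 0 : MvPowerSeries (Fin (r+2)) k)^n * (X 1)^0) ∈
          Ideal.span (JS k r n) := by
        have h := Submodule.mem_colon.1 hf _ hxn
        have he : f • ((X 0 : MvPowerSeries (Fin (r+2)) k)^n)
            = f * ((X 0 : MvPowerSeries (Fin (r+2)) k)^n * (X 1)^0) := by
          rw [smul_eq_mul]; ring
        rwa [he] at h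
      have hc := coeff_n0_eq_02_of_mem_J hn1 hfx
      rw [coeff_mul_xy, coeff_mul_xy, if_pos ⟨le_rfl, le_rfl⟩, if_neg (by omega)] at hc
      have harith : n - n = 0 := by omega
      rw [harith] at hc
      exact mem_I_of_coeff (by simpa using hc)
    · intro g hg
      rw [Submodule.mem_colon]
      intro f hf
      have h := Submodule.mem_colon.1 hf _ hg
      rw [smul_eq_mul] at h ⊢
      rwa [mul_comm g f]
  · -- Part 2
    intro ℓ hℓ2 hℓn
    show Submodule.colon (Ideal.span (JS k r n))
        (Submodule.colon (Ideal.span (JS k r n))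
          ((Ideal.span ({(X 0 : MvPowerSeries (Fin (r+2)) k), X 1} ∪ zs k r))^ℓ : Ideal (MvPowerSeries (Fin (r+2)) k)))
      = Ideal.span ({(X 0 : MvPowerSeries (Fin (r+2)) k)^ℓ, X 0 * X 1, (X 1)^2} ∪ zs k r)
    rw [colon_Ipow hn1 ℓ hℓ2 hℓn, colon_Q hn1 ℓ hℓ2 hℓn]
  · -- Part 3
    show Submodule.colon (Ideal.span (JS k r n))
        (Submodule.colon (Ideal.span (JS k r n))
          ((Ideal.span ({(X 0 : MvPowerSeries (Fin (r+2)) k), X 1} ∪ zs k r))^(n+1) : Ideal (MvPowerSeries (Fin (r+2)) k)))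
      = Ideal.span (JS k r n)
    have hIJ : (Ideal.span ({(X 0 : MvPowerSeries (Fin (r+2)) k), X 1} ∪ zs k r))^(n+1)
        ≤ Ideal.span (JS k r n) := by
      refine (I_pow_le (n+1) (by omega)).trans ?_
      rw [Ideal.span_le]
      rintro p (⟨a, b, hab, rfl⟩ | ⟨i, rfl⟩)
      · exact mon_mem_J hn1 _ _ (by omega)
      · exact z_mem i
    have htop : Submodule.colon (Ideal.span (JS k r n))
        ((Ideal.span ({(X 0 : MvPowerSeries (Fin (r+2)) k), X 1} ∪ zs k r))^(n+1) : Ideal (MvPowerSeries (Fin (r+2)) k)) = ⊤ := by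
      rw [eq_top_iff]
      intro f _
      rw [Submodule.mem_colon]
      intro p hp
      rw [smul_eq_mul]
      exact Ideal.mul_mem_left _ _ (hIJ hp)
    rw [htop]
    apply le_antisymm
    · intro f hf
      have h := Submodule.mem_colon.1 hf 1 trivial
      rwa [smul_eq_mul, mul_one] at h
    · intro f hf
      rw [Submodule.mem_colon]
      intro p _
      rw [smul_eq_mul]
      exact Ideal.mul_mem_right _ _ hf
end

section
/- Set I_ℓ = J : I^{n+1−ℓ} for 1 ≤ ℓ ≤ n and I_{n+1} = J. Then I·I_ℓ ⊆ I_{ℓ+1} for all 1 ≤ ℓ ≤ n, so each quotient I_ℓ/I_{ℓ+1} is a k ≅ R/I-vector space, and: dim_k I_ℓ/I_{ℓ+1} = 1 for 1 ≤ ℓ ≤ n−2 (generated by the class of x^ℓ), dim_k I_{n−1}/I_n = 2 (generated by the classes of x^{n−1} and y), and dim_k I_n/I_{n+1} = 1. (These are the local ranks of the graded pieces L, L², …, L^{n−2}, E', Lⁿ of the module M(Y).) -/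
/-- For ideals `B ⊆ A` of `R`, the image of `A` in `R ⧸ B`, viewed as a
`k`-submodule of `R ⧸ B`; this represents the subquotient `A/B`. -/
noncomputable def gradedPiece (k : Type) [Field k] {R : Type} [CommRing R] [Algebra k R]
    (A B : Ideal R) : Submodule k (R ⧸ B) :=
  Submodule.restrictScalars k (A.map (Ideal.Quotient.mk B))

open MvPowerSeries Finsupp Ideal
namespace Stmt4
variable {k : Type} [Field k] {r : ℕ}


/-- Build a power series from a coefficient function. -/
def mkS (F : (Fin (r+2) →₀ ℕ) → k) : MvPowerSeries (Fin (r+2)) k := F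

@[simp] lemma coeff_mkS (F : (Fin (r+2) →₀ ℕ) → k) (d) :
    MvPowerSeries.coeff (R := k) d (mkS F) = F d := rfl

lemma sub_single_add {d : Fin (r+2) →₀ ℕ} {s : Fin (r+2)} {m : ℕ} (h : m ≤ d s) :
    d - Finsupp.single s m + Finsupp.single s m = d := by
  ext t
  simp only [Finsupp.add_apply, Finsupp.tsub_apply, Finsupp.single_apply]
  by_cases hts : s = t
  · subst hts; simp; omega
  · simp [hts]

lemma coeff_X_mul' (s : Fin (r+2)) (g : MvPowerSeries (Fin (r+2)) k) (d) :
    MvPowerSeries.coeff (R := k) d (X s * g)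
      = if 1 ≤ d s then MvPowerSeries.coeff (R := k) (d - Finsupp.single s 1) g else 0 := by
  rw [show (X s : MvPowerSeries (Fin (r+2)) k) = monomial (R := k) (Finsupp.single s 1) 1 from rfl,
    coeff_monomial_mul]
  simp [Finsupp.single_le_iff]

lemma coeff_Xpow_mul (s : Fin (r+2)) (m : ℕ) (g : MvPowerSeries (Fin (r+2)) k) (d) :
    MvPowerSeries.coeff (R := k) d (X s ^ m * g)
      = if m ≤ d s then MvPowerSeries.coeff (R := k) (d - Finsupp.single s m) g else 0 := by
  rw [X_pow_eq, coeff_monomial_mul]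
  simp [Finsupp.single_le_iff]

lemma coeff_mul_Xpow (s : Fin (r+2)) (m : ℕ) (g : MvPowerSeries (Fin (r+2)) k) (d) :
    MvPowerSeries.coeff (R := k) d (g * X s ^ m)
      = if m ≤ d s then MvPowerSeries.coeff (R := k) (d - Finsupp.single s m) g else 0 := by
  rw [X_pow_eq, coeff_mul_monomial]
  simp [Finsupp.single_le_iff]

/-- convolution at a single-variable monomial, as a range sum -/
lemma coeff_single_mul (s : Fin (r+2)) (m : ℕ) (f g : MvPowerSeries (Fin (r+2)) k) :
    MvPowerSeries.coeff (R := k) (Finsupp.single s m) (f * g)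
      = ∑ i ∈ Finset.range (m+1),
          MvPowerSeries.coeff (R := k) (Finsupp.single s i) f *
          MvPowerSeries.coeff (R := k) (Finsupp.single s (m - i)) g := by
  rw [coeff_mul, Finsupp.antidiagonal_single, Finset.sum_map,
    ← Finset.Nat.sum_antidiagonal_eq_sum_range_succ
      (f := fun i j => MvPowerSeries.coeff (R := k) (Finsupp.single s i) f *
          MvPowerSeries.coeff (R := k) (Finsupp.single s j) g)]
  rfl

/-- split off one variable: `f = X s * q + h` with `h` free of `s`. -/
lemma varSplit (s : Fin (r+2)) (f : MvPowerSeries (Fin (r+2)) k) :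
    ∃ q h : MvPowerSeries (Fin (r+2)) k,
      f = X s * q + h ∧
      (∀ d, MvPowerSeries.coeff (R := k) d q = MvPowerSeries.coeff (R := k) (d + Finsupp.single s 1) f) ∧
      (∀ d : Fin (r+2) →₀ ℕ, d s ≠ 0 → MvPowerSeries.coeff (R := k) d h = 0) ∧
      (∀ d : Fin (r+2) →₀ ℕ, d s = 0 →
        MvPowerSeries.coeff (R := k) d h = MvPowerSeries.coeff (R := k) d f) := by
  refine ⟨mkS (fun d => MvPowerSeries.coeff (R := k) (d + Finsupp.single s 1) f),
    mkS (fun d => if d s = 0 then MvPowerSeries.coeff (R := k) d f else 0), ?_, ?_, ?_, ?_⟩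
  · apply MvPowerSeries.ext; intro d
    rw [map_add, coeff_X_mul']
    by_cases h : 1 ≤ d s
    · rw [if_pos h]
      simp only [coeff_mkS]
      rw [sub_single_add h, if_neg (by omega)]
      ring
    · rw [if_neg h]
      simp only [coeff_mkS]
      rw [if_pos (by omega)]
      ring
  · intro d; rfl
  · intro d hd; simp [hd]
  · intro d hd; simp [hd]

/-- split off a set of variables -/
lemma multiSplit (S : Finset (Fin (r+2))) (f : MvPowerSeries (Fin (r+2)) k) :
    ∃ (g : Fin (r+2) → MvPowerSeries (Fin (r+2)) k) (h : MvPowerSeries (Fin (r+2)) k),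
      f = (∑ s ∈ S, X s * g s) + h ∧
      (∀ d : Fin (r+2) →₀ ℕ, (∃ s ∈ S, d s ≠ 0) → MvPowerSeries.coeff (R := k) d h = 0) ∧
      (∀ d : Fin (r+2) →₀ ℕ, (∀ s ∈ S, d s = 0) →
        MvPowerSeries.coeff (R := k) d h = MvPowerSeries.coeff (R := k) d f) := by
  classical
  induction S using Finset.cons_induction generalizing f with
  | empty => exact ⟨0, f, by simp, by simp, by simp⟩
  | cons a S ha IH =>
    obtain ⟨g, h, hfe, hvan, hagr⟩ := IH f
    obtain ⟨q, h', hh, hq, hvan', hagr'⟩ := varSplit a h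
    refine ⟨Function.update g a q, h', ?_, ?_, ?_⟩
    · rw [Finset.sum_cons]
      have h1 : Function.update g a q a = q := Function.update_self a q g
      have h2 : ∀ s ∈ S, Function.update g a q s = g s := fun s hs =>
        Function.update_of_ne (ne_of_mem_of_not_mem hs ha) q g
      rw [h1, Finset.sum_congr rfl (fun s hs => by rw [h2 s hs])]
      rw [hfe, hh]; ring
    · intro d hd
      obtain ⟨s, hs, hds⟩ := hd
      rcases Finset.mem_cons.1 hs with hs | hs
      · exact hvan' d (hs ▸ hds)
      · by_cases hda : d a = 0
        · rw [hagr' d hda]; exact hvan d ⟨s, hs, hds⟩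
        · exact hvan' d hda
    · intro d hd
      have hda : d a = 0 := hd a (Finset.mem_cons_self a S)
      rw [hagr' d hda, hagr d (fun s hs => hd s (Finset.mem_cons_of_mem hs))]

/-- division for a series supported on pure-x monomials with low coefficients zero -/
lemma pureDiv (t : ℕ) (h : MvPowerSeries (Fin (r+2)) k)
    (Hsupp : ∀ d : Fin (r+2) →₀ ℕ, (∃ s, s ≠ 0 ∧ d s ≠ 0) → MvPowerSeries.coeff (R := k) d h = 0)
    (Hlow : ∀ a < t, MvPowerSeries.coeff (R := k) (Finsupp.single 0 a) h = 0) :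
    ∃ q, h = X 0 ^ t * q ∧
      MvPowerSeries.coeff (R := k) 0 q = MvPowerSeries.coeff (R := k) (Finsupp.single 0 t) h := by
  refine ⟨mkS (fun d => MvPowerSeries.coeff (R := k) (d + Finsupp.single 0 t) h), ?_, by simp⟩
  apply MvPowerSeries.ext; intro d
  rw [coeff_Xpow_mul]
  by_cases hd : t ≤ d 0
  · rw [if_pos hd]; simp only [coeff_mkS]; rw [sub_single_add hd]
  · rw [if_neg hd]
    by_cases hz : ∃ s, s ≠ 0 ∧ d s ≠ 0
    · exact Hsupp d hz
    · push_neg at hz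
      have hds : d = Finsupp.single 0 (d 0) := by
        ext t'
        by_cases ht' : t' = 0
        · subst ht'; simp
        · rw [Finsupp.single_apply, if_neg (by exact fun he => ht' (he.symm)), hz t' ht']
      rw [hds]
      exact Hlow (d 0) (by omega)

-- basic Fin facts
lemma fin01 : (0 : Fin (r+2)) ≠ 1 := by simp [Fin.ext_iff]
lemma zvar_ne0 (i : Fin r) : (i.succ.succ : Fin (r+2)) ≠ 0 := by
  simp [Fin.ext_iff]
lemma zvar_ne1 (i : Fin r) : (i.succ.succ : Fin (r+2)) ≠ 1 := by
  simp [Fin.ext_iff]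
lemma fin_cases' (s : Fin (r+2)) (h0 : s ≠ 0) (h1 : s ≠ 1) : ∃ i : Fin r, s = i.succ.succ := by
  have hv : 2 ≤ s.val := by
    have e0 : s.val ≠ 0 := fun h => h0 (Fin.ext (by simp [h]))
    have e1 : s.val ≠ 1 := fun h => h1 (Fin.ext (by simp [h]))
    omega
  exact ⟨⟨s.val - 2, by omega⟩, Fin.ext (by simp; omega)⟩

variable (k r) in
def zset : Set (MvPowerSeries (Fin (r+2)) k) := Set.range (fun i : Fin r => X i.succ.succ)

variable (k r) in
noncomputable def Kl (ℓ : ℕ) : Ideal (MvPowerSeries (Fin (r+2)) k) :=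
  span ({X 0 ^ ℓ, X 1} ∪ zset k r)

variable (k r) in
noncomputable def KnI (n : ℕ) : Ideal (MvPowerSeries (Fin (r+2)) k) :=
  span ({X 0 ^ n, X 0 * X 1, X 1 ^ 2} ∪ zset k r)

variable (k r) in
noncomputable def Jd (n : ℕ) : Ideal (MvPowerSeries (Fin (r+2)) k) :=
  span ({X 1 ^ 2 + X 0 ^ n, X 0 * X 1} ∪ zset k r)

variable (k r) in
noncomputable def Id0 : Ideal (MvPowerSeries (Fin (r+2)) k) :=
  span ({X 0, X 1} ∪ zset k r)

-- coefficient values at the relevant monomials, for generators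
lemma fin10 : (1 : Fin (r+2)) ≠ 0 := fun h => fin01 h.symm

lemma coeff_sx_Xpow_self (m : ℕ) :
    MvPowerSeries.coeff (R := k) (Finsupp.single (0 : Fin (r+2)) m) (X 0 ^ m) = 1 := by
  rw [MvPowerSeries.coeff_X_pow, if_pos rfl]
lemma coeff_sx_Xpow_ne {a m : ℕ} (h : a ≠ m) :
    MvPowerSeries.coeff (R := k) (Finsupp.single (0 : Fin (r+2)) a) (X 0 ^ m) = 0 := by
  rw [MvPowerSeries.coeff_X_pow, if_neg]
  simp only [Finsupp.single_eq_single_iff]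
  rintro (⟨-, h'⟩ | ⟨h1, h2⟩) <;> omega
lemma coeff_sy_Xpow (b m : ℕ) (hb : b ≠ 0 ∨ m ≠ 0) :
    MvPowerSeries.coeff (R := k) (Finsupp.single (1 : Fin (r+2)) b) (X 0 ^ m) = 0 := by
  rw [MvPowerSeries.coeff_X_pow, if_neg]
  simp only [Finsupp.single_eq_single_iff]
  rintro (⟨h, -⟩ | ⟨h1, h2⟩)
  · exact fin10 h
  · tauto
lemma coeff_sx_Y (a b : ℕ) (hb : b ≠ 0) :
    MvPowerSeries.coeff (R := k) (Finsupp.single (0 : Fin (r+2)) a) (X 1 ^ b) = 0 := by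
  rw [MvPowerSeries.coeff_X_pow, if_neg]
  simp only [Finsupp.single_eq_single_iff]
  rintro (⟨h, -⟩ | ⟨h1, h2⟩)
  · exact fin01 h
  · tauto
lemma coeff_sy_Y_self (b : ℕ) :
    MvPowerSeries.coeff (R := k) (Finsupp.single (1 : Fin (r+2)) b) (X 1 ^ b) = 1 := by
  rw [MvPowerSeries.coeff_X_pow, if_pos rfl]
lemma coeff_sy_Y_ne {a b : ℕ} (h : a ≠ b) :
    MvPowerSeries.coeff (R := k) (Finsupp.single (1 : Fin (r+2)) a) (X 1 ^ b) = 0 := by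
  rw [MvPowerSeries.coeff_X_pow, if_neg]
  simp only [Finsupp.single_eq_single_iff]
  rintro (⟨-, h'⟩ | ⟨h1, h2⟩) <;> omega

lemma xy_eq : (X 0 * X 1 : MvPowerSeries (Fin (r+2)) k)
    = monomial (R := k) (Finsupp.single 0 1 + Finsupp.single 1 1) 1 := by
  rw [X_def, X_def, monomial_mul_monomial, one_mul]

lemma single_ne_xy (s : Fin (r+2)) (m : ℕ) :
    (Finsupp.single s m : Fin (r+2) →₀ ℕ) ≠ Finsupp.single 0 1 + Finsupp.single 1 1 := by
  intro h
  by_cases hs : s = 0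
  · subst hs
    have h1 := DFunLike.congr_fun h 1
    rw [Finsupp.add_apply, Finsupp.single_apply, Finsupp.single_apply, Finsupp.single_apply,
      if_neg fin01, if_neg fin01, if_pos rfl] at h1
    simp at h1
  · have h0 := DFunLike.congr_fun h 0
    rw [Finsupp.add_apply, Finsupp.single_apply, Finsupp.single_apply, Finsupp.single_apply,
      if_neg hs, if_pos rfl, if_neg fin10] at h0
    simp at h0

lemma coeff_s_xy (s : Fin (r+2)) (m : ℕ) :
    MvPowerSeries.coeff (R := k) (Finsupp.single s m) (X 0 * X 1) = 0 := by
  rw [xy_eq, MvPowerSeries.coeff_monomial, if_neg (single_ne_xy s m)]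

lemma coeff_s_z (s : Fin (r+2)) (m : ℕ) (i : Fin r) (hs : s = 0 ∨ s = 1) :
    MvPowerSeries.coeff (R := k) (Finsupp.single s m)
      (X i.succ.succ : MvPowerSeries (Fin (r+2)) k) = 0 := by
  rw [MvPowerSeries.coeff_X, if_neg]
  intro h
  have hc := DFunLike.congr_fun h i.succ.succ
  rw [Finsupp.single_apply, Finsupp.single_apply, if_pos rfl] at hc
  rcases hs with hs | hs <;> subst hs
  · rw [if_neg (fun h => zvar_ne0 i h.symm)] at hc; simp at hc
  · rw [if_neg (fun h => zvar_ne1 i h.symm)] at hc; simp at hc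

lemma mem_union_cases {g : MvPowerSeries (Fin (r+2)) k} {A : Set (MvPowerSeries (Fin (r+2)) k)}
    (hg : g ∈ A ∪ zset k r) (hA : g ∈ A → True) : True := trivial

lemma memKl_mp {ℓ : ℕ} {f : MvPowerSeries (Fin (r+2)) k} (hf : f ∈ Kl k r ℓ) :
    ∀ a < ℓ, MvPowerSeries.coeff (R := k) (Finsupp.single 0 a) f = 0 := by
  induction hf using Submodule.span_induction with
  | mem g hg =>
    simp only [Set.mem_union, Set.mem_insert_iff, Set.mem_singleton_iff, zset,
      Set.mem_range] at hg
    intro a ha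
    rcases hg with (rfl | rfl) | ⟨i, rfl⟩
    · exact coeff_sx_Xpow_ne (by omega)
    · simpa using coeff_sx_Y (k := k) (r := r) a 1 one_ne_zero
    · exact coeff_s_z 0 a i (Or.inl rfl)
  | zero => simp
  | add x y hx hy ihx ihy => intro a ha; rw [map_add, ihx a ha, ihy a ha, add_zero]
  | smul c x hx ih =>
    intro a ha
    rw [smul_eq_mul, coeff_single_mul]
    refine Finset.sum_eq_zero fun i hi => ?_
    rw [ih (a - i) (by omega), mul_zero]

lemma memKn_mp {n : ℕ} (hn : 0 < n) {f : MvPowerSeries (Fin (r+2)) k} (hf : f ∈ KnI k r n) :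
    (∀ a < n, MvPowerSeries.coeff (R := k) (Finsupp.single 0 a) f = 0) ∧
      MvPowerSeries.coeff (R := k) (Finsupp.single 1 1) f = 0 := by
  induction hf using Submodule.span_induction with
  | mem g hg =>
    simp only [Set.mem_union, Set.mem_insert_iff, Set.mem_singleton_iff, zset,
      Set.mem_range] at hg
    rcases hg with (rfl | rfl | rfl) | ⟨i, rfl⟩
    · exact ⟨fun a ha => coeff_sx_Xpow_ne (by omega),
        coeff_sy_Xpow 1 n (Or.inl one_ne_zero)⟩
    · exact ⟨fun a ha => coeff_s_xy _ _, coeff_s_xy _ _⟩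
    · exact ⟨fun a ha => coeff_sx_Y a 2 two_ne_zero, coeff_sy_Y_ne (by omega)⟩
    · exact ⟨fun a ha => coeff_s_z 0 a i (Or.inl rfl), coeff_s_z 1 1 i (Or.inr rfl)⟩
  | zero => simp
  | add x y hx hy ihx ihy =>
    exact ⟨fun a ha => by rw [map_add, ihx.1 a ha, ihy.1 a ha, add_zero],
      by rw [map_add, ihx.2, ihy.2, add_zero]⟩
  | smul c x hx ih =>
    constructor
    · intro a ha
      rw [smul_eq_mul, coeff_single_mul]
      refine Finset.sum_eq_zero fun i hi => ?_
      rw [ih.1 (a - i) (by omega), mul_zero]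
    · rw [smul_eq_mul, coeff_single_mul]
      have h0 : MvPowerSeries.coeff (R := k) (Finsupp.single (1 : Fin (r+2)) 0) x = 0 := by
        rw [Finsupp.single_zero, ← Finsupp.single_zero (0 : Fin (r+2))]
        exact ih.1 0 hn
      have h0' : (constantCoeff (σ := Fin (r+2)) (R := k)) x = 0 := by
        have := ih.1 0 hn
        rwa [Finsupp.single_zero, MvPowerSeries.coeff_zero_eq_constantCoeff] at this
      simp [Finset.sum_range_succ, ih.2, h0, h0']

lemma memJd_mp {n : ℕ} (hn : 0 < n) {f : MvPowerSeries (Fin (r+2)) k} (hf : f ∈ Jd k r n) :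
    (∀ a < n, MvPowerSeries.coeff (R := k) (Finsupp.single 0 a) f = 0) ∧
      MvPowerSeries.coeff (R := k) (Finsupp.single 1 1) f = 0 ∧
      MvPowerSeries.coeff (R := k) (Finsupp.single 0 n) f
        = MvPowerSeries.coeff (R := k) (Finsupp.single 1 2) f := by
  induction hf using Submodule.span_induction with
  | mem g hg =>
    simp only [Set.mem_union, Set.mem_insert_iff, Set.mem_singleton_iff, zset,
      Set.mem_range] at hg
    rcases hg with (rfl | rfl) | ⟨i, rfl⟩
    · refine ⟨fun a ha => ?_, ?_, ?_⟩
      · rw [map_add, coeff_sx_Y a 2 two_ne_zero, coeff_sx_Xpow_ne (by omega), add_zero]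
      · rw [map_add, coeff_sy_Y_ne (by omega), coeff_sy_Xpow 1 n (Or.inl one_ne_zero), add_zero]
      · rw [map_add, map_add, coeff_sx_Y n 2 two_ne_zero, coeff_sx_Xpow_self,
          coeff_sy_Y_self, coeff_sy_Xpow 2 n (Or.inl two_ne_zero), zero_add, add_zero]
    · exact ⟨fun a ha => coeff_s_xy _ _, coeff_s_xy _ _, by rw [coeff_s_xy, coeff_s_xy]⟩
    · exact ⟨fun a ha => coeff_s_z 0 a i (Or.inl rfl), coeff_s_z 1 1 i (Or.inr rfl),
        by rw [coeff_s_z 0 n i (Or.inl rfl), coeff_s_z 1 2 i (Or.inr rfl)]⟩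
  | zero => simp
  | add x y hx hy ihx ihy =>
    exact ⟨fun a ha => by rw [map_add, ihx.1 a ha, ihy.1 a ha, add_zero],
      by rw [map_add, ihx.2.1, ihy.2.1, add_zero],
      by rw [map_add, map_add, ihx.2.2, ihy.2.2]⟩
  | smul c x hx ih =>
    have h0 : MvPowerSeries.coeff (R := k) (Finsupp.single (1 : Fin (r+2)) 0) x = 0 := by
      rw [Finsupp.single_zero, ← Finsupp.single_zero (0 : Fin (r+2))]
      exact ih.1 0 hn
    refine ⟨fun a ha => ?_, ?_, ?_⟩
    · rw [smul_eq_mul, coeff_single_mul]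
      refine Finset.sum_eq_zero fun i hi => ?_
      rw [ih.1 (a - i) (by omega), mul_zero]
    · rw [smul_eq_mul, coeff_single_mul]
      have h0' : (constantCoeff (σ := Fin (r+2)) (R := k)) x = 0 := by
        have := ih.1 0 hn
        rwa [Finsupp.single_zero, MvPowerSeries.coeff_zero_eq_constantCoeff] at this
      simp [Finset.sum_range_succ, ih.2.1, h0, h0']
    · rw [show (c • x : MvPowerSeries (Fin (r+2)) k) = c * x from rfl,
        coeff_single_mul, coeff_single_mul]
      have hL : ∑ i ∈ Finset.range (n+1),
          MvPowerSeries.coeff (R := k) (Finsupp.single (0 : Fin (r+2)) i) c *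
          MvPowerSeries.coeff (R := k) (Finsupp.single (0 : Fin (r+2)) (n - i)) x
          = MvPowerSeries.coeff (R := k) (Finsupp.single (0 : Fin (r+2)) 0) c *
            MvPowerSeries.coeff (R := k) (Finsupp.single (0 : Fin (r+2)) n) x := by
        refine Finset.sum_eq_single_of_mem 0 (Finset.mem_range.2 (by omega)) fun i hi hne => ?_
        rw [ih.1 (n - i) (by rw [Finset.mem_range] at hi; omega), mul_zero]
      rw [hL]
      simp only [Finset.sum_range_succ, Finset.sum_range_zero, zero_add, Nat.sub_self,
        Nat.sub_zero]
      rw [ih.2.1, h0, ih.2.2]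
      have e1 : (Finsupp.single (1 : Fin (r+2)) 0) = (Finsupp.single (0 : Fin (r+2)) 0) := by
        rw [Finsupp.single_zero, Finsupp.single_zero]
      rw [e1]
      ring


-- generator membership helpers
lemma xpow_mem_Kl (ℓ : ℕ) : (X 0 ^ ℓ : MvPowerSeries (Fin (r+2)) k) ∈ Kl k r ℓ :=
  subset_span (Or.inl (Set.mem_insert _ _))
lemma y_mem_Kl (ℓ : ℕ) : (X 1 : MvPowerSeries (Fin (r+2)) k) ∈ Kl k r ℓ :=
  subset_span (Or.inl (Set.mem_insert_iff.2 (Or.inr rfl)))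
lemma z_mem_Kl (ℓ : ℕ) (i : Fin r) : (X i.succ.succ : MvPowerSeries (Fin (r+2)) k) ∈ Kl k r ℓ :=
  subset_span (Or.inr ⟨i, rfl⟩)
lemma xn_mem_Kn (n : ℕ) : (X 0 ^ n : MvPowerSeries (Fin (r+2)) k) ∈ KnI k r n :=
  subset_span (Or.inl (Set.mem_insert _ _))
lemma xy_mem_Kn (n : ℕ) : (X 0 * X 1 : MvPowerSeries (Fin (r+2)) k) ∈ KnI k r n :=
  subset_span (Or.inl (Set.mem_insert_iff.2 (Or.inr (Set.mem_insert _ _))))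
lemma y2_mem_Kn (n : ℕ) : (X 1 ^ 2 : MvPowerSeries (Fin (r+2)) k) ∈ KnI k r n :=
  subset_span (Or.inl (Set.mem_insert_iff.2 (Or.inr (Set.mem_insert_iff.2 (Or.inr rfl)))))
lemma z_mem_Kn (n : ℕ) (i : Fin r) : (X i.succ.succ : MvPowerSeries (Fin (r+2)) k) ∈ KnI k r n :=
  subset_span (Or.inr ⟨i, rfl⟩)
lemma g1_mem_Jd (n : ℕ) : (X 1 ^ 2 + X 0 ^ n : MvPowerSeries (Fin (r+2)) k) ∈ Jd k r n :=
  subset_span (Or.inl (Set.mem_insert _ _))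
lemma xy_mem_Jd (n : ℕ) : (X 0 * X 1 : MvPowerSeries (Fin (r+2)) k) ∈ Jd k r n :=
  subset_span (Or.inl (Set.mem_insert_iff.2 (Or.inr rfl)))
lemma z_mem_Jd (n : ℕ) (i : Fin r) : (X i.succ.succ : MvPowerSeries (Fin (r+2)) k) ∈ Jd k r n :=
  subset_span (Or.inr ⟨i, rfl⟩)
lemma X_mem_Kl {s : Fin (r+2)} (hs : s ≠ 0) (ℓ : ℕ) :
    (X s : MvPowerSeries (Fin (r+2)) k) ∈ Kl k r ℓ := by
  by_cases h1 : s = 1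
  · subst h1; exact y_mem_Kl ℓ
  · obtain ⟨i, rfl⟩ := fin_cases' s hs h1; exact z_mem_Kl ℓ i

lemma mul_le_pairs {S T : Set (MvPowerSeries (Fin (r+2)) k)}
    {M : Ideal (MvPowerSeries (Fin (r+2)) k)}
    (h : ∀ s ∈ S, ∀ t ∈ T, s * t ∈ M) : span S * span T ≤ M := by
  rw [Ideal.span_mul_span']
  exact span_le.2 (Set.mul_subset_iff.2 h)

-- constructions (reverse directions)
lemma memKl_mpr {ℓ : ℕ} {f : MvPowerSeries (Fin (r+2)) k}
    (H : ∀ a < ℓ, MvPowerSeries.coeff (R := k) (Finsupp.single 0 a) f = 0) : f ∈ Kl k r ℓ := by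
  classical
  obtain ⟨g, h, hfe, hvan, hagr⟩ :=
    multiSplit (Finset.univ.filter (· ≠ (0 : Fin (r+2)))) f
  have hsupp : ∀ d : Fin (r+2) →₀ ℕ, (∃ s, s ≠ 0 ∧ d s ≠ 0) →
      MvPowerSeries.coeff (R := k) d h = 0 := by
    rintro d ⟨s, hs, hds⟩
    exact hvan d ⟨s, by simp [hs], hds⟩
  have hlow : ∀ a < ℓ, MvPowerSeries.coeff (R := k) (Finsupp.single 0 a) h = 0 := by
    intro a ha
    rw [hagr _ (fun s hs => by
      rw [Finsupp.single_apply, if_neg]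
      simp only [Finset.mem_filter, Finset.mem_univ, true_and] at hs
      exact fun he => hs he.symm)]
    exact H a ha
  obtain ⟨q, hq, -⟩ := pureDiv ℓ h hsupp hlow
  rw [hfe, hq]
  refine add_mem (Submodule.sum_mem _ fun s hs => ?_)
    (Ideal.mul_mem_right q _ (xpow_mem_Kl ℓ))
  have hs' : s ≠ 0 := by simpa using hs
  exact Ideal.mul_mem_right (g s) _ (X_mem_Kl hs' ℓ)

lemma single_y_apply_eq_zero {s : Fin (r+2)} (hs1 : s ≠ 1) (m : ℕ) :
    (Finsupp.single (1 : Fin (r+2)) m) s = 0 := by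
  rw [Finsupp.single_apply, if_neg (fun he => hs1 he.symm)]
lemma single_x_apply_eq_zero {s : Fin (r+2)} (hs0 : s ≠ 0) (m : ℕ) :
    (Finsupp.single (0 : Fin (r+2)) m) s = 0 := by
  rw [Finsupp.single_apply, if_neg (fun he => hs0 he.symm)]

lemma memKn_mpr {n : ℕ} {f : MvPowerSeries (Fin (r+2)) k}
    (Hx : ∀ a < n, MvPowerSeries.coeff (R := k) (Finsupp.single 0 a) f = 0)
    (Hy : MvPowerSeries.coeff (R := k) (Finsupp.single 1 1) f = 0) : f ∈ KnI k r n := by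
  classical
  obtain ⟨g, h, hfe, hvan, hagr⟩ :=
    multiSplit (Finset.univ.filter (fun s => s ≠ (0 : Fin (r+2)) ∧ s ≠ 1)) f
  obtain ⟨q, h0, hh, hq, hvan0, hagr0⟩ := varSplit 1 h
  obtain ⟨q2, w, hqe, hq2, hvanw, hagrw⟩ := varSplit 1 q
  have hagr' : ∀ d : Fin (r+2) →₀ ℕ, (∀ s : Fin (r+2), s ≠ 0 → s ≠ 1 → d s = 0) →
      MvPowerSeries.coeff (R := k) d h = MvPowerSeries.coeff (R := k) d f := fun d hd =>
    hagr d (fun s hs => by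
      simp only [Finset.mem_filter, Finset.mem_univ, true_and] at hs
      exact hd s hs.1 hs.2)
  have hsupp0 : ∀ d : Fin (r+2) →₀ ℕ, (∃ s, s ≠ 0 ∧ d s ≠ 0) →
      MvPowerSeries.coeff (R := k) d h0 = 0 := by
    rintro d ⟨s, hs, hds⟩
    by_cases hd1 : d 1 = 0
    · rw [hagr0 d hd1]
      have hs1 : s ≠ 1 := fun he => hds (he ▸ hd1)
      exact hvan d ⟨s, by simp [hs, hs1], hds⟩
    · exact hvan0 d hd1
  have hlow0 : ∀ a < n, MvPowerSeries.coeff (R := k) (Finsupp.single 0 a) h0 = 0 := by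
    intro a ha
    rw [hagr0 _ (single_x_apply_eq_zero fin10 a),
      hagr' _ (fun s hs0 hs1 => single_x_apply_eq_zero hs0 a)]
    exact Hx a ha
  obtain ⟨p0, hp0, -⟩ := pureDiv n h0 hsupp0 hlow0
  have hw0 : MvPowerSeries.coeff (R := k) 0 w = 0 := by
    rw [hagrw 0 rfl, hq 0, zero_add,
      hagr' _ (fun s hs0 hs1 => single_y_apply_eq_zero hs1 1)]
    exact Hy
  have hwI : w ∈ Kl k r 1 := memKl_mpr (fun a ha => by
    have : a = 0 := by omega
    subst this
    rwa [Finsupp.single_zero])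
  have yI_le : span {(X 1 : MvPowerSeries (Fin (r+2)) k)} * Kl k r 1 ≤ KnI k r n := by
    apply mul_le_pairs
    rintro s (rfl : s = X 1) t ht
    rcases ht with (rfl | rfl) | ⟨i, rfl⟩
    · rw [show (X 1 * X 0 ^ 1 : MvPowerSeries (Fin (r+2)) k) = X 0 * X 1 by ring]
      exact xy_mem_Kn n
    · rw [show (X 1 * X 1 : MvPowerSeries (Fin (r+2)) k) = X 1 ^ 2 by ring]
      exact y2_mem_Kn n
    · exact Ideal.mul_mem_left _ _ (z_mem_Kn n i)
  rw [hfe, hh, hqe, hp0]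
  rw [show (X 1 * (X 1 * q2 + w) : MvPowerSeries (Fin (r+2)) k)
      = X 1 ^ 2 * q2 + X 1 * w by ring]
  refine add_mem ?_ (add_mem (add_mem (Ideal.mul_mem_right q2 _ (y2_mem_Kn n))
      (yI_le (Ideal.mul_mem_mul (Ideal.mem_span_singleton_self _) hwI)))
    (Ideal.mul_mem_right p0 _ (xn_mem_Kn n)))
  refine Submodule.sum_mem _ fun s hs => ?_
  simp only [Finset.mem_filter, Finset.mem_univ, true_and] at hs
  obtain ⟨i, rfl⟩ := fin_cases' s hs.1 hs.2
  exact Ideal.mul_mem_right _ _ (z_mem_Kn n i)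

lemma memJd_mpr {n : ℕ} (hn : 0 < n) {f : MvPowerSeries (Fin (r+2)) k}
    (Hx : ∀ a < n, MvPowerSeries.coeff (R := k) (Finsupp.single 0 a) f = 0)
    (Hy : MvPowerSeries.coeff (R := k) (Finsupp.single 1 1) f = 0)
    (Hxy : MvPowerSeries.coeff (R := k) (Finsupp.single 0 n) f
      = MvPowerSeries.coeff (R := k) (Finsupp.single 1 2) f) : f ∈ Jd k r n := by
  classical
  obtain ⟨g, h, hfe, hvan, hagr⟩ :=
    multiSplit (Finset.univ.filter (fun s => s ≠ (0 : Fin (r+2)) ∧ s ≠ 1)) f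
  obtain ⟨q, h0, hh, hq, hvan0, hagr0⟩ := varSplit 1 h
  obtain ⟨q2, w, hqe, hq2, hvanw, hagrw⟩ := varSplit 1 q
  have hagr' : ∀ d : Fin (r+2) →₀ ℕ, (∀ s : Fin (r+2), s ≠ 0 → s ≠ 1 → d s = 0) →
      MvPowerSeries.coeff (R := k) d h = MvPowerSeries.coeff (R := k) d f := fun d hd =>
    hagr d (fun s hs => by
      simp only [Finset.mem_filter, Finset.mem_univ, true_and] at hs
      exact hd s hs.1 hs.2)
  have hsupp0 : ∀ d : Fin (r+2) →₀ ℕ, (∃ s, s ≠ 0 ∧ d s ≠ 0) →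
      MvPowerSeries.coeff (R := k) d h0 = 0 := by
    rintro d ⟨s, hs, hds⟩
    by_cases hd1 : d 1 = 0
    · rw [hagr0 d hd1]
      have hs1 : s ≠ 1 := fun he => hds (he ▸ hd1)
      exact hvan d ⟨s, by simp [hs, hs1], hds⟩
    · exact hvan0 d hd1
  have hlow0 : ∀ a < n, MvPowerSeries.coeff (R := k) (Finsupp.single 0 a) h0 = 0 := by
    intro a ha
    rw [hagr0 _ (single_x_apply_eq_zero fin10 a),
      hagr' _ (fun s hs0 hs1 => single_x_apply_eq_zero hs0 a)]
    exact Hx a ha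
  obtain ⟨p0, hp0, hp0c⟩ := pureDiv n h0 hsupp0 hlow0
  -- w : the y-degree-one slice; w = X 0 ^ 1 * w1
  have hsuppw : ∀ d : Fin (r+2) →₀ ℕ, (∃ s, s ≠ 0 ∧ d s ≠ 0) →
      MvPowerSeries.coeff (R := k) d w = 0 := by
    rintro d ⟨s, hs, hds⟩
    by_cases hd1 : d 1 = 0
    · rw [hagrw d hd1, hq d]
      have hs1 : s ≠ 1 := fun he => hds (he ▸ hd1)
      refine hvan _ ⟨s, by simp [hs, hs1], ?_⟩
      rw [Finsupp.add_apply, single_y_apply_eq_zero hs1 1, add_zero]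
      exact hds
    · exact hvanw d hd1
  have hloww : ∀ a < 1, MvPowerSeries.coeff (R := k) (Finsupp.single 0 a) w = 0 := by
    intro a ha
    have ha0 : a = 0 := by omega
    subst ha0
    rw [Finsupp.single_zero, hagrw 0 rfl, hq 0, zero_add,
      hagr' _ (fun s hs0 hs1 => single_y_apply_eq_zero hs1 1)]
    exact Hy
  obtain ⟨w1, hw1, -⟩ := pureDiv 1 w hsuppw hloww
  -- constant coefficients of p0 and q2
  have hp0c' : MvPowerSeries.coeff (R := k) 0 p0 = MvPowerSeries.coeff (R := k) (Finsupp.single 0 n) f := by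
    rw [hp0c, hagr0 _ (single_x_apply_eq_zero fin10 n),
      hagr' _ (fun s hs0 hs1 => single_x_apply_eq_zero hs0 n)]
  have hq2c : MvPowerSeries.coeff (R := k) 0 q2 = MvPowerSeries.coeff (R := k) (Finsupp.single 1 2) f := by
    rw [hq2 0, zero_add, hq _, ← Finsupp.single_add, show (1 + 1 : ℕ) = 2 from rfl,
      hagr' _ (fun s hs0 hs1 => single_y_apply_eq_zero hs1 2)]
  have hdiff : (p0 - q2) ∈ Kl k r 1 := by
    refine memKl_mpr (fun a ha => ?_)
    have ha0 : a = 0 := by omega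
    subst ha0
    rw [Finsupp.single_zero, map_sub, hp0c', hq2c, Hxy, sub_self]
  have xnI_le : span {(X 0 ^ n : MvPowerSeries (Fin (r+2)) k)} * Kl k r 1 ≤ Jd k r n := by
    apply mul_le_pairs
    rintro s (rfl : s = X 0 ^ n) t ht
    rcases ht with (rfl | rfl) | ⟨i, rfl⟩
    · rw [show (X 0 ^ n * X 0 ^ 1 : MvPowerSeries (Fin (r+2)) k)
          = X 0 * (X 1 ^ 2 + X 0 ^ n) - (X 0 * X 1) * X 1 by ring]
      exact sub_mem (Ideal.mul_mem_left _ _ (g1_mem_Jd n))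
        (Ideal.mul_mem_right _ _ (xy_mem_Jd n))
    · obtain ⟨m, hm⟩ : ∃ m, n = m + 1 := ⟨n - 1, by omega⟩
      subst hm
      rw [show (X 0 ^ (m + 1) * X 1 : MvPowerSeries (Fin (r+2)) k)
          = (X 0 * X 1) * X 0 ^ m by ring]
      exact Ideal.mul_mem_right _ _ (xy_mem_Jd _)
    · exact Ideal.mul_mem_left _ _ (z_mem_Jd n i)
  rw [hfe, hh, hqe, hp0, hw1]
  rw [show (X 1 * (X 1 * q2 + X 0 ^ 1 * w1) + X 0 ^ n * p0
        : MvPowerSeries (Fin (r+2)) k)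
      = (X 1 ^ 2 + X 0 ^ n) * q2 + (X 0 * X 1) * w1 + X 0 ^ n * (p0 - q2) by ring]
  refine add_mem ?_ (add_mem (add_mem (Ideal.mul_mem_right q2 _ (g1_mem_Jd n))
      (Ideal.mul_mem_right w1 _ (xy_mem_Jd n)))
    (xnI_le (Ideal.mul_mem_mul (Ideal.mem_span_singleton_self _) hdiff)))
  refine Submodule.sum_mem _ fun s hs => ?_
  simp only [Finset.mem_filter, Finset.mem_univ, true_and] at hs
  obtain ⟨i, rfl⟩ := fin_cases' s hs.1 hs.2
  exact Ideal.mul_mem_right _ _ (z_mem_Jd n i)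

-- ideal products
lemma I_eq_K1 : Id0 k r = Kl k r 1 := by
  unfold Id0 Kl; rw [pow_one]

lemma x_mem_I : (X 0 : MvPowerSeries (Fin (r+2)) k) ∈ Id0 k r :=
  subset_span (Or.inl (Set.mem_insert _ _))
lemma y_mem_I : (X 1 : MvPowerSeries (Fin (r+2)) k) ∈ Id0 k r :=
  subset_span (Or.inl (Set.mem_insert_iff.2 (Or.inr rfl)))

lemma I_mul_Kl_le {ℓ : ℕ} : Id0 k r * Kl k r ℓ ≤ Kl k r (ℓ + 1) := by
  apply mul_le_pairs
  rintro s hs t ht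
  rcases hs with (rfl | rfl) | ⟨i, rfl⟩
  · rcases ht with (rfl | rfl) | ⟨j, rfl⟩
    · rw [show (X 0 * X 0 ^ ℓ : MvPowerSeries (Fin (r+2)) k) = X 0 ^ (ℓ + 1) by ring]
      exact xpow_mem_Kl _
    · exact Ideal.mul_mem_left _ _ (y_mem_Kl _)
    · exact Ideal.mul_mem_left _ _ (z_mem_Kl _ j)
  · exact Ideal.mul_mem_right _ _ (y_mem_Kl _)
  · exact Ideal.mul_mem_right _ _ (z_mem_Kl _ i)

lemma I_mul_Kn1_le {n : ℕ} (hn : 3 ≤ n) :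
    Id0 k r * Kl k r (n - 1) ≤ KnI k r n := by
  apply mul_le_pairs
  rintro s hs t ht
  rcases hs with (rfl | rfl) | ⟨i, rfl⟩
  · rcases ht with (rfl | rfl) | ⟨j, rfl⟩
    · rw [show (X 0 * X 0 ^ (n - 1) : MvPowerSeries (Fin (r+2)) k) = X 0 ^ (n - 1 + 1) by ring,
        Nat.sub_add_cancel (by omega)]
      exact xn_mem_Kn _
    · rw [show (X 0 * X 1 : MvPowerSeries (Fin (r+2)) k) = X 0 * X 1 from rfl]
      exact xy_mem_Kn _
    · exact Ideal.mul_mem_left _ _ (z_mem_Kn _ j)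
  · rcases ht with (rfl | rfl) | ⟨j, rfl⟩
    · obtain ⟨m, hm⟩ : ∃ m, n - 1 = m + 1 := ⟨n - 2, by omega⟩
      rw [hm, show (X 1 * X 0 ^ (m + 1) : MvPowerSeries (Fin (r+2)) k)
          = (X 0 * X 1) * X 0 ^ m by ring]
      exact Ideal.mul_mem_right _ _ (xy_mem_Kn _)
    · rw [show (X 1 * X 1 : MvPowerSeries (Fin (r+2)) k) = X 1 ^ 2 by ring]
      exact y2_mem_Kn _
    · exact Ideal.mul_mem_left _ _ (z_mem_Kn _ j)
  · exact Ideal.mul_mem_right _ _ (z_mem_Kn _ i)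

lemma I_mul_Kn_le {n : ℕ} (hn : 3 ≤ n) : Id0 k r * KnI k r n ≤ Jd k r n := by
  apply mul_le_pairs
  rintro s hs t ht
  obtain ⟨m, hm⟩ : ∃ m, n = m + 1 := ⟨n - 1, by omega⟩
  rcases hs with (rfl | rfl) | ⟨i, rfl⟩
  · rcases ht with (rfl | rfl | rfl) | ⟨j, rfl⟩
    · rw [show (X 0 * X 0 ^ n : MvPowerSeries (Fin (r+2)) k)
          = X 0 * (X 1 ^ 2 + X 0 ^ n) - (X 0 * X 1) * X 1 by ring]
      exact sub_mem (Ideal.mul_mem_left _ _ (g1_mem_Jd n))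
        (Ideal.mul_mem_right _ _ (xy_mem_Jd n))
    · exact Ideal.mul_mem_left _ _ (xy_mem_Jd n)
    · rw [show (X 0 * X 1 ^ 2 : MvPowerSeries (Fin (r+2)) k) = (X 0 * X 1) * X 1 by ring]
      exact Ideal.mul_mem_right _ _ (xy_mem_Jd n)
    · exact Ideal.mul_mem_left _ _ (z_mem_Jd n j)
  · rcases ht with (rfl | rfl | rfl) | ⟨j, rfl⟩
    · subst hm
      rw [show (X 1 * X 0 ^ (m + 1) : MvPowerSeries (Fin (r+2)) k)
          = (X 0 * X 1) * X 0 ^ m by ring]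
      exact Ideal.mul_mem_right _ _ (xy_mem_Jd _)
    · exact Ideal.mul_mem_left _ _ (xy_mem_Jd n)
    · subst hm
      rw [show (X 1 * X 1 ^ 2 : MvPowerSeries (Fin (r+2)) k)
          = X 1 * (X 1 ^ 2 + X 0 ^ (m + 1)) - (X 0 * X 1) * X 0 ^ m by ring]
      exact sub_mem (Ideal.mul_mem_left _ _ (g1_mem_Jd _))
        (Ideal.mul_mem_right _ _ (xy_mem_Jd _))
    · exact Ideal.mul_mem_left _ _ (z_mem_Jd n j)
  · exact Ideal.mul_mem_right _ _ (z_mem_Jd n i)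

lemma Kn_mul_I_le {n : ℕ} (hn : 3 ≤ n) : KnI k r n * Id0 k r ≤ Jd k r n := by
  rw [mul_comm]; exact I_mul_Kn_le hn

lemma chain {n : ℕ} (hn : 3 ≤ n) :
    ∀ t ℓ : ℕ, 1 ≤ ℓ → ℓ + t = n - 1 → Kl k r ℓ * Id0 k r ^ (n + 1 - ℓ) ≤ Jd k r n := by
  intro t
  induction t with
  | zero =>
    intro ℓ h1 h2
    have hℓ : ℓ = n - 1 := by omega
    subst hℓ
    have he : n + 1 - (n - 1) = 2 := by omega
    rw [he, show Kl k r (n-1) * Id0 k r ^ 2 = (Id0 k r * Kl k r (n-1)) * Id0 k r by ring]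
    exact le_trans (Ideal.mul_mono (I_mul_Kn1_le hn) le_rfl) (Kn_mul_I_le hn)
  | succ t IH =>
    intro ℓ h1 h2
    have he : n + 1 - ℓ = (n - ℓ) + 1 := by omega
    have he2 : n + 1 - (ℓ + 1) = n - ℓ := by omega
    rw [he, pow_succ, show Kl k r ℓ * (Id0 k r ^ (n - ℓ) * Id0 k r)
        = (Id0 k r * Kl k r ℓ) * Id0 k r ^ (n - ℓ) by ring]
    refine le_trans (Ideal.mul_mono I_mul_Kl_le le_rfl) ?_
    have := IH (ℓ + 1) (by omega) (by omega)
    rwa [he2] at this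

-- colon identifications
lemma coeff_shift_x {m : ℕ} (f : MvPowerSeries (Fin (r+2)) k) (b : ℕ) :
    MvPowerSeries.coeff (R := k) (Finsupp.single 0 (b + m)) (f * X 0 ^ m)
      = MvPowerSeries.coeff (R := k) (Finsupp.single 0 b) f := by
  rw [coeff_mul_Xpow, if_pos (by rw [Finsupp.single_eq_same]; omega)]
  rw [← Finsupp.single_tsub, Nat.add_sub_cancel]

lemma colon_le_Kl {n ℓ : ℕ} (hn : 3 ≤ n) (h1 : 1 ≤ ℓ) (h2 : ℓ ≤ n - 1) :
    (Jd k r n).colon ((Id0 k r ^ (n + 1 - ℓ) : Ideal (MvPowerSeries (Fin (r+2)) k)) : Set (MvPowerSeries (Fin (r+2)) k)) ≤ Kl k r ℓ := by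
  intro f hf
  set m := n + 1 - ℓ with hm
  have hfx : f * X 0 ^ m ∈ Jd k r n := by
    have := Submodule.mem_colon.1 hf _ (Ideal.pow_mem_pow (x_mem_I (k:=k) (r:=r)) m)
    rwa [smul_eq_mul] at this
  obtain ⟨H1, H2, H3⟩ := memJd_mp (by omega) hfx
  refine memKl_mpr (fun a ha => ?_)
  rw [← coeff_shift_x f a]
  rcases lt_or_eq_of_le (show a + m ≤ n by omega) with h | h
  · exact H1 (a + m) h
  · rw [h, H3, coeff_mul_Xpow,
      if_neg (by rw [single_y_apply_eq_zero fin01 2]; omega)]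

lemma colon_le_Kn {n : ℕ} (hn : 3 ≤ n) :
    (Jd k r n).colon ((Id0 k r ^ 1 : Ideal (MvPowerSeries (Fin (r+2)) k)) : Set (MvPowerSeries (Fin (r+2)) k)) ≤ KnI k r n := by
  intro f hf
  have hfx : f * X 0 ^ 1 ∈ Jd k r n := by
    have := Submodule.mem_colon.1 hf _
      (by rw [pow_one]; exact x_mem_I (k:=k) (r:=r))
    rwa [smul_eq_mul, ← pow_one (X 0 : MvPowerSeries (Fin (r+2)) k)] at this
  have hfy : f * X 1 ^ 1 ∈ Jd k r n := by
    have hy1 : (X 1 : MvPowerSeries (Fin (r+2)) k) ∈ Id0 k r ^ 1 := by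
      rw [pow_one]; exact y_mem_I
    have := Submodule.mem_colon.1 hf _ hy1
    rwa [smul_eq_mul, ← pow_one (X 1 : MvPowerSeries (Fin (r+2)) k)] at this
  obtain ⟨H1, H2, H3⟩ := memJd_mp (by omega) hfx
  obtain ⟨G1, G2, G3⟩ := memJd_mp (by omega) hfy
  refine memKn_mpr (fun a ha => ?_) ?_
  · rw [← coeff_shift_x f a]
    rcases lt_or_eq_of_le (show a + 1 ≤ n by omega) with h | h
    · exact H1 (a + 1) h
    · rw [h, H3, coeff_mul_Xpow,
        if_neg (by rw [single_y_apply_eq_zero fin01 2]; omega)]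
  · have hy2 : MvPowerSeries.coeff (R := k) (Finsupp.single 1 2) (f * X 1 ^ 1)
        = MvPowerSeries.coeff (R := k) (Finsupp.single 1 1) f := by
      rw [coeff_mul_Xpow, if_pos (by rw [Finsupp.single_eq_same]; omega)]
      congr 1
      rw [← Finsupp.single_tsub]
    rw [← hy2, ← G3, coeff_mul_Xpow,
      if_neg (by rw [single_x_apply_eq_zero fin10 n]; omega)]

lemma Kl_le_colon {n ℓ : ℕ} (hn : 3 ≤ n) (h1 : 1 ≤ ℓ) (h2 : ℓ ≤ n - 1) :
    Kl k r ℓ ≤ (Jd k r n).colon ((Id0 k r ^ (n + 1 - ℓ) : Ideal (MvPowerSeries (Fin (r+2)) k)) : Set (MvPowerSeries (Fin (r+2)) k)) := by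
  intro f hf
  rw [Submodule.mem_colon]
  intro p hp
  rw [smul_eq_mul]
  exact chain hn (n - 1 - ℓ) ℓ h1 (by omega) (Ideal.mul_mem_mul hf hp)

lemma Kn_le_colon {n : ℕ} (hn : 3 ≤ n) :
    KnI k r n ≤ (Jd k r n).colon ((Id0 k r ^ 1 : Ideal (MvPowerSeries (Fin (r+2)) k)) : Set (MvPowerSeries (Fin (r+2)) k)) := by
  intro f hf
  rw [Submodule.mem_colon]
  intro p hp
  rw [smul_eq_mul]
  rw [pow_one] at hp
  exact Kn_mul_I_le hn (Ideal.mul_mem_mul hf hp)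

lemma colon_eq_Kl {n ℓ : ℕ} (hn : 3 ≤ n) (h1 : 1 ≤ ℓ) (h2 : ℓ ≤ n - 1) :
    (Jd k r n).colon ((Id0 k r ^ (n + 1 - ℓ) : Ideal (MvPowerSeries (Fin (r+2)) k)) : Set (MvPowerSeries (Fin (r+2)) k)) = Kl k r ℓ :=
  le_antisymm (colon_le_Kl hn h1 h2) (Kl_le_colon hn h1 h2)

lemma colon_eq_Kn {n : ℕ} (hn : 3 ≤ n) :
    (Jd k r n).colon ((Id0 k r ^ (n + 1 - n) : Ideal (MvPowerSeries (Fin (r+2)) k)) : Set (MvPowerSeries (Fin (r+2)) k)) = KnI k r n := by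
  rw [show n + 1 - n = 1 by omega]
  exact le_antisymm (colon_le_Kn hn) (Kn_le_colon hn)

-- graded pieces
lemma coeff_smul' (d : Fin (r+2) →₀ ℕ) (c : k) (f : MvPowerSeries (Fin (r+2)) k) :
    MvPowerSeries.coeff (R := k) d (c • f) = c * MvPowerSeries.coeff (R := k) d f := by
  rw [map_smul, smul_eq_mul]

lemma mk_smul {B : Ideal (MvPowerSeries (Fin (r+2)) k)} (c : k)
    (g : MvPowerSeries (Fin (r+2)) k) :
    Ideal.Quotient.mk B (c • g) = c • Ideal.Quotient.mk B g := by
  rw [show Ideal.Quotient.mk B = ⇑(Ideal.Quotient.mkₐ k B) from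
    (Ideal.Quotient.mkₐ_eq_mk k B).symm]
  exact map_smul _ c g

lemma mk_decomp {B : Ideal (MvPowerSeries (Fin (r+2)) k)} {a g : MvPowerSeries (Fin (r+2)) k}
    {c : k} (h : a - c • g ∈ B) :
    Ideal.Quotient.mk B a = c • Ideal.Quotient.mk B g := by
  have h0 : Ideal.Quotient.mk B (a - c • g) = 0 := Ideal.Quotient.eq_zero_iff_mem.2 h
  have : Ideal.Quotient.mk B a - Ideal.Quotient.mk B (c • g) = 0 := by
    rw [← map_sub]; exact h0
  rw [← mk_smul, ← sub_eq_zero]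
  exact this

lemma mk_decomp2 {B : Ideal (MvPowerSeries (Fin (r+2)) k)}
    {a g1 g2 : MvPowerSeries (Fin (r+2)) k}
    {c1 c2 : k} (h : a - c1 • g1 - c2 • g2 ∈ B) :
    Ideal.Quotient.mk B a = c1 • Ideal.Quotient.mk B g1 + c2 • Ideal.Quotient.mk B g2 := by
  have h0 : Ideal.Quotient.mk B (a - c1 • g1 - c2 • g2) = 0 :=
    Ideal.Quotient.eq_zero_iff_mem.2 h
  rw [map_sub, map_sub, mk_smul, mk_smul, sub_sub, sub_eq_zero] at h0
  exact h0

lemma gp_Kl (ℓ : ℕ) :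
    gradedPiece k (Kl k r ℓ) (Kl k r (ℓ+1))
      = Submodule.span k {Ideal.Quotient.mk (Kl k r (ℓ+1)) (X 0 ^ ℓ)} := by
  apply le_antisymm
  · intro ξ hξ
    rw [gradedPiece, Submodule.restrictScalars_mem] at hξ
    obtain ⟨a, ha, rfl⟩ :=
      (Ideal.mem_map_iff_of_surjective _ Ideal.Quotient.mk_surjective).1 hξ
    have hsub : a - (MvPowerSeries.coeff (R := k) (Finsupp.single 0 ℓ) a) • X 0 ^ ℓ
        ∈ Kl k r (ℓ+1) := by
      refine memKl_mpr (fun b hb => ?_)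
      rw [map_sub, coeff_smul']
      rcases lt_or_eq_of_le (show b ≤ ℓ by omega) with h | h
      · rw [memKl_mp ha b h, coeff_sx_Xpow_ne (by omega), mul_zero, sub_zero]
      · subst h; rw [coeff_sx_Xpow_self, mul_one, sub_self]
    rw [mk_decomp hsub]
    exact Submodule.smul_mem _ _ (Submodule.subset_span rfl)
  · rw [Submodule.span_le, Set.singleton_subset_iff]
    exact Ideal.mem_map_of_mem _ (xpow_mem_Kl ℓ)

lemma xpow_not_mem_Kl (ℓ : ℕ) : (X 0 ^ ℓ : MvPowerSeries (Fin (r+2)) k) ∉ Kl k r (ℓ+1) := by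
  intro h
  have := memKl_mp h ℓ (by omega)
  rw [coeff_sx_Xpow_self] at this
  exact one_ne_zero this

lemma gp_Kl_rank (ℓ : ℕ) :
    Module.finrank k (gradedPiece k (Kl k r ℓ) (Kl k r (ℓ+1))) = 1 := by
  rw [gp_Kl]
  apply finrank_span_singleton
  intro h
  exact xpow_not_mem_Kl ℓ (Ideal.Quotient.eq_zero_iff_mem.1 h)

lemma gp_Kn1 {n : ℕ} (hn : 3 ≤ n) :
    gradedPiece k (Kl k r (n-1)) (KnI k r n)
      = Submodule.span k {Ideal.Quotient.mk (KnI k r n) (X 0 ^ (n-1)),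
          Ideal.Quotient.mk (KnI k r n) (X 1)} := by
  apply le_antisymm
  · intro ξ hξ
    rw [gradedPiece, Submodule.restrictScalars_mem] at hξ
    obtain ⟨a, ha, rfl⟩ :=
      (Ideal.mem_map_iff_of_surjective _ Ideal.Quotient.mk_surjective).1 hξ
    set c1 := MvPowerSeries.coeff (R := k) (Finsupp.single 0 (n-1)) a with hc1
    set c2 := MvPowerSeries.coeff (R := k) (Finsupp.single 1 1) a with hc2
    have hsub : a - c1 • X 0 ^ (n-1) - c2 • X 1 ∈ KnI k r n := by
      refine memKn_mpr (fun b hb => ?_) ?_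
      · rw [map_sub, map_sub, coeff_smul', coeff_smul']
        rw [show MvPowerSeries.coeff (R := k) (Finsupp.single (0 : Fin (r+2)) b) (X 1)
            = MvPowerSeries.coeff (R := k) (Finsupp.single (0 : Fin (r+2)) b) (X 1 ^ 1) by
              rw [pow_one], coeff_sx_Y b 1 one_ne_zero, mul_zero, sub_zero]
        rcases lt_or_eq_of_le (show b ≤ n - 1 by omega) with h | h
        · rw [memKl_mp ha b h, coeff_sx_Xpow_ne (by omega), mul_zero, sub_zero]
        · subst h; rw [coeff_sx_Xpow_self, mul_one, sub_self]
      · rw [map_sub, map_sub, coeff_smul', coeff_smul']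
        rw [coeff_sy_Xpow 1 (n-1) (Or.inl one_ne_zero), mul_zero, sub_zero]
        rw [show MvPowerSeries.coeff (R := k) (Finsupp.single (1 : Fin (r+2)) 1) (X 1)
            = MvPowerSeries.coeff (R := k) (Finsupp.single (1 : Fin (r+2)) 1) (X 1 ^ 1) by
              rw [pow_one], coeff_sy_Y_self, mul_one, ← hc2, sub_self]
    rw [mk_decomp2 hsub]
    exact add_mem (Submodule.smul_mem _ _ (Submodule.subset_span (Set.mem_insert _ _)))
      (Submodule.smul_mem _ _ (Submodule.subset_span
        (Set.mem_insert_iff.2 (Or.inr rfl))))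
  · rw [Submodule.span_le, Set.insert_subset_iff, Set.singleton_subset_iff]
    exact ⟨Ideal.mem_map_of_mem _ (xpow_mem_Kl (n-1)),
      Ideal.mem_map_of_mem _ (y_mem_Kl (n-1))⟩

lemma gp_Kn1_rank {n : ℕ} (hn : 3 ≤ n) :
    Module.finrank k (gradedPiece k (Kl k r (n-1)) (KnI k r n)) = 2 := by
  rw [gp_Kn1 hn]
  have hy : MvPowerSeries.coeff (R := k) (Finsupp.single (1 : Fin (r+2)) 1) (X 1)
      = 1 := by
    rw [show (X 1 : MvPowerSeries (Fin (r+2)) k) = X 1 ^ 1 by rw [pow_one], coeff_sy_Y_self]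
  set ξ1 := Ideal.Quotient.mk (KnI k r n) (X 0 ^ (n-1) : MvPowerSeries (Fin (r+2)) k)
  set ξ2 := Ideal.Quotient.mk (KnI k r n) (X 1 : MvPowerSeries (Fin (r+2)) k)
  have hrange : ({ξ1, ξ2} : Set _) = Set.range ![ξ1, ξ2] := by
    ext u
    simp [Fin.exists_fin_two, or_comm]
  have hli : LinearIndependent k ![ξ1, ξ2] := by
    rw [linearIndependent_fin2]
    constructor
    · show ξ2 ≠ 0
      intro h
      have hmem := Ideal.Quotient.eq_zero_iff_mem.1 h
      have := (memKn_mp (by omega) hmem).2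
      rw [hy] at this
      exact one_ne_zero this
    · intro c h
      simp only [Matrix.cons_val_one, Matrix.head_cons, Matrix.cons_val_zero] at h
      have hmem : c • (X 1 : MvPowerSeries (Fin (r+2)) k) - X 0 ^ (n-1) ∈ KnI k r n := by
        rw [← Ideal.Quotient.eq_zero_iff_mem, map_sub, mk_smul, h, sub_self]
      have := (memKn_mp (show 0 < n by omega) hmem).1 (n-1) (by omega)
      rw [map_sub, coeff_smul',
        show MvPowerSeries.coeff (R := k) (Finsupp.single (0 : Fin (r+2)) (n-1)) (X 1)
            = MvPowerSeries.coeff (R := k) (Finsupp.single (0 : Fin (r+2)) (n-1)) (X 1 ^ 1) by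
          rw [pow_one], coeff_sx_Y _ 1 one_ne_zero, mul_zero, coeff_sx_Xpow_self,
        zero_sub] at this
      exact one_ne_zero (neg_eq_zero.1 this)
  rw [hrange, finrank_span_eq_card hli]
  rfl

lemma gp_Kn {n : ℕ} (hn : 3 ≤ n) :
    gradedPiece k (KnI k r n) (Jd k r n)
      = Submodule.span k {Ideal.Quotient.mk (Jd k r n) (X 0 ^ n)} := by
  apply le_antisymm
  · intro ξ hξ
    rw [gradedPiece, Submodule.restrictScalars_mem] at hξ
    obtain ⟨a, ha, rfl⟩ :=
      (Ideal.mem_map_iff_of_surjective _ Ideal.Quotient.mk_surjective).1 hξ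
    obtain ⟨Hx, Hy⟩ := memKn_mp (show 0 < n by omega) ha
    set c := MvPowerSeries.coeff (R := k) (Finsupp.single 0 n) a
      - MvPowerSeries.coeff (R := k) (Finsupp.single 1 2) a with hc
    have hsub : a - c • X 0 ^ n ∈ Jd k r n := by
      refine memJd_mpr (by omega) (fun b hb => ?_) ?_ ?_
      · rw [map_sub, coeff_smul', Hx b hb, coeff_sx_Xpow_ne (by omega), mul_zero, sub_zero]
      · rw [map_sub, coeff_smul', Hy, coeff_sy_Xpow 1 n (Or.inl one_ne_zero),
          mul_zero, sub_zero]
      · rw [map_sub, map_sub, coeff_smul', coeff_smul', coeff_sx_Xpow_self, mul_one,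
          coeff_sy_Xpow 2 n (Or.inl two_ne_zero), mul_zero, sub_zero, hc]
        ring
    rw [mk_decomp hsub]
    exact Submodule.smul_mem _ _ (Submodule.subset_span rfl)
  · rw [Submodule.span_le, Set.singleton_subset_iff]
    exact Ideal.mem_map_of_mem _ (xn_mem_Kn n)

lemma gp_Kn_rank {n : ℕ} (hn : 3 ≤ n) :
    Module.finrank k (gradedPiece k (KnI k r n) (Jd k r n)) = 1 := by
  rw [gp_Kn hn]
  apply finrank_span_singleton
  intro h
  have hmem := Ideal.Quotient.eq_zero_iff_mem.1 h
  have := (memJd_mp (show 0 < n by omega) hmem).2.2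
  rw [coeff_sx_Xpow_self, coeff_sy_Xpow 2 n (Or.inl two_ne_zero)] at this
  exact one_ne_zero this

end Stmt4

/-- The filtration `I_ℓ = J : I^{n+1−ℓ}` (with `I_{n+1} = J`) of the local model of a
`C_{2,n}` cuspidal structure satisfies `I·I_ℓ ⊆ I_{ℓ+1}`, and the graded pieces
`I_ℓ/I_{ℓ+1}` are `k`-vector spaces of dimensions `1, …, 1, 2, 1`, with the stated
generators. -/
theorem stmt_4 (k : Type) [Field k] (n r : ℕ) (hn : 3 ≤ n)
    (x y : MvPowerSeries (Fin (r + 2)) k) (z : Fin r → MvPowerSeries (Fin (r + 2)) k)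
    (hx : x = MvPowerSeries.X 0) (hy : y = MvPowerSeries.X 1)
    (hz : ∀ i : Fin r, z i = MvPowerSeries.X i.succ.succ)
    (I J : Ideal (MvPowerSeries (Fin (r + 2)) k))
    (hI : I = Ideal.span ({x, y} ∪ Set.range z))
    (hJ : J = Ideal.span ({y ^ 2 + x ^ n, x * y} ∪ Set.range z))
    (Iseq : ℕ → Ideal (MvPowerSeries (Fin (r + 2)) k))
    (hIseq : ∀ ℓ : ℕ, 1 ≤ ℓ → ℓ ≤ n → Iseq ℓ = Submodule.colon J ((I ^ (n + 1 - ℓ) : Ideal (MvPowerSeries (Fin (r + 2)) k)) : Set (MvPowerSeries (Fin (r + 2)) k)))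
    (hItop : Iseq (n + 1) = J) :
    (∀ ℓ : ℕ, 1 ≤ ℓ → ℓ ≤ n → I * Iseq ℓ ≤ Iseq (ℓ + 1)) ∧
    (∀ ℓ : ℕ, 1 ≤ ℓ → ℓ ≤ n - 2 →
      gradedPiece k (Iseq ℓ) (Iseq (ℓ + 1)) =
        Submodule.span k {Ideal.Quotient.mk (Iseq (ℓ + 1)) (x ^ ℓ)} ∧
      Module.finrank k (gradedPiece k (Iseq ℓ) (Iseq (ℓ + 1))) = 1) ∧
    (gradedPiece k (Iseq (n - 1)) (Iseq n) =
        Submodule.span k {Ideal.Quotient.mk (Iseq n) (x ^ (n - 1)),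
          Ideal.Quotient.mk (Iseq n) y} ∧
      Module.finrank k (gradedPiece k (Iseq (n - 1)) (Iseq n)) = 2) ∧
    Module.finrank k (gradedPiece k (Iseq n) (Iseq (n + 1))) = 1 := by
  subst hx hy
  have hzz : z = fun i : Fin r => MvPowerSeries.X i.succ.succ := funext hz
  subst hzz
  have hI2 : I = Stmt4.Id0 k r := by rw [hI]; rfl
  have hJ2 : J = Stmt4.Jd k r n := by rw [hJ]; rfl
  have hS1 : ∀ ℓ, 1 ≤ ℓ → ℓ ≤ n - 1 → Iseq ℓ = Stmt4.Kl k r ℓ := by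
    intro ℓ a b
    rw [hIseq ℓ a (by omega), hI2, hJ2, Stmt4.colon_eq_Kl hn a b]
  have hSn : Iseq n = Stmt4.KnI k r n := by
    rw [hIseq n (by omega) le_rfl, hI2, hJ2, Stmt4.colon_eq_Kn hn]
  have hStop : Iseq (n + 1) = Stmt4.Jd k r n := by rw [hItop, hJ2]
  refine ⟨?_, ?_, ?_, ?_⟩
  · intro ℓ h1 h2
    by_cases hℓ : ℓ = n
    · subst hℓ
      rw [hIseq ℓ h1 le_rfl, hItop, show ℓ + 1 - ℓ = 1 by omega, pow_one, Ideal.mul_le]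
      intro a ha b hb
      have := Submodule.mem_colon.1 hb a ha
      rwa [smul_eq_mul, mul_comm] at this
    · rw [hIseq ℓ h1 h2, hIseq (ℓ + 1) (by omega) (by omega)]
      have he : n + 1 - ℓ = (n + 1 - (ℓ + 1)) + 1 := by omega
      rw [he, Ideal.mul_le]
      intro a ha b hb
      rw [Submodule.mem_colon]
      intro p hp
      have hmem : a * p ∈ I ^ (n + 1 - (ℓ + 1) + 1) := by
        rw [pow_succ']
        exact Ideal.mul_mem_mul ha hp
      have hJm := Submodule.mem_colon.1 hb _ hmem
      rw [smul_eq_mul] at hJm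
      rw [smul_eq_mul]
      rwa [show a * b * p = b * (a * p) by ring]
  · intro ℓ h1 h2
    rw [hS1 ℓ h1 (by omega), hS1 (ℓ + 1) (by omega) (by omega)]
    exact ⟨Stmt4.gp_Kl ℓ, Stmt4.gp_Kl_rank ℓ⟩
  · rw [hS1 (n - 1) (by omega) (by omega), hSn]
    exact ⟨Stmt4.gp_Kn1 hn, Stmt4.gp_Kn1_rank hn⟩
  · rw [hSn, hStop]
    exact Stmt4.gp_Kn_rank hn
end

section
/- The quotient I₂²/(I₂·J₂) is a 1-dimensional k-vector space generated by the class of y². (This is the local form of the fact that the multiplication map K ⊗ K → I₂²/I₂J₂ is an isomorphism, used in the proof of the Lemma on C_{2,n} structures.) -/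
open MvPowerSeries Finsupp

/-- A multivariate power series (finitely many variables) with zero constant
coefficient lies in the ideal generated by the variables. -/
lemma aux_mem_span_X {k : Type} [Field k] {N : ℕ}
    (f : MvPowerSeries (Fin N) k) (hf : constantCoeff f = 0) :
    f ∈ Ideal.span (Set.range (X : Fin N → MvPowerSeries (Fin N) k)) := by
  classical
  set g : Fin N → MvPowerSeries (Fin N) k := fun i t =>
    if ∀ j < i, t j = 0 then coeff (t + single i 1) f else 0 with hg
  have hXm : ∀ i : Fin N, (X i : MvPowerSeries (Fin N) k) = monomial (single i 1) 1 := fun i => rfl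
  have hcoe : ∀ (i : Fin N) (t : Fin N →₀ ℕ), coeff t (g i) =
      if ∀ j < i, t j = 0 then coeff (t + single i 1) f else 0 := fun i t => rfl
  have key : f = ∑ i, X i * g i := by
    apply MvPowerSeries.ext; intro t
    rw [map_sum]
    by_cases ht : t = 0
    · subst ht
      rw [Finset.sum_eq_zero, coeff_zero_eq_constantCoeff_apply, hf]
      intro i _
      rw [hXm, coeff_monomial_mul, if_neg]
      intro hle
      have := hle i
      simp [single_apply] at this
    · have hne : t.support.Nonempty := Finsupp.support_nonempty_iff.mpr ht
      set i₀ := t.support.min' hne with hi₀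
      have hi₀mem : i₀ ∈ t.support := t.support.min'_mem hne
      have hti₀ : t i₀ ≠ 0 := Finsupp.mem_support_iff.mp hi₀mem
      have hlt : ∀ j < i₀, t j = 0 := by
        intro j hj
        by_contra hjz
        exact absurd (t.support.min'_le j (Finsupp.mem_support_iff.mpr hjz)) (not_le.mpr hj)
      rw [Finset.sum_eq_single i₀]
      · rw [hXm, coeff_monomial_mul, if_pos (by
          exact Finsupp.single_le_iff.mpr (Nat.one_le_iff_ne_zero.mpr hti₀)), hcoe, if_pos, one_mul]
        · rw [tsub_add_cancel_of_le (Finsupp.single_le_iff.mpr (Nat.one_le_iff_ne_zero.mpr hti₀))]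
        · intro j hj
          rw [Finsupp.tsub_apply, hlt j hj]
          simp
      · intro i _ hii
        rw [hXm, coeff_monomial_mul]
        split
        · rw [hcoe, if_neg, mul_zero]
          rename_i hle
          intro hall
          have hti : t i ≠ 0 := by
            have := Finsupp.single_le_iff.mp hle; omega
          have h1 : i₀ ≤ i := t.support.min'_le i (Finsupp.mem_support_iff.mpr hti)
          have h2 : i₀ < i := lt_of_le_of_ne h1 (Ne.symm hii)
          have := hall i₀ h2
          rw [Finsupp.tsub_apply, single_apply, if_neg hii] at this
          exact hti₀ (by omega)
        · rfl
      · intro hmem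
        exact absurd (Finset.mem_univ i₀) hmem
  rw [key]
  refine Ideal.sum_mem _ fun i _ => ?_
  rw [mul_comm]
  exact Ideal.mul_mem_left _ _ (Ideal.subset_span ⟨i, rfl⟩)

/-- If `p + q = single s m` then both `p` and `q` are supported at `s`. -/
lemma aux_single_split {N : ℕ} {p q : Fin N →₀ ℕ} {s : Fin N} {m : ℕ}
    (h : p + q = Finsupp.single s m) :
    p = Finsupp.single s (p s) ∧ q = Finsupp.single s (q s) ∧ p s + q s = m := by
  have hj : ∀ j : Fin N, j ≠ s → p j = 0 ∧ q j = 0 := by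
    intro j hjs
    have := DFunLike.congr_fun h j
    rw [Finsupp.add_apply, Finsupp.single_apply, if_neg (Ne.symm hjs)] at this
    omega
  refine ⟨?_, ?_, ?_⟩
  · ext j
    rcases eq_or_ne j s with rfl | hjs
    · simp
    · rw [(hj j hjs).1, Finsupp.single_apply, if_neg (Ne.symm hjs)]
  · ext j
    rcases eq_or_ne j s with rfl | hjs
    · simp
    · rw [(hj j hjs).2, Finsupp.single_apply, if_neg (Ne.symm hjs)]
  · have := DFunLike.congr_fun h s
    simpa using this

set_option maxHeartbeats 1000000 in
/-- In the local model of a `C_{2,n}` cuspidal structure, the subquotient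
`I₂²/(I₂·J₂)` is a 1-dimensional `k`-vector space generated by the class of `y²`
(local form of `K ⊗ K ≅ I₂²/I₂J₂`). -/
theorem stmt_7 (k : Type) [Field k] (n r : ℕ) (hn : 3 ≤ n)
    (x y : MvPowerSeries (Fin (r + 2)) k) (z : Fin r → MvPowerSeries (Fin (r + 2)) k)
    (hx : x = MvPowerSeries.X 0) (hy : y = MvPowerSeries.X 1)
    (hz : ∀ i : Fin r, z i = MvPowerSeries.X i.succ.succ)
    (I J I₂ J₂ : Ideal (MvPowerSeries (Fin (r + 2)) k))
    (hI : I = Ideal.span ({x, y} ∪ Set.range z))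
    (hJ : J = Ideal.span ({y ^ 2 + x ^ n, x * y} ∪ Set.range z))
    (hI₂ : I₂ = Ideal.span ({x ^ 2, y} ∪ Set.range z))
    (hJ₂ : J₂ = Ideal.span ({x ^ 2, x * y, y ^ 2} ∪ Set.range z)) :
    gradedPiece k (I₂ ^ 2) (I₂ * J₂) =
      Submodule.span k {Ideal.Quotient.mk (I₂ * J₂) (y ^ 2)} ∧
    Module.finrank k (gradedPiece k (I₂ ^ 2) (I₂ * J₂)) = 1 := by
  classical
  subst hx hy
  set mk := Ideal.Quotient.mk (I₂ * J₂) with hmk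
  set ξ := mk ((X 1 : MvPowerSeries (Fin (r + 2)) k) ^ 2) with hξ
  -- basic memberships
  have hx2I : (X 0 : MvPowerSeries (Fin (r + 2)) k) ^ 2 ∈ I₂ := by
    rw [hI₂]; exact Ideal.subset_span (Or.inl (by simp))
  have hyI : (X 1 : MvPowerSeries (Fin (r + 2)) k) ∈ I₂ := by
    rw [hI₂]; exact Ideal.subset_span (Or.inl (by simp))
  have hzI : ∀ i, z i ∈ I₂ := fun i => by
    rw [hI₂]; exact Ideal.subset_span (Or.inr ⟨i, rfl⟩)
  have hx2J : (X 0 : MvPowerSeries (Fin (r + 2)) k) ^ 2 ∈ J₂ := by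
    rw [hJ₂]; exact Ideal.subset_span (Or.inl (by simp))
  have hxyJ : (X 0 : MvPowerSeries (Fin (r + 2)) k) * X 1 ∈ J₂ := by
    rw [hJ₂]; exact Ideal.subset_span (Or.inl (by simp))
  have hy2J : (X 1 : MvPowerSeries (Fin (r + 2)) k) ^ 2 ∈ J₂ := by
    rw [hJ₂]; exact Ideal.subset_span (Or.inl (by simp))
  have hzJ : ∀ i, z i ∈ J₂ := fun i => by
    rw [hJ₂]; exact Ideal.subset_span (Or.inr ⟨i, rfl⟩)
  -- index facts
  have h10 : (1 : Fin (r + 2)) ≠ 0 := by simp [Fin.ext_iff]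
  have hss1 : ∀ i : Fin r, (i.succ.succ : Fin (r + 2)) ≠ 1 := by
    intro i
    simp [Fin.ext_iff, Fin.val_succ]
  -- coefficient functionals
  set e1 : Fin (r + 2) →₀ ℕ := Finsupp.single 1 1 with he1
  set m2 : Fin (r + 2) →₀ ℕ := Finsupp.single 1 2 with hm2
  have hI0 : ∀ a ∈ I₂, constantCoeff a = 0 := by
    intro a ha
    rw [hI₂] at ha
    induction ha using Submodule.span_induction with
    | mem g hg =>
      simp only [Set.mem_union, Set.mem_insert_iff, Set.mem_singleton_iff, Set.mem_range] at hg
      rcases hg with (rfl | rfl) | ⟨i, rfl⟩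
      · simp [map_pow, constantCoeff_X]
      · simp [constantCoeff_X]
      · rw [hz i]; simp [constantCoeff_X]
    | zero => simp
    | add f g _ _ hf hg => simp [map_add, hf, hg]
    | smul c b _ hb => rw [smul_eq_mul, map_mul, hb, mul_zero]
  have hJ0 : ∀ b ∈ J₂, constantCoeff b = 0 ∧ coeff e1 b = 0 := by
    intro b hb
    rw [hJ₂] at hb
    induction hb using Submodule.span_induction with
    | mem g hg =>
      simp only [Set.mem_union, Set.mem_insert_iff, Set.mem_singleton_iff, Set.mem_range] at hg
      rcases hg with (rfl | rfl | rfl) | ⟨i, rfl⟩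
      · constructor
        · simp [map_pow, constantCoeff_X]
        · rw [coeff_X_pow, if_neg]
          simp [he1, Finsupp.single_eq_single_iff, Fin.ext_iff]
      · constructor
        · simp [map_mul, constantCoeff_X]
        · rw [show (X 0 : MvPowerSeries (Fin (r + 2)) k) * X 1 = monomial (single 0 1) 1 * X 1 from rfl,
            coeff_monomial_mul, if_neg]
          intro hle
          have := Finsupp.single_le_iff.mp hle
          rw [he1, Finsupp.single_apply, if_neg h10] at this
          omega
      · constructor
        · simp [map_pow, constantCoeff_X]
        · rw [coeff_X_pow, if_neg]
          simp [he1, Finsupp.single_eq_single_iff]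
      · constructor
        · rw [hz i]; simp [constantCoeff_X]
        · rw [hz i, coeff_X, if_neg]
          simp [he1, Finsupp.single_eq_single_iff, (hss1 i).symm]
    | zero => simp
    | add f g _ _ hf hg => exact ⟨by simp [map_add, hf.1, hg.1], by simp [map_add, hf.2, hg.2]⟩
    | smul c b _ hb =>
      constructor
      · rw [smul_eq_mul, map_mul, hb.1, mul_zero]
      · rw [smul_eq_mul, coeff_mul]
        refine Finset.sum_eq_zero fun p hp => ?_
        have hpq := Finset.HasAntidiagonal.mem_antidiagonal.mp hp
        rw [he1] at hpq
        obtain ⟨h1, h2, h3⟩ := aux_single_split hpq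
        rcases Nat.eq_zero_or_pos (p.2 1) with hq | hq
        · have : p.2 = 0 := by rw [h2, hq, Finsupp.single_zero]
          rw [this, coeff_zero_eq_constantCoeff_apply, hb.1, mul_zero]
        · have hq1 : p.2 1 = 1 := by omega
          have : p.2 = e1 := by rw [h2, hq1, he1]
          rw [this, hb.2, mul_zero]
  have hIJ0 : ∀ f ∈ I₂ * J₂, coeff m2 f = 0 := by
    intro f hf
    refine Submodule.mul_induction_on hf (fun a ha b hb => ?_)
      (fun f g hf0 hg0 => by rw [map_add, hf0, hg0, add_zero])
    rw [coeff_mul]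
    refine Finset.sum_eq_zero fun p hp => ?_
    have hpq := Finset.HasAntidiagonal.mem_antidiagonal.mp hp
    rw [hm2] at hpq
    obtain ⟨h1, h2, h3⟩ := aux_single_split hpq
    rcases Nat.eq_zero_or_pos (p.2 1) with hq | hq
    · have : p.2 = 0 := by rw [h2, hq, Finsupp.single_zero]
      rw [this, coeff_zero_eq_constantCoeff_apply, (hJ0 b hb).1, mul_zero]
    rcases eq_or_lt_of_le (Nat.succ_le_of_lt hq) with hq1 | hq2
    · have : p.2 = e1 := by rw [h2, ← hq1, he1]
      rw [this, (hJ0 b hb).2, mul_zero]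
    · have hp0 : p.1 1 = 0 := by omega
      have : p.1 = 0 := by rw [h1, hp0, Finsupp.single_zero]
      rw [this, coeff_zero_eq_constantCoeff_apply, hI0 a ha, zero_mul]
  -- the class of y² is nonzero
  have hy2notmem : (X 1 : MvPowerSeries (Fin (r + 2)) k) ^ 2 ∉ I₂ * J₂ := by
    intro hmem
    have := hIJ0 _ hmem
    rw [coeff_X_pow, hm2, if_pos rfl] at this
    exact one_ne_zero this
  have hξne : ξ ≠ 0 := by
    rw [hξ, hmk, Ne, Ideal.Quotient.eq_zero_iff_mem]
    exact hy2notmem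
  -- every variable times y² is in I₂J₂
  have hXyy : ∀ j : Fin (r + 2), X j * (X 1 : MvPowerSeries (Fin (r + 2)) k) ^ 2 ∈ I₂ * J₂ := by
    intro j
    induction j using Fin.cases with
    | zero =>
      rw [show (X 0 : MvPowerSeries (Fin (r + 2)) k) * (X 1 : MvPowerSeries (Fin (r + 2)) k) ^ 2 = X 1 * (X 0 * X 1) by ring]
      exact Ideal.mul_mem_mul hyI hxyJ
    | succ j' =>
      induction j' using Fin.cases with
      | zero =>
        rw [Fin.succ_zero_eq_one]
        exact Ideal.mul_mem_mul hyI hy2J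
      | succ i =>
        rw [← hz i, show z i * (X 1 : MvPowerSeries (Fin (r + 2)) k) ^ 2 = X 1 * (X 1 * z i) by rw [hz i]; ring]
        exact Ideal.mul_mem_mul hyI (Ideal.mul_mem_left _ _ (hzJ i))
  -- f·y² ∈ I₂J₂ whenever f has zero constant term
  have hmy2 : ∀ f : MvPowerSeries (Fin (r + 2)) k, constantCoeff f = 0 → f * (X 1 : MvPowerSeries (Fin (r + 2)) k) ^ 2 ∈ I₂ * J₂ := by
    intro f hf
    have hmem := aux_mem_span_X f hf
    clear hf
    induction hmem using Submodule.span_induction with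
    | mem g hg => obtain ⟨j, rfl⟩ := hg; exact hXyy j
    | zero => rw [zero_mul]; exact zero_mem _
    | add a b _ _ h1 h2 => rw [add_mul]; exact add_mem h1 h2
    | smul c a _ h1 =>
      rw [smul_eq_mul, mul_assoc]
      exact Ideal.mul_mem_left _ _ h1
  -- R-multiples of ξ are k-multiples of ξ
  have hRmul : ∀ u ∈ Ideal.span {ξ}, u ∈ Submodule.span k {ξ} := by
    intro u hu
    obtain ⟨c, rfl⟩ := Ideal.mem_span_singleton'.mp hu
    obtain ⟨f, rfl⟩ := Ideal.Quotient.mk_surjective c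
    set c0 := constantCoeff f with hc0
    have key : mk f * ξ = c0 • ξ := by
      have h1 : mk f * ξ = mk (f * (X 1 : MvPowerSeries (Fin (r + 2)) k) ^ 2) := by rw [map_mul]
      have h2 : mk (f * (X 1 : MvPowerSeries (Fin (r + 2)) k) ^ 2) = mk (C c0 * (X 1 : MvPowerSeries (Fin (r + 2)) k) ^ 2) := by
        rw [hmk, Ideal.Quotient.mk_eq_mk_iff_sub_mem, ← sub_mul]
        refine hmy2 _ ?_
        rw [map_sub, constantCoeff_C, sub_self]
      have h3 : mk (C c0 * (X 1 : MvPowerSeries (Fin (r + 2)) k) ^ 2) = c0 • ξ := by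
        rw [MvPowerSeries.c_eq_algebraMap, ← Algebra.smul_def, hξ, hmk,
          ← Ideal.Quotient.mkₐ_eq_mk k, map_smul]
      rw [h1, h2, h3]
    rw [key]
    exact Submodule.smul_mem _ _ (Submodule.mem_span_singleton_self ξ)
  -- the key ideal inclusion I₂² ≤ I₂J₂ ⊔ (y²)
  have hmul_le : I₂ * I₂ ≤ I₂ * J₂ ⊔ Ideal.span {(X 1 : MvPowerSeries (Fin (r + 2)) k) ^ 2} := by
    refine Ideal.mul_le.mpr fun a ha b hb => ?_
    rw [hI₂] at ha
    induction ha using Submodule.span_induction with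
    | mem g hg =>
      simp only [Set.mem_union, Set.mem_insert_iff, Set.mem_singleton_iff, Set.mem_range] at hg
      rcases hg with (rfl | rfl) | ⟨i, rfl⟩
      · rw [mul_comm ((X 0 : MvPowerSeries (Fin (r + 2)) k) ^ 2) b]
        exact Ideal.mem_sup_left (Ideal.mul_mem_mul hb hx2J)
      · -- a = y : induct on b
        rw [hI₂] at hb
        induction hb using Submodule.span_induction with
        | mem g' hg' =>
          simp only [Set.mem_union, Set.mem_insert_iff, Set.mem_singleton_iff,
            Set.mem_range] at hg'
          rcases hg' with (rfl | rfl) | ⟨i, rfl⟩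
          · exact Ideal.mem_sup_left (Ideal.mul_mem_mul hyI hx2J)
          · have : (X 1 : MvPowerSeries (Fin (r + 2)) k) * X 1 = (X 1 : MvPowerSeries (Fin (r + 2)) k) ^ 2 := by ring
            rw [this]
            exact Ideal.mem_sup_right (Ideal.subset_span rfl)
          · exact Ideal.mem_sup_left (Ideal.mul_mem_mul hyI (hzJ i))
        | zero => rw [mul_zero]; exact zero_mem _
        | add u v _ _ h1 h2 => rw [mul_add]; exact add_mem h1 h2
        | smul c u _ h1 =>
          rw [smul_eq_mul, mul_left_comm]
          exact Ideal.mul_mem_left _ _ h1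
      · rw [mul_comm (z i) b]
        exact Ideal.mem_sup_left (Ideal.mul_mem_mul hb (hzJ i))
    | zero => rw [zero_mul]; exact zero_mem _
    | add u v _ _ h1 h2 => rw [add_mul]; exact add_mem h1 h2
    | smul c u _ h1 =>
      rw [smul_eq_mul, mul_assoc]
      exact Ideal.mul_mem_left _ _ h1
  -- conclusion
  have hmap_le : Ideal.map mk (I₂ ^ 2) ≤ Ideal.span {ξ} := by
    rw [pow_two I₂]
    refine le_trans (Ideal.map_mono hmul_le) ?_
    rw [Ideal.map_sup, Ideal.map_span, Set.image_singleton]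
    rw [hmk, Ideal.map_quotient_self]
    rw [← hξ]
    simp
  have heq : gradedPiece k (I₂ ^ 2) (I₂ * J₂) = Submodule.span k {ξ} := by
    apply le_antisymm
    · intro u hu
      exact hRmul u (hmap_le hu)
    · rw [Submodule.span_le, Set.singleton_subset_iff]
      exact Ideal.mem_map_of_mem mk (by rw [pow_two I₂, pow_two (X 1 : MvPowerSeries (Fin (r + 2)) k)]; exact Ideal.mul_mem_mul hyI hyI)
  refine ⟨heq, ?_⟩
  rw [heq]
  exact finrank_span_singleton hξne
end

section
/- The quotient (I·I₂)/(I·J₂) is a 2-dimensional k-vector space generated by the classes of xy and y². (This is the local form of the isomorphism E ⊗ K ≅ II₂/IJ₂ used in the proof of the Lemma on C_{2,n} structures.) -/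
open MvPowerSeries Finsupp

lemma mem_span_X {N : ℕ} {k : Type} [Field k] (f : MvPowerSeries (Fin N) k)
    (hf : (constantCoeff (σ := Fin N) (R := k)) f = 0) :
    f ∈ Ideal.span (Set.range (X : Fin N → MvPowerSeries (Fin N) k)) := by
  classical
  set g : Fin N → MvPowerSeries (Fin N) k := fun i d =>
    if ∀ j < i, d j = 0 then coeff (R := k) (d + single i 1) f else 0 with hg
  have hfe : f = ∑ i : Fin N, X i * g i := by
    ext m
    rw [map_sum]
    by_cases hm : m = 0
    · subst hm
      rw [coeff_zero_eq_constantCoeff_apply, hf]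
      symm; apply Finset.sum_eq_zero
      intro i _
      exact coeff_zero_X_mul _ _
    · have hsupp : m.support.Nonempty := Finsupp.support_nonempty_iff.mpr hm
      set i₀ := m.support.min' hsupp with hi₀def
      have hi₀ : m i₀ ≠ 0 := Finsupp.mem_support_iff.mp (m.support.min'_mem hsupp)
      have hmin : ∀ j < i₀, m j = 0 := by
        intro j hj
        by_contra hj0
        exact absurd (m.support.min'_le j (Finsupp.mem_support_iff.mpr hj0)) (not_le.mpr hj)
      have hterm : ∀ i : Fin N, coeff (R := k) m (X i * g i)
          = if single i 1 ≤ m then (1 : k) * coeff (R := k) (m - single i 1) (g i) else 0 := by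
        intro i
        rw [X_def, coeff_monomial_mul]
      rw [Finset.sum_eq_single i₀]
      · rw [hterm, if_pos (Finsupp.single_le_iff.mpr (Nat.one_le_iff_ne_zero.mpr hi₀)), one_mul]
        have : coeff (R := k) (m - single i₀ 1) (g i₀) = g i₀ (m - single i₀ 1) := coeff_apply _ _
        rw [this, hg]
        simp only
        rw [if_pos, tsub_add_cancel_of_le (Finsupp.single_le_iff.mpr
          (Nat.one_le_iff_ne_zero.mpr hi₀))]
        intro j hj
        rw [Finsupp.tsub_apply, hmin j hj, Nat.zero_sub]
      · intro i _ hne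
        rw [hterm]
        by_cases hle : single i 1 ≤ m
        · rw [if_pos hle, one_mul]
          have hmi : m i ≠ 0 := Nat.one_le_iff_ne_zero.mp (Finsupp.single_le_iff.mp hle)
          have hii : i₀ < i := by
            rcases lt_trichotomy i i₀ with h | h | h
            · exact absurd (hmin i h) hmi
            · exact absurd h hne
            · exact h
          have : coeff (R := k) (m - single i 1) (g i) = g i (m - single i 1) := coeff_apply _ _
          rw [this, hg]
          simp only
          rw [if_neg]
          intro hall
          have := hall i₀ hii
          rw [Finsupp.tsub_apply, Finsupp.single_apply, if_neg (fun h => hne h)] at this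
          exact hi₀ (by simpa using this)
        · rw [if_neg hle]
      · intro h
        exact absurd (Finset.mem_univ i₀) h
  rw [hfe]
  exact Ideal.sum_mem _ fun i _ => Ideal.mul_mem_right _ _ (Ideal.subset_span ⟨i, rfl⟩)

lemma le_single_cases {N : ℕ} {j : Fin N} {c : ℕ} {b : Fin N →₀ ℕ}
    (hb : b ≤ Finsupp.single j c) : ∃ m ≤ c, b = Finsupp.single j m := by
  have hb' := Finsupp.le_def.mp hb
  refine ⟨b j, by simpa using hb' j, ?_⟩
  ext i
  rcases eq_or_ne j i with rfl | hij
  · simp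
  · have h := hb' i
    rw [Finsupp.single_apply, if_neg hij] at h
    rw [Finsupp.single_apply, if_neg hij]
    omega

lemma decomp2 {N : ℕ} {b : Fin (N + 2) →₀ ℕ}
    (hb : b ≤ Finsupp.single 0 1 + Finsupp.single 1 1) :
    b = 0 ∨ b = Finsupp.single 0 1 ∨ b = Finsupp.single 1 1
      ∨ b = Finsupp.single 0 1 + Finsupp.single 1 1 := by
  have hb' := Finsupp.le_def.mp hb
  have h01 : (0 : Fin (N + 2)) ≠ 1 := by
    intro h
    simpa using congrArg Fin.val h
  have h10 : (1 : Fin (N + 2)) ≠ 0 := Ne.symm h01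
  have hbe : b = Finsupp.single 0 (b 0) + Finsupp.single 1 (b 1) := by
    ext i
    by_cases hi0 : (0 : Fin (N + 2)) = i
    · subst hi0
      simp [Finsupp.single_apply, h10]
    · by_cases hi1 : (1 : Fin (N + 2)) = i
      · subst hi1
        simp [Finsupp.single_apply, h01]
      · have h := hb' i
        simp only [Finsupp.add_apply, Finsupp.single_apply, if_neg hi0, if_neg hi1] at h ⊢
        omega
  have h0 : b 0 ≤ 1 := by simpa [Finsupp.add_apply, Finsupp.single_apply, h10] using hb' 0
  have h1 : b 1 ≤ 1 := by simpa [Finsupp.add_apply, Finsupp.single_apply, h01] using hb' 1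
  rcases Nat.le_one_iff_eq_zero_or_eq_one.mp h0 with h | h <;>
    rcases Nat.le_one_iff_eq_zero_or_eq_one.mp h1 with h' | h' <;>
    rw [hbe, h, h'] <;> simp

lemma finsupp_ne_of_app {N : ℕ} {a b : Fin N →₀ ℕ} (j : Fin N) (h : a j ≠ b j) : a ≠ b :=
  fun he => h (he ▸ rfl)

set_option maxHeartbeats 2000000 in
/-- In the local model of a `C_{2,n}` cuspidal structure, the subquotient
`(I·I₂)/(I·J₂)` is a 2-dimensional `k`-vector space generated by the classes of
`xy` and `y²` (local form of `E ⊗ K ≅ II₂/IJ₂`). -/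
theorem stmt_8 (k : Type) [Field k] (n r : ℕ) (hn : 3 ≤ n)
    (x y : MvPowerSeries (Fin (r + 2)) k) (z : Fin r → MvPowerSeries (Fin (r + 2)) k)
    (hx : x = MvPowerSeries.X 0) (hy : y = MvPowerSeries.X 1)
    (hz : ∀ i : Fin r, z i = MvPowerSeries.X i.succ.succ)
    (I J I₂ J₂ : Ideal (MvPowerSeries (Fin (r + 2)) k))
    (hI : I = Ideal.span ({x, y} ∪ Set.range z))
    (hJ : J = Ideal.span ({y ^ 2 + x ^ n, x * y} ∪ Set.range z))
    (hI₂ : I₂ = Ideal.span ({x ^ 2, y} ∪ Set.range z))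
    (hJ₂ : J₂ = Ideal.span ({x ^ 2, x * y, y ^ 2} ∪ Set.range z)) :
    gradedPiece k (I * I₂) (I * J₂) =
      Submodule.span k {Ideal.Quotient.mk (I * J₂) (x * y),
        Ideal.Quotient.mk (I * J₂) (y ^ 2)} ∧
    Module.finrank k (gradedPiece k (I * I₂) (I * J₂)) = 2 := by
  classical
  -- index disequalities
  have h01 : (0 : Fin (r + 2)) ≠ 1 := by
    intro h; simpa using congrArg Fin.val h
  have h10 : (1 : Fin (r + 2)) ≠ 0 := Ne.symm h01
  have hz0 : ∀ i : Fin r, (i.succ.succ : Fin (r + 2)) ≠ 0 := fun i => Fin.succ_ne_zero _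
  have hz1 : ∀ i : Fin r, (i.succ.succ : Fin (r + 2)) ≠ 1 := by
    intro i h
    rw [← Fin.succ_zero_eq_one] at h
    exact Fin.succ_ne_zero _ (Fin.succ_injective _ h)
  -- generator memberships
  have hxI : x ∈ I := hI ▸ Ideal.subset_span (Or.inl (Set.mem_insert _ _))
  have hyI : y ∈ I := hI ▸ Ideal.subset_span (Or.inl (Set.mem_insert_of_mem _ rfl))
  have hyI₂ : y ∈ I₂ := hI₂ ▸ Ideal.subset_span (Or.inl (Set.mem_insert_of_mem _ rfl))
  have hx2J₂ : x ^ 2 ∈ J₂ := hJ₂ ▸ Ideal.subset_span (Or.inl (Set.mem_insert _ _))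
  have hxyJ₂ : x * y ∈ J₂ :=
    hJ₂ ▸ Ideal.subset_span (Or.inl (Set.mem_insert_of_mem _ (Set.mem_insert _ _)))
  have hy2J₂ : y ^ 2 ∈ J₂ :=
    hJ₂ ▸ Ideal.subset_span (Or.inl (Set.mem_insert_of_mem _ (Set.mem_insert_of_mem _ rfl)))
  have hzJ₂ : ∀ i, z i ∈ J₂ := fun i => hJ₂ ▸ Ideal.subset_span (Or.inr ⟨i, rfl⟩)
  -- I is the span of all variables
  have hrange : ({x, y} ∪ Set.range z : Set (MvPowerSeries (Fin (r + 2)) k))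
      = Set.range (X : Fin (r + 2) → MvPowerSeries (Fin (r + 2)) k) := by
    ext f
    constructor
    · rintro (h | ⟨i, rfl⟩)
      · rcases h with rfl | rfl
        · exact ⟨0, hx.symm⟩
        · exact ⟨1, hy.symm⟩
      · exact ⟨i.succ.succ, (hz i).symm⟩
    · rintro ⟨j, rfl⟩
      induction j using Fin.cases with
      | zero => exact Or.inl (Set.mem_insert_iff.mpr (Or.inl hx.symm))
      | succ j' =>
        induction j' using Fin.cases with
        | zero =>
          refine Or.inl (Set.mem_insert_iff.mpr (Or.inr ?_))
          rw [Fin.succ_zero_eq_one]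
          exact hy.symm
        | succ i => exact Or.inr ⟨i, hz i⟩
  have hmemI : ∀ f, (constantCoeff (σ := Fin (r + 2)) (R := k)) f = 0 → f ∈ I := by
    intro f hf
    rw [hI, hrange]
    exact mem_span_X f hf
  have hIc : ∀ f ∈ I, (constantCoeff (σ := Fin (r + 2)) (R := k)) f = 0 := by
    intro f hf
    have hle : I ≤ RingHom.ker ((constantCoeff (σ := Fin (r + 2)) (R := k))) := by
      rw [hI, Ideal.span_le]
      rintro g (h | ⟨i, rfl⟩)
      · rcases h with rfl | rfl <;> simp [RingHom.mem_ker, hx, hy]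
      · simp [RingHom.mem_ker, hz i]
    exact hle hf
  -- low-order coefficients vanish on J₂
  have hJ₂c : ∀ g ∈ J₂, coeff (R := k) 0 g = 0 ∧ coeff (R := k) (Finsupp.single 0 1) g = 0
      ∧ coeff (R := k) (Finsupp.single 1 1) g = 0 := by
    intro g hg
    rw [hJ₂] at hg
    refine Submodule.span_induction (p := fun g _ => coeff (R := k) 0 g = 0
      ∧ coeff (R := k) (Finsupp.single 0 1) g = 0 ∧ coeff (R := k) (Finsupp.single 1 1) g = 0)
      ?_ ?_ ?_ ?_ hg
    · rintro g (h | ⟨i, rfl⟩)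
      · rcases h with rfl | h
        · -- x ^ 2
          have h1 : (0 : Fin (r + 2) →₀ ℕ) ≠ Finsupp.single 0 2 :=
            finsupp_ne_of_app 0 (by simp)
          have h2 : Finsupp.single (0 : Fin (r + 2)) 1 ≠ Finsupp.single 0 2 :=
            finsupp_ne_of_app 0 (by simp)
          have h3 : Finsupp.single (1 : Fin (r + 2)) 1 ≠ Finsupp.single 0 2 :=
            finsupp_ne_of_app 1 (by simp [Finsupp.single_apply, h01])
          refine ⟨?_, ?_, ?_⟩ <;> rw [hx, coeff_X_pow, if_neg ‹_›]
        · rcases h with rfl | rfl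
          · -- x * y
            have hxy_mon : x * y
                = monomial (R := k) (Finsupp.single 0 1 + Finsupp.single 1 1) (1 : k) := by
              rw [hx, hy, X_def, X_def, monomial_mul_monomial, one_mul]
            have h1 : (0 : Fin (r + 2) →₀ ℕ)
                ≠ Finsupp.single 0 1 + Finsupp.single 1 1 :=
              finsupp_ne_of_app 0 (by simp [Finsupp.single_apply, h10])
            have h2 : Finsupp.single (0 : Fin (r + 2)) 1
                ≠ Finsupp.single 0 1 + Finsupp.single 1 1 :=
              finsupp_ne_of_app 1 (by simp [Finsupp.single_apply, h01])
            have h3 : Finsupp.single (1 : Fin (r + 2)) 1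
                ≠ Finsupp.single 0 1 + Finsupp.single 1 1 :=
              finsupp_ne_of_app 0 (by simp [Finsupp.single_apply, h10])
            refine ⟨?_, ?_, ?_⟩ <;> rw [hxy_mon, coeff_monomial, if_neg ‹_›]
          · -- y ^ 2
            have h1 : (0 : Fin (r + 2) →₀ ℕ) ≠ Finsupp.single 1 2 :=
              finsupp_ne_of_app 1 (by simp)
            have h2 : Finsupp.single (0 : Fin (r + 2)) 1 ≠ Finsupp.single 1 2 :=
              finsupp_ne_of_app 0 (by simp [Finsupp.single_apply, h10])
            have h3 : Finsupp.single (1 : Fin (r + 2)) 1 ≠ Finsupp.single 1 2 :=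
              finsupp_ne_of_app 1 (by simp)
            refine ⟨?_, ?_, ?_⟩ <;> rw [hy, coeff_X_pow, if_neg ‹_›]
      · -- z i
        have h1 : (0 : Fin (r + 2) →₀ ℕ) ≠ Finsupp.single i.succ.succ 1 :=
          finsupp_ne_of_app i.succ.succ (by simp)
        have h2 : Finsupp.single (0 : Fin (r + 2)) 1 ≠ Finsupp.single i.succ.succ 1 :=
          finsupp_ne_of_app 0 (by simp [Finsupp.single_apply, (hz0 i)])
        have h3 : Finsupp.single (1 : Fin (r + 2)) 1 ≠ Finsupp.single i.succ.succ 1 :=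
          finsupp_ne_of_app 1 (by simp [Finsupp.single_apply, (hz1 i)])
        refine ⟨?_, ?_, ?_⟩ <;> rw [hz i, coeff_X, if_neg ‹_›]
    · simp
    · intro a b _ _ ha hb
      exact ⟨by rw [map_add, ha.1, hb.1, add_zero],
        by rw [map_add, ha.2.1, hb.2.1, add_zero],
        by rw [map_add, ha.2.2, hb.2.2, add_zero]⟩
    · intro a g _ hgc
      rw [smul_eq_mul]
      have hc0 : (constantCoeff (σ := Fin (r + 2)) (R := k)) g = 0 := by
        have := hgc.1; rwa [coeff_zero_eq_constantCoeff_apply] at this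
      have hsingle : ∀ j : Fin (r + 2), coeff (R := k) (Finsupp.single j 1) g = 0 →
          coeff (R := k) (Finsupp.single j 1) (a * g) = 0 := by
        intro j hj
        rw [coeff_mul]
        apply Finset.sum_eq_zero
        rintro ⟨p, q⟩ hpq
        rw [Finset.HasAntidiagonal.mem_antidiagonal] at hpq
        have hble : q ≤ Finsupp.single j 1 := hpq ▸ le_add_self
        obtain ⟨m, hm, rfl⟩ := le_single_cases hble
        interval_cases m
        · rw [Finsupp.single_zero, hgc.1, mul_zero]
        · rw [hj, mul_zero]
      exact ⟨by rw [coeff_zero_eq_constantCoeff_apply, map_mul, hc0, mul_zero],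
        hsingle 0 hgc.2.1, hsingle 1 hgc.2.2⟩
  -- coefficients at xy and y² vanish on I*J₂
  have hvan : ∀ u ∈ I * J₂,
      coeff (R := k) (Finsupp.single 0 1 + Finsupp.single 1 1) u = 0
        ∧ coeff (R := k) (Finsupp.single 1 2) u = 0 := by
    intro u hu
    refine Submodule.mul_induction_on hu ?_ ?_
    · intro f hf g hg
      have hfc := hIc f hf
      have hgc := hJ₂c g hg
      constructor
      · rw [coeff_mul]
        apply Finset.sum_eq_zero
        rintro ⟨p, q⟩ hpq
        rw [Finset.HasAntidiagonal.mem_antidiagonal] at hpq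
        by_cases hp0 : p = 0
        · subst hp0
          simp only [zero_add] at hpq
          subst hpq
          rw [coeff_zero_eq_constantCoeff_apply, hfc, zero_mul]
        · have hble : q ≤ Finsupp.single 0 1 + Finsupp.single 1 1 := hpq ▸ le_add_self
          rcases decomp2 hble with rfl | rfl | rfl | rfl
          · rw [hgc.1, mul_zero]
          · rw [hgc.2.1, mul_zero]
          · rw [hgc.2.2, mul_zero]
          · exact absurd (add_eq_right.mp hpq) hp0
      · rw [coeff_mul]
        apply Finset.sum_eq_zero
        rintro ⟨p, q⟩ hpq
        rw [Finset.HasAntidiagonal.mem_antidiagonal] at hpq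
        by_cases hp0 : p = 0
        · subst hp0
          simp only [zero_add] at hpq
          subst hpq
          rw [coeff_zero_eq_constantCoeff_apply, hfc, zero_mul]
        · have hble : q ≤ Finsupp.single 1 2 := hpq ▸ le_add_self
          obtain ⟨m, hm, rfl⟩ := le_single_cases hble
          interval_cases m
          · rw [Finsupp.single_zero, hgc.1, mul_zero]
          · rw [hgc.2.2, mul_zero]
          · exact absurd (add_eq_right.mp hpq) hp0
    · intro u v hu hv
      exact ⟨by rw [map_add, hu.1, hv.1, add_zero],
        by rw [map_add, hu.2, hv.2, add_zero]⟩
  -- the key ideal inclusion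
  have hIdeal : I * I₂ ≤ I * J₂ ⊔ Ideal.span {x * y, y ^ 2} := by
    rw [Ideal.mul_le]
    intro f hf g hg
    rw [hI₂] at hg
    have key : ∀ f' ∈ I, f' * y ∈ I * J₂ ⊔ Ideal.span {x * y, y ^ 2} := by
      intro f' hf'
      rw [hI] at hf'
      refine Submodule.span_induction
        (p := fun w _ => w * y ∈ I * J₂ ⊔ Ideal.span {x * y, y ^ 2}) ?_ ?_ ?_ ?_ hf'
      · rintro w (h | ⟨i, rfl⟩)
        · rcases h with h | h
          · rw [h]
            exact Submodule.mem_sup_right (Ideal.subset_span (Set.mem_insert _ _))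
          · simp only [Set.mem_singleton_iff] at h
            rw [h, ← sq]
            exact Submodule.mem_sup_right
              (Ideal.subset_span (Set.mem_insert_of_mem _ rfl))
        · show z i * y ∈ _
          rw [mul_comm (z i) y]
          exact Submodule.mem_sup_left (Ideal.mul_mem_mul hyI (hzJ₂ i))
      · simp only [zero_mul]; exact zero_mem _
      · intro a b _ _ ha hb
        simp only [add_mul]; exact add_mem ha hb
      · intro a w _ hwy
        simp only [smul_eq_mul]
        rw [mul_assoc]
        exact Ideal.mul_mem_left _ a hwy
    refine Submodule.span_induction
      (p := fun g _ => f * g ∈ I * J₂ ⊔ Ideal.span {x * y, y ^ 2}) ?_ ?_ ?_ ?_ hg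
    · rintro g' (h | ⟨i, rfl⟩)
      · rcases h with h | h
        · rw [h]
          exact Submodule.mem_sup_left (Ideal.mul_mem_mul hf hx2J₂)
        · simp only [Set.mem_singleton_iff] at h
          rw [h]
          exact key f hf
      · exact Submodule.mem_sup_left (Ideal.mul_mem_mul hf (hzJ₂ i))
    · simp only [mul_zero]; exact zero_mem _
    · intro a b _ _ ha hb
      simp only [mul_add]; exact add_mem ha hb
    · intro a g' _ hfg
      simp only [smul_eq_mul]
      rw [mul_left_comm]
      exact Ideal.mul_mem_left _ a hfg
  -- scalars and the quotient map
  have hsmul : ∀ (c : k) (w : MvPowerSeries (Fin (r + 2)) k),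
      Ideal.Quotient.mk (I * J₂) (C (σ := Fin (r + 2)) (R := k) c * w)
        = c • Ideal.Quotient.mk (I * J₂) w := by
    intro c w
    rw [c_eq_algebraMap, map_mul, Ideal.Quotient.mk_algebraMap, ← Algebra.smul_def]
  have hdecomp : ∀ (p w : MvPowerSeries (Fin (r + 2)) k), w ∈ J₂ →
      Ideal.Quotient.mk (I * J₂) (p * w)
        = ((constantCoeff (σ := Fin (r + 2)) (R := k)) p) • Ideal.Quotient.mk (I * J₂) w := by
    intro p w hw
    set c := (constantCoeff (σ := Fin (r + 2)) (R := k)) p with hc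
    have hmem : p * w - C (σ := Fin (r + 2)) (R := k) c * w ∈ I * J₂ := by
      rw [← sub_mul]
      refine Ideal.mul_mem_mul (hmemI _ ?_) hw
      rw [map_sub, constantCoeff_C, sub_self]
    have heq := (Ideal.Quotient.mk_eq_mk_iff_sub_mem (p * w)
      (C (σ := Fin (r + 2)) (R := k) c * w)).mpr hmem
    rw [heq, hsmul]
  -- first statement
  have hspan : gradedPiece k (I * I₂) (I * J₂) =
      Submodule.span k {Ideal.Quotient.mk (I * J₂) (x * y),
        Ideal.Quotient.mk (I * J₂) (y ^ 2)} := by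
    apply le_antisymm
    · intro u hu
      have hu' : u ∈ Ideal.map (Ideal.Quotient.mk (I * J₂)) (I * I₂) := hu
      rw [Ideal.mem_map_iff_of_surjective _ Ideal.Quotient.mk_surjective] at hu'
      obtain ⟨a, ha, rfl⟩ := hu'
      obtain ⟨b, hb, s, hs, rfl⟩ := Submodule.mem_sup.mp (hIdeal ha)
      rw [map_add, Ideal.Quotient.eq_zero_iff_mem.mpr hb, zero_add]
      obtain ⟨p, q, hpq⟩ := Ideal.mem_span_pair.mp hs
      rw [← hpq, map_add, hdecomp p _ hxyJ₂, hdecomp q _ hy2J₂]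
      exact Submodule.add_mem _
        (Submodule.smul_mem _ _ (Submodule.subset_span (Set.mem_insert _ _)))
        (Submodule.smul_mem _ _ (Submodule.subset_span (Set.mem_insert_of_mem _ rfl)))
    · rw [Submodule.span_le]
      rintro v hv
      rcases hv with rfl | rfl
      · exact Ideal.mem_map_of_mem _ (Ideal.mul_mem_mul hxI hyI₂)
      · have : y ^ 2 = y * y := sq y
        rw [this]
        exact Ideal.mem_map_of_mem _ (Ideal.mul_mem_mul hyI hyI₂)
  refine ⟨hspan, ?_⟩
  -- linear independence
  have hxy_mon : x * y = monomial (R := k) (Finsupp.single 0 1 + Finsupp.single 1 1) (1 : k) := by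
    rw [hx, hy, X_def, X_def, monomial_mul_monomial, one_mul]
  have hy2_mon : y ^ 2 = monomial (R := k) (Finsupp.single 1 2) (1 : k) := by
    rw [hy, X_pow_eq]
  have hne1 : Finsupp.single (0 : Fin (r + 2)) 1 + Finsupp.single 1 1
      ≠ Finsupp.single 1 2 := finsupp_ne_of_app 0 (by simp [Finsupp.single_apply, h10])
  have hli : LinearIndependent k ![Ideal.Quotient.mk (I * J₂) (x * y),
      Ideal.Quotient.mk (I * J₂) (y ^ 2)] := by
    rw [LinearIndependent.pair_iff]
    intro s t hst
    have hmem : C (σ := Fin (r + 2)) (R := k) s * (x * y) + C (σ := Fin (r + 2)) (R := k) t * y ^ 2 ∈ I * J₂ := by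
      rw [← Ideal.Quotient.eq_zero_iff_mem, map_add, hsmul, hsmul, hst]
    obtain ⟨h1, h2⟩ := hvan _ hmem
    constructor
    · rw [map_add, coeff_C_mul, coeff_C_mul, hxy_mon, hy2_mon, coeff_monomial_same,
        coeff_monomial, if_neg hne1, mul_one, mul_zero, add_zero] at h1
      exact h1
    · rw [map_add, coeff_C_mul, coeff_C_mul, hxy_mon, hy2_mon, coeff_monomial,
        if_neg (Ne.symm hne1), coeff_monomial_same, mul_one, mul_zero, zero_add] at h2
      exact h2
  have hset : ({Ideal.Quotient.mk (I * J₂) (x * y), Ideal.Quotient.mk (I * J₂) (y ^ 2)} :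
      Set (MvPowerSeries (Fin (r + 2)) k ⧸ (I * J₂)))
      = Set.range ![Ideal.Quotient.mk (I * J₂) (x * y),
          Ideal.Quotient.mk (I * J₂) (y ^ 2)] := by
    ext u
    simp only [Set.mem_insert_iff, Set.mem_singleton_iff, Set.mem_range, Fin.exists_fin_two,
      Matrix.cons_val_zero, Matrix.cons_val_one, Matrix.head_cons]
    tauto
  rw [hspan, hset, finrank_span_eq_card hli, Fintype.card_fin]
end
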